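/- arXiv:1509.00398 — 9 statements merged into one kernel-verified Lean document; each statement's English description precedes it below -/
import Mathlib

section
/- Let d ≥ 1, let U be a unitary d×d complex matrix with c = max_{k,i} |U_{ki}|, and let (α, β) be a dual pair (α, β ∈ [1/2, ∞] with 1/α + 1/β = 2). Then for every density matrix ρ on ℂ^d one has H_α(p^ρ) + H_β(q^ρ) ≥ -log(c²). -/
open Matrix
open scoped ENNReal ComplexOrder

open Finset Filter
open scoped BigOperators Topology

/-- Rényi entropy with parameter `α ∈ [0, ∞]` of a probability vector `p`
(natural logarithm): `H_∞(p) = -log max_j p(j)`, `H_1(p) = -∑ p log p`,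
and otherwise `H_α(p) = (1-α)⁻¹ log ∑_j p(j)^α`. -/
noncomputable def renyiEntropy {ι : Type} [Fintype ι] (α : ℝ≥0∞) (p : ι → ℝ) : ℝ :=
  if α = ⊤ then - Real.log (sSup (Set.range p))
  else if α = 1 then - ∑ j, p j * Real.log (p j)
  else (1 - α.toReal)⁻¹ * Real.log (∑ j, p j ^ α.toReal)

noncomputable def Complex.abs : AbsoluteValue ℂ ℝ :=
  IsAbsoluteValue.toAbsoluteValue (norm : ℂ → ℝ)

lemma Complex.norm_eq_abs (z : ℂ) : ‖z‖ = Complex.abs z := rfl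

lemma Complex.abs_exp (z : ℂ) : Complex.abs (Complex.exp z) = Real.exp z.re := Complex.norm_exp z

lemma Complex.sq_abs (z : ℂ) : Complex.abs z ^ 2 = Complex.normSq z := Complex.sq_norm z

lemma Complex.abs_ofReal (r : ℝ) : Complex.abs (r : ℂ) = |r| := Complex.norm_real r

lemma Complex.abs_conj (z : ℂ) : Complex.abs ((starRingEnd ℂ) z) = Complex.abs z :=
  Complex.norm_conj z

noncomputable def MUrn {d : ℕ} (A : Matrix (Fin d) (Fin d) ℂ) (i : Fin d) : ℝ :=
  Real.sqrt (∑ m, Complex.abs (A i m) ^ 2)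

lemma MUrn_nonneg {d : ℕ} (A : Matrix (Fin d) (Fin d) ℂ) (i : Fin d) : 0 ≤ MUrn A i :=
  Real.sqrt_nonneg _

lemma MUrn_sq {d : ℕ} (A : Matrix (Fin d) (Fin d) ℂ) (i : Fin d) :
    MUrn A i ^ 2 = ∑ m, Complex.abs (A i m) ^ 2 :=
  Real.sq_sqrt (by positivity)

lemma MUrn_entry_le {d : ℕ} (A : Matrix (Fin d) (Fin d) ℂ) (i m : Fin d) :
    Complex.abs (A i m) ≤ MUrn A i := by
  rw [MUrn]
  rw [show Complex.abs (A i m) = Real.sqrt (Complex.abs (A i m) ^ 2) by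
    rw [Real.sqrt_sq (by positivity)]]
  apply Real.sqrt_le_sqrt
  exact Finset.single_le_sum (f := fun m => Complex.abs (A i m) ^ 2)
    (fun j _ => by positivity) (Finset.mem_univ m)

lemma MUrn_eq_zero {d : ℕ} {A : Matrix (Fin d) (Fin d) ℂ} {i : Fin d} (h : MUrn A i = 0)
    (m : Fin d) : A i m = 0 := by
  have h2 : ∑ m, Complex.abs (A i m) ^ 2 = 0 := by
    have := MUrn_sq A i; rw [h] at this; simpa using this.symm
  have := (Finset.sum_eq_zero_iff_of_nonneg (fun j _ => by positivity)).mp h2 m (Finset.mem_univ m)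
  simpa using this

/-- Cauchy-Schwarz for complex sums. -/
lemma MU_cauchy {d : ℕ} (x y : Fin d → ℂ) :
    Complex.abs (∑ m, x m * y m) ≤
      Real.sqrt (∑ m, Complex.abs (x m) ^ 2) * Real.sqrt (∑ m, Complex.abs (y m) ^ 2) := by
  calc Complex.abs (∑ m, x m * y m) ≤ ∑ m, Complex.abs (x m) * Complex.abs (y m) := by
        refine (AbsoluteValue.sum_le _ _ _).trans ?_
        simp [_root_.map_mul, le_refl]
      _ ≤ _ := by
        have h := Finset.sum_mul_sq_le_sq_mul_sq Finset.univ
          (fun m => Complex.abs (x m)) (fun m => Complex.abs (y m))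
        have h0 : (0:ℝ) ≤ ∑ m, Complex.abs (x m) * Complex.abs (y m) := by positivity
        have hs := Real.sqrt_le_sqrt h
        rwa [Real.sqrt_mul (by positivity), Real.sqrt_sq h0] at hs
        -- dead:
        
/-- Frobenius norm preserved by unitary. -/
lemma MU_frob {d : ℕ} (U A : Matrix (Fin d) (Fin d) ℂ)
    (hU : U ∈ Matrix.unitaryGroup (Fin d) ℂ) :
    ∑ k, ∑ m, Complex.abs ((U * A) k m) ^ 2 = ∑ i, ∑ m, Complex.abs (A i m) ^ 2 := by
  have key : ∀ (M : Matrix (Fin d) (Fin d) ℂ),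
      ((Mᴴ * M).trace : ℂ) = (↑(∑ i, ∑ m, Complex.abs (M i m) ^ 2) : ℂ) := by
    intro M
    rw [Matrix.trace]
    push_cast
    rw [Finset.sum_comm]
    congr 1; ext i
    simp only [Matrix.diag, Matrix.mul_apply, Matrix.conjTranspose_apply]
    congr 1; ext m
    rw [show ((Complex.abs (M m i) : ℂ))^2 = ((Complex.abs (M m i) ^2 : ℝ) : ℂ) by push_cast; ring,
      Complex.sq_abs]
    rw [show (star (M m i)) = (starRingEnd ℂ) (M m i) from rfl, ← Complex.normSq_eq_conj_mul_self]
  have h1 : ((U * A)ᴴ * (U * A)) = Aᴴ * A := by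
    rw [Matrix.conjTranspose_mul, Matrix.mul_assoc, ← Matrix.mul_assoc Uᴴ U A,
      show Uᴴ * U = 1 from Matrix.mem_unitaryGroup_iff'.mp hU]
    rw [Matrix.one_mul]
  have := key (U * A)
  rw [h1, key A] at this
  exact_mod_cast this.symm

/-- triangle inequality in ℓ² -/
lemma MU_l2_sum_le {d : ℕ} (v : Fin d → Fin d → ℂ) :
    Real.sqrt (∑ m, Complex.abs (∑ i, v i m) ^ 2) ≤
      ∑ i, Real.sqrt (∑ m, Complex.abs (v i m) ^ 2) := by
  have hnorm : ∀ (x : EuclideanSpace ℂ (Fin d)),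
      ‖x‖ = Real.sqrt (∑ m, Complex.abs (x m) ^ 2) := by
    intro x
    rw [EuclideanSpace.norm_eq]
    congr 1
  let V : Fin d → EuclideanSpace ℂ (Fin d) := fun i => WithLp.toLp 2 (fun m => v i m)
  have h := norm_sum_le Finset.univ V
  have h1 : ‖∑ i, V i‖ = Real.sqrt (∑ m, Complex.abs (∑ i, v i m) ^ 2) := by
    rw [hnorm]
    congr 1
    refine Finset.sum_congr rfl fun m _ => ?_
    congr 2
    show (∑ i, V i) m = _
    rw [WithLp.ofLp_sum, Finset.sum_apply]
  have h2 : ∀ i, ‖V i‖ = Real.sqrt (∑ m, Complex.abs (v i m) ^ 2) := fun i => hnorm (V i)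
  rw [h1] at h
  refine h.trans (le_of_eq ?_)
  exact Finset.sum_congr rfl fun i _ => h2 i

/-- pulling a scalar out of a row norm -/
lemma MU_scalar_row {d : ℕ} (lam : ℂ) (x : Fin d → ℂ) :
    Real.sqrt (∑ m, Complex.abs (lam * x m) ^ 2) =
      Complex.abs lam * Real.sqrt (∑ m, Complex.abs (x m) ^ 2) := by
  have : ∀ m, Complex.abs (lam * x m) ^ 2 = Complex.abs lam ^ 2 * Complex.abs (x m) ^ 2 := by
    intro m; rw [_root_.map_mul]; ring
  simp_rw [this, ← Finset.mul_sum]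
  rw [Real.sqrt_mul (by positivity), Real.sqrt_sq (by positivity)]

lemma MU_bilinear {d : ℕ} (U : Matrix (Fin d) (Fin d) ℂ)
    (hU : U ∈ Matrix.unitaryGroup (Fin d) ℂ)
    {c : ℝ} (hc0 : 0 < c) (hc : ∀ k i, Complex.abs (U k i) ≤ c)
    {θ : ℝ} (hθ0 : 0 < θ) (hθ1 : θ < 1)
    (A Y : Matrix (Fin d) (Fin d) ℂ)
    (hA : ∑ i, MUrn A i ^ (2/(2-θ)) ≤ 1) (hY : ∑ k, MUrn Y k ^ (2/(2-θ)) ≤ 1) :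
    Complex.abs (∑ k, ∑ m, (U * A) k m * Y k m) ≤ c ^ (1 - θ) := by
  have h2θ : (0:ℝ) < 2 - θ := by linarith
  set s : ℝ := 2 / (2 - θ) with hs_def
  have hs1 : 1 < s := by rw [hs_def, lt_div_iff₀ h2θ]; linarith
  have hs2 : s < 2 := by rw [hs_def, div_lt_iff₀ h2θ]; nlinarith
  have hspos : (0:ℝ) < s := by linarith
  set r : Fin d → ℝ := MUrn A with hr_def
  set w : Fin d → ℝ := MUrn Y with hw_def
  have hrnn : ∀ i, 0 ≤ r i := fun i => MUrn_nonneg A i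
  have hwnn : ∀ k, 0 ≤ w k := fun k => MUrn_nonneg Y k
  -- the analytic family
  set g : ℂ → ℂ := fun z => (↑(s - 1) : ℂ) - (↑(s / 2) : ℂ) * z with hg_def
  set φ : Fin d → ℂ → ℂ := fun i z => Complex.exp (g z * (Real.log (r i) : ℂ)) with hφ_def
  set ψ : Fin d → ℂ → ℂ := fun k z => Complex.exp (g z * (Real.log (w k) : ℂ)) with hψ_def
  set Az : ℂ → Matrix (Fin d) (Fin d) ℂ :=
    fun z => Matrix.of (fun i m => φ i z * A i m) with hAz_def
  set F : ℂ → ℂ := fun z => ∑ k, ψ k z * ∑ m, (U * Az z) k m * Y k m with hF_def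
  -- modulus of the analytic scalars
  have habs_exp : ∀ (t : ℝ) (z : ℂ),
      Complex.abs (Complex.exp (g z * (t : ℂ))) =
        Real.exp (((s - 1) - s / 2 * z.re) * t) := by
    intro t z
    rw [Complex.abs_exp]
    congr 1
    have : (g z * (t:ℂ)).re = (g z).re * t := by
      simp [Complex.mul_re]
    rw [this]
    congr 1
    simp [hg_def, Complex.sub_re, Complex.mul_re]
  -- |φ i z| * r i = r i ^ (s - s/2 * z.re)  for re z ≤ 1
  have hscalar : ∀ (t : ℝ), 0 ≤ t → ∀ z : ℂ, z.re ≤ 1 →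
      Complex.abs (Complex.exp (g z * (Real.log t : ℂ))) * t = t ^ (s - s / 2 * z.re) := by
    intro t ht z hz
    rcases eq_or_lt_of_le ht with h0 | h0
    · rw [← h0]
      rw [Real.zero_rpow (by nlinarith : s - s / 2 * z.re ≠ 0)]
      ring
    · rw [habs_exp]
      rw [Real.rpow_def_of_pos h0]
      rw [show s - s / 2 * z.re = ((s - 1) - s / 2 * z.re) + 1 by ring]
      rw [mul_add, Real.exp_add, mul_one, Real.exp_log h0, mul_comm (Real.log t)]
  -- row norms of U * Az
  have hrow_eq : ∀ (z : ℂ) (k : Fin d),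
      (fun m => (U * Az z) k m) = fun m => ∑ i, (U k i * φ i z) * A i m := by
    intro z k
    funext m
    rw [Matrix.mul_apply]
    exact Finset.sum_congr rfl fun i _ => by simp [hAz_def]; ring
  -- Edge bound at Re z = 0
  have edge0 : ∀ z : ℂ, z.re = 0 → Complex.abs (F z) ≤ c := by
    intro z hz
    have hz1 : z.re ≤ 1 := by rw [hz]; norm_num
    have hexp : s - s / 2 * z.re = s := by rw [hz]; ring
    calc Complex.abs (F z) ≤ ∑ k, Complex.abs (ψ k z * ∑ m, (U * Az z) k m * Y k m) := by
          exact AbsoluteValue.sum_le _ _ _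
      _ ≤ ∑ k, (w k ^ s * c) := by
          refine Finset.sum_le_sum fun k _ => ?_
          rw [_root_.map_mul]
          have hCS := MU_cauchy (fun m => (U * Az z) k m) (fun m => Y k m)
          have hrow : Real.sqrt (∑ m, Complex.abs ((U * Az z) k m) ^ 2) ≤ c := by
            have h1 : Real.sqrt (∑ m, Complex.abs ((U * Az z) k m) ^ 2)
                ≤ ∑ i, Real.sqrt (∑ m, Complex.abs ((U k i * φ i z) * A i m) ^ 2) := by
              have heq : ∀ m, (U * Az z) k m = ∑ i, (U k i * φ i z) * A i m := by
                intro m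
                rw [Matrix.mul_apply]
                exact Finset.sum_congr rfl fun i _ => by simp [hAz_def]; ring
              simp_rw [heq]
              exact MU_l2_sum_le (fun i m => (U k i * φ i z) * A i m)
            refine h1.trans ?_
            have h2 : ∀ i, Real.sqrt (∑ m, Complex.abs ((U k i * φ i z) * A i m) ^ 2)
                ≤ c * (r i ^ s) := by
              intro i
              rw [MU_scalar_row]
              rw [_root_.map_mul]
              rw [mul_assoc]
              have := hscalar (r i) (hrnn i) z hz1
              rw [hexp] at this
              rw [show Complex.abs (φ i z) * Real.sqrt (∑ m, Complex.abs (A i m) ^ 2) =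
                Complex.abs (φ i z) * r i from rfl, this]
              exact mul_le_mul_of_nonneg_right (hc k i) (Real.rpow_nonneg (hrnn i) s)
            refine (Finset.sum_le_sum fun i _ => h2 i).trans ?_
            rw [← Finset.mul_sum]
            calc c * ∑ i, r i ^ s ≤ c * 1 := by
                  refine mul_le_mul_of_nonneg_left ?_ hc0.le
                  exact hA
              _ = c := mul_one c
          have hψw : Complex.abs (ψ k z) * w k = w k ^ s := by
            have := hscalar (w k) (hwnn k) z hz1
            rw [hexp] at this
            exact this
          calc Complex.abs (ψ k z) * Complex.abs (∑ m, (U * Az z) k m * Y k m)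
              ≤ Complex.abs (ψ k z) * (Real.sqrt (∑ m, Complex.abs ((U * Az z) k m) ^ 2) * w k) := by
                refine mul_le_mul_of_nonneg_left ?_ (Complex.abs.nonneg _)
                exact hCS
            _ ≤ Complex.abs (ψ k z) * (c * w k) := by
                refine mul_le_mul_of_nonneg_left ?_ (Complex.abs.nonneg _)
                exact mul_le_mul_of_nonneg_right hrow (hwnn k)
            _ = w k ^ s * c := by rw [← hψw]; ring
      _ ≤ c := by
          rw [← Finset.sum_mul]
          calc (∑ k, w k ^ s) * c ≤ 1 * c := mul_le_mul_of_nonneg_right hY hc0.le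
            _ = c := one_mul c

  -- real Cauchy-Schwarz helper
  have MU_real_cs : ∀ (a b : Fin d → ℝ), 0 ≤ ∑ i, a i * b i →
      ∑ i, a i * b i ≤ Real.sqrt (∑ i, a i ^ 2) * Real.sqrt (∑ i, b i ^ 2) := by
    intro a b h0
    have h := Finset.sum_mul_sq_le_sq_mul_sq Finset.univ a b
    have hs := Real.sqrt_le_sqrt h
    rwa [Real.sqrt_mul (by positivity), Real.sqrt_sq h0] at hs
  have hrpow_sq : ∀ (x : ℝ), 0 ≤ x → (x ^ (s/2)) ^ 2 = x ^ s := by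
    intro x hx
    rw [← Real.rpow_natCast (x ^ (s/2)) 2, ← Real.rpow_mul hx]
    norm_num
  -- Edge bound at Re z = 1
  have edge1 : ∀ z : ℂ, z.re = 1 → Complex.abs (F z) ≤ 1 := by
    intro z hz
    have hz1 : z.re ≤ 1 := le_of_eq hz
    have hexp : s - s / 2 * z.re = s / 2 := by rw [hz]; ring
    have hRk := fun k => MU_cauchy (fun m => (U * Az z) k m) (fun m => Y k m)
    set R : Fin d → ℝ := fun k => Real.sqrt (∑ m, Complex.abs ((U * Az z) k m) ^ 2) with hR_def
    have hRnn : ∀ k, 0 ≤ R k := fun k => Real.sqrt_nonneg _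
    have hψw : ∀ k, Complex.abs (ψ k z) * w k = w k ^ (s/2) := by
      intro k
      have := hscalar (w k) (hwnn k) z hz1
      rwa [hexp] at this
    have step1 : Complex.abs (F z) ≤ ∑ k, R k * (w k ^ (s/2)) := by
      refine (AbsoluteValue.sum_le _ _ _).trans (Finset.sum_le_sum fun k _ => ?_)
      rw [_root_.map_mul]
      calc Complex.abs (ψ k z) * Complex.abs (∑ m, (U * Az z) k m * Y k m)
          ≤ Complex.abs (ψ k z) * (R k * w k) :=
            mul_le_mul_of_nonneg_left (hRk k) (Complex.abs.nonneg _)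
        _ = R k * (Complex.abs (ψ k z) * w k) := by ring
        _ = R k * (w k ^ (s/2)) := by rw [hψw k]
    have step2 : ∑ k, R k * (w k ^ (s/2)) ≤
        Real.sqrt (∑ k, R k ^ 2) * Real.sqrt (∑ k, (w k ^ (s/2)) ^ 2) := by
      refine MU_real_cs _ _ ?_
      exact Finset.sum_nonneg fun k _ => mul_nonneg (hRnn k) (Real.rpow_nonneg (hwnn k) _)
    have hsumR : ∑ k, R k ^ 2 ≤ 1 := by
      have h1 : ∑ k, R k ^ 2 = ∑ k, ∑ m, Complex.abs ((U * Az z) k m) ^ 2 := by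
        refine Finset.sum_congr rfl fun k _ => ?_
        exact Real.sq_sqrt (by positivity)
      rw [h1, MU_frob U (Az z) hU]
      have h2 : ∀ i, ∑ m, Complex.abs (Az z i m) ^ 2 = (Complex.abs (φ i z) * r i) ^ 2 := by
        intro i
        have : ∀ m, Complex.abs (Az z i m) ^ 2
            = Complex.abs (φ i z) ^ 2 * Complex.abs (A i m) ^ 2 := by
          intro m
          show Complex.abs (φ i z * A i m) ^ 2 = _
          rw [_root_.map_mul]; ring
        simp_rw [this, ← Finset.mul_sum]
        have hsq : ∑ m, Complex.abs (A i m) ^ 2 = r i ^ 2 := by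
          rw [hr_def, MUrn]
          exact (Real.sq_sqrt (by positivity)).symm
        rw [hsq]; ring
      have h3 : ∑ i, ∑ m, Complex.abs (Az z i m) ^ 2 = ∑ i, r i ^ s := by
        refine Finset.sum_congr rfl fun i _ => ?_
        rw [h2 i]
        have := hscalar (r i) (hrnn i) z hz1
        rw [hexp] at this
        rw [this, hrpow_sq (r i) (hrnn i)]
      rw [h3]; exact hA
    have hsumw : ∑ k, (w k ^ (s/2)) ^ 2 ≤ 1 := by
      have : ∑ k, (w k ^ (s/2)) ^ 2 = ∑ k, w k ^ s :=
        Finset.sum_congr rfl fun k _ => hrpow_sq (w k) (hwnn k)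
      rw [this]; exact hY
    calc Complex.abs (F z) ≤ Real.sqrt (∑ k, R k ^ 2) * Real.sqrt (∑ k, (w k ^ (s/2)) ^ 2) :=
          step1.trans step2
      _ ≤ Real.sqrt 1 * Real.sqrt 1 :=
          mul_le_mul (Real.sqrt_le_sqrt hsumR) (Real.sqrt_le_sqrt hsumw)
            (Real.sqrt_nonneg _) (Real.sqrt_nonneg _)
      _ = 1 := by rw [Real.sqrt_one, mul_one]
  -- differentiability
  have hFeq : F = fun z => ∑ k, Complex.exp (g z * (Real.log (w k) : ℂ)) *
      ∑ m, (∑ i, U k i * (Complex.exp (g z * (Real.log (r i) : ℂ)) * A i m)) * Y k m := by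
    funext z
    show (∑ k, ψ k z * ∑ m, (U * Az z) k m * Y k m) = _
    refine Finset.sum_congr rfl fun k _ => ?_
    have hm : ∀ m, (U * Az z) k m = ∑ i, U k i * (φ i z * A i m) := by
      intro m; rw [Matrix.mul_apply]; rfl
    simp_rw [hm]
    rfl
  have hdiffg : Differentiable ℂ g := by
    rw [hg_def]; fun_prop
  have hdiff : Differentiable ℂ F := by
    rw [hFeq]
    apply Differentiable.fun_sum
    intro k _
    apply Differentiable.mul
    · exact Complex.differentiable_exp.comp (hdiffg.mul_const _)
    · apply Differentiable.fun_sum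
      intro m _
      apply Differentiable.mul _ (differentiable_const _)
      apply Differentiable.fun_sum
      intro i _
      exact (differentiable_const _).mul
        ((Complex.differentiable_exp.comp (hdiffg.mul_const _)).mul_const _)
  -- boundedness on the strip
  set C : ℝ := ∑ k, Real.exp (s * |Real.log (w k)|) *
      ∑ m, (∑ i, Complex.abs (U k i) * (Real.exp (s * |Real.log (r i)|) * Complex.abs (A i m)))
        * Complex.abs (Y k m) with hC_def
  have hexp_bound : ∀ (t : ℝ) (z : ℂ), z.re ∈ Set.Icc (0:ℝ) 1 →
      Complex.abs (Complex.exp (g z * (Real.log t : ℂ))) ≤ Real.exp (s * |Real.log t|) := by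
    intro t z hz
    rw [habs_exp]
    apply Real.exp_le_exp.mpr
    calc (s - 1 - s / 2 * z.re) * Real.log t ≤ |(s - 1 - s / 2 * z.re) * Real.log t| :=
          le_abs_self _
      _ = |s - 1 - s / 2 * z.re| * |Real.log t| := abs_mul _ _
      _ ≤ s * |Real.log t| := by
          apply mul_le_mul_of_nonneg_right _ (abs_nonneg _)
          rw [abs_le]
          obtain ⟨h1, h2⟩ := hz
          constructor <;> nlinarith
  have hB : BddAbove ((norm ∘ F) '' (Complex.HadamardThreeLines.verticalClosedStrip 0 1)) := by
    refine ⟨C, ?_⟩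
    rintro x ⟨z, hz, rfl⟩
    have hzre : z.re ∈ Set.Icc (0:ℝ) 1 := hz
    show ‖F z‖ ≤ C
    rw [Complex.norm_eq_abs, hFeq]
    refine (AbsoluteValue.sum_le _ _ _).trans ?_
    rw [hC_def]
    refine Finset.sum_le_sum fun k _ => ?_
    rw [_root_.map_mul]
    have houter := hexp_bound (w k) z hzre
    have hinner : Complex.abs (∑ m, (∑ i, U k i *
        (Complex.exp (g z * (Real.log (r i) : ℂ)) * A i m)) * Y k m) ≤
        ∑ m, (∑ i, Complex.abs (U k i) * (Real.exp (s * |Real.log (r i)|)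
          * Complex.abs (A i m))) * Complex.abs (Y k m) := by
      refine (AbsoluteValue.sum_le _ _ _).trans (Finset.sum_le_sum fun m _ => ?_)
      rw [_root_.map_mul]
      apply mul_le_mul_of_nonneg_right _ (Complex.abs.nonneg _)
      refine (AbsoluteValue.sum_le _ _ _).trans (Finset.sum_le_sum fun i _ => ?_)
      rw [_root_.map_mul, _root_.map_mul]
      apply mul_le_mul_of_nonneg_left _ (Complex.abs.nonneg _)
      exact mul_le_mul_of_nonneg_right (hexp_bound (r i) z hzre) (Complex.abs.nonneg _)
    calc Complex.abs (Complex.exp (g z * (Real.log (w k) : ℂ))) * Complex.abs (∑ m, _) ≤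
          Real.exp (s * |Real.log (w k)|) * Complex.abs (∑ m, (∑ i, U k i *
            (Complex.exp (g z * (Real.log (r i) : ℂ)) * A i m)) * Y k m) :=
            mul_le_mul_of_nonneg_right houter (Complex.abs.nonneg _)
      _ ≤ _ := mul_le_mul_of_nonneg_left hinner (Real.exp_nonneg _)
  -- apply Hadamard three lines
  have hmem : (θ : ℂ) ∈ Complex.HadamardThreeLines.verticalClosedStrip 0 1 := by
    show (θ:ℂ).re ∈ Set.Icc (0:ℝ) 1
    rw [Complex.ofReal_re]
    exact ⟨hθ0.le, hθ1.le⟩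
  have h3l := Complex.HadamardThreeLines.norm_le_interp_of_mem_verticalClosedStrip' (f := F) zero_lt_one hmem
    hdiff.diffContOnCl hB
    (fun z hz => by
      rw [Complex.norm_eq_abs]
      exact edge0 z (by simpa using hz))
    (fun z hz => by
      rw [Complex.norm_eq_abs]
      exact edge1 z (by simpa using hz))
  rw [Complex.norm_eq_abs, Complex.ofReal_re, Real.one_rpow, mul_one, sub_zero, sub_zero, div_one] at h3l
  -- evaluate F at θ
  have hsval : s * (2 - θ) = 2 := by rw [hs_def]; field_simp
  have hgθ : g (θ : ℂ) = 0 := by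
    have h0 : (s - 1) - s / 2 * θ = 0 := by nlinarith
    show ((s - 1 : ℝ) : ℂ) - ((s / 2 : ℝ) : ℂ) * (θ:ℂ) = 0
    rw [show ((s - 1 : ℝ) : ℂ) - ((s / 2 : ℝ) : ℂ) * (θ:ℂ)
        = (((s - 1) - s / 2 * θ : ℝ) : ℂ) by push_cast; ring, h0]
    norm_num
  have hAzθ : Az (θ : ℂ) = A := by
    ext i m
    show φ i (θ:ℂ) * A i m = A i m
    rw [hφ_def]
    simp [hgθ]
  have hFθ : F (θ : ℂ) = ∑ k, ∑ m, (U * A) k m * Y k m := by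
    rw [hF_def]
    simp only [hAzθ]
    refine Finset.sum_congr rfl fun k _ => ?_
    rw [hψ_def]
    simp [hgθ]
  rw [hFθ] at h3l
  exact h3l

/-- Riesz-Thorin interpolation conclusion for U, normalized version. -/
lemma MU_norm_ineq_normalized {d : ℕ} (U : Matrix (Fin d) (Fin d) ℂ)
    (hU : U ∈ Matrix.unitaryGroup (Fin d) ℂ)
    {c : ℝ} (hc0 : 0 < c) (hc : ∀ k i, Complex.abs (U k i) ≤ c)
    {θ : ℝ} (hθ0 : 0 < θ) (hθ1 : θ < 1)
    (A : Matrix (Fin d) (Fin d) ℂ)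
    (hA : ∑ i, MUrn A i ^ (2/(2-θ)) ≤ 1) :
    (∑ k, MUrn (U * A) k ^ (2/θ)) ^ (θ/2) ≤ c ^ (1 - θ) := by
  have h2θ : (0:ℝ) < 2 - θ := by linarith
  set s : ℝ := 2 / (2 - θ) with hs_def
  set t : ℝ := 2 / θ with ht_def
  have htpos : (0:ℝ) < t := by positivity
  have ht2 : 2 < t := by rw [ht_def, lt_div_iff₀ hθ0]; nlinarith
  have hts : (t - 1) * s = t := by rw [ht_def, hs_def]; field_simp
  set B : Matrix (Fin d) (Fin d) ℂ := U * A with hB_def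
  set R : Fin d → ℝ := MUrn B with hR_def
  have hRnn : ∀ k, 0 ≤ R k := fun k => MUrn_nonneg B k
  set Nt : ℝ := ∑ k, R k ^ t with hNt_def
  have hNtnn : 0 ≤ Nt := Finset.sum_nonneg fun k _ => Real.rpow_nonneg (hRnn k) t
  set N : ℝ := Nt ^ (θ/2) with hN_def
  have hNnn : 0 ≤ N := Real.rpow_nonneg hNtnn _
  rcases eq_or_lt_of_le hNtnn with h0 | h0
  · rw [hN_def, ← h0, Real.zero_rpow (by positivity)]
    exact Real.rpow_nonneg hc0.le _
  · -- Nt > 0, N > 0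
    have hNpos : 0 < N := Real.rpow_pos_of_pos h0 _
    have hNinv : N ^ t = Nt := by
      rw [hN_def, ← Real.rpow_mul hNtnn]
      rw [show θ/2 * t = 1 by rw [ht_def]; field_simp]
      exact Real.rpow_one Nt
    -- dual matrix
    set Y : Matrix (Fin d) (Fin d) ℂ :=
      Matrix.of (fun k m => ((R k ^ (t-2) / N ^ (t-1) : ℝ) : ℂ) * (starRingEnd ℂ) (B k m))
      with hY_def
    have hYrow : ∀ k, MUrn Y k = R k ^ (t-1) / N ^ (t-1) := by
      intro k
      have h1 : MUrn Y k = Real.sqrt (∑ m,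
          Complex.abs (((R k ^ (t-2) / N ^ (t-1) : ℝ) : ℂ) * (starRingEnd ℂ) (B k m)) ^ 2) := rfl
      rw [h1, MU_scalar_row]
      have habs : Complex.abs ((( R k ^ (t-2) / N ^ (t-1) : ℝ) : ℂ)) = R k ^ (t-2) / N ^ (t-1) := by
        rw [Complex.abs_ofReal, abs_of_nonneg]
        exact div_nonneg (Real.rpow_nonneg (hRnn k) _) (Real.rpow_nonneg hNnn _)
      have hconj : ∀ m, Complex.abs ((starRingEnd ℂ) (B k m)) = Complex.abs (B k m) := fun m =>
        Complex.abs_conj _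
      simp_rw [habs, hconj]
      have : Real.sqrt (∑ m, Complex.abs (B k m) ^ 2) = R k := by
        rw [hR_def]; rfl
      rw [this]
      rcases eq_or_lt_of_le (hRnn k) with hR0 | hR0
      · rw [← hR0, Real.zero_rpow (by nlinarith), Real.zero_rpow (by nlinarith)]
        ring
      · rw [div_mul_eq_mul_div, ← Real.rpow_add_one (ne_of_gt hR0)]
        congr 1
        ring
    have hYsum : ∑ k, MUrn Y k ^ (2/(2-θ)) ≤ 1 := by
      have hterm : ∀ k, MUrn Y k ^ s = R k ^ t / Nt := by
        intro k
        rw [hYrow k, Real.div_rpow (Real.rpow_nonneg (hRnn k) _) (Real.rpow_nonneg hNnn _),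
          ← Real.rpow_mul (hRnn k), ← Real.rpow_mul hNnn, hts, hNinv]
      show ∑ k, MUrn Y k ^ s ≤ 1
      simp_rw [hterm]
      rw [← Finset.sum_div, ← hNt_def, div_self (ne_of_gt h0)]
    have hpair : ∑ k, ∑ m, B k m * Y k m = ((N : ℝ) : ℂ) := by
      have hterm : ∀ k, ∑ m, B k m * Y k m = ((R k ^ t / N ^ (t-1) : ℝ) : ℂ) := by
        intro k
        have h1 : ∀ m, B k m * Y k m
            = ((R k ^ (t-2) / N ^ (t-1) : ℝ) : ℂ) * ((Complex.abs (B k m) ^ 2 : ℝ) : ℂ) := by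
          intro m
          show B k m * (((R k ^ (t-2) / N ^ (t-1) : ℝ) : ℂ) * (starRingEnd ℂ) (B k m)) = _
          rw [show B k m * (((R k ^ (t-2) / N ^ (t-1) : ℝ) : ℂ) * (starRingEnd ℂ) (B k m))
              = ((R k ^ (t-2) / N ^ (t-1) : ℝ) : ℂ) * (B k m * (starRingEnd ℂ) (B k m)) by ring]
          rw [Complex.mul_conj]
          norm_cast
          rw [Complex.sq_abs]
        simp_rw [h1]
        rw [← Finset.mul_sum]
        rw [show ∑ m, ((Complex.abs (B k m) ^ 2 : ℝ) : ℂ) = ((∑ m, Complex.abs (B k m) ^ 2 : ℝ) : ℂ)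
          by push_cast; rfl]
        rw [show ((∑ m, Complex.abs (B k m) ^ 2 : ℝ) : ℂ) = ((R k ^ (2:ℕ) : ℝ) : ℂ) by
          rw [MUrn_sq B k]]
        rw [← Complex.ofReal_mul]
        congr 1
        rcases eq_or_lt_of_le (hRnn k) with hR0 | hR0
        · rw [← hR0]
          rw [Real.zero_rpow (by nlinarith : t - (2:ℝ) ≠ 0), Real.zero_rpow (ne_of_gt htpos)]
          ring
        · rw [div_mul_eq_mul_div]
          congr 1
          rw [← Real.rpow_natCast (R k) 2, ← Real.rpow_add hR0]
          norm_num
      simp_rw [hterm]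
      rw [show ∑ k, ((R k ^ t / N ^ (t-1) : ℝ) : ℂ) = ((∑ k, R k ^ t / N ^ (t-1) : ℝ) : ℂ)
        by push_cast; rfl]
      congr 1
      rw [← Finset.sum_div, ← hNt_def, ← hNinv]
      rw [← Real.rpow_sub hNpos, show t - (t-1) = 1 by ring, Real.rpow_one]
    have hbil := MU_bilinear U hU hc0 hc hθ0 hθ1 A Y hA hYsum
    rw [← hB_def, hpair, Complex.abs_ofReal, abs_of_nonneg hNnn] at hbil
    exact hbil

lemma MUrn_smul {d : ℕ} (x : ℝ) (hx : 0 ≤ x) (A : Matrix (Fin d) (Fin d) ℂ) (i : Fin d) :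
    MUrn (((x:ℝ) : ℂ) • A) i = x * MUrn A i := by
  have : ∀ m, (((x:ℝ):ℂ) • A) i m = ((x:ℝ):ℂ) * A i m := fun m => rfl
  show Real.sqrt (∑ m, Complex.abs ((((x:ℝ):ℂ) • A) i m) ^ 2) = _
  simp_rw [this]
  rw [MU_scalar_row, Complex.abs_ofReal, abs_of_nonneg hx]
  rfl

lemma MU_norm_ineq {d : ℕ} (U : Matrix (Fin d) (Fin d) ℂ)
    (hU : U ∈ Matrix.unitaryGroup (Fin d) ℂ)
    {c : ℝ} (hc0 : 0 < c) (hc : ∀ k i, Complex.abs (U k i) ≤ c)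
    {θ : ℝ} (hθ0 : 0 < θ) (hθ1 : θ < 1)
    (A : Matrix (Fin d) (Fin d) ℂ) :
    (∑ k, MUrn (U * A) k ^ (2/θ)) ^ (θ/2) ≤
      c ^ (1 - θ) * (∑ i, MUrn A i ^ (2/(2-θ))) ^ ((2-θ)/2) := by
  have h2θ : (0:ℝ) < 2 - θ := by linarith
  set s : ℝ := 2 / (2 - θ) with hs_def
  have hspos : 0 < s := by positivity
  have hinvs : 1/s = (2-θ)/2 := by rw [hs_def]; field_simp
  set P : ℝ := ∑ i, MUrn A i ^ s with hP_def
  have hPnn : 0 ≤ P := Finset.sum_nonneg fun i _ => Real.rpow_nonneg (MUrn_nonneg A i) s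
  rcases eq_or_lt_of_le hPnn with hP0 | hP0
  · -- A = 0
    have hA0 : A = 0 := by
      ext i m
      have hri : MUrn A i ^ s = 0 :=
        (Finset.sum_eq_zero_iff_of_nonneg
          (fun i _ => Real.rpow_nonneg (MUrn_nonneg A i) s)).mp hP0.symm i (Finset.mem_univ i)
      have : MUrn A i = 0 := by
        by_contra hne
        exact hne (by
          have := Real.rpow_eq_zero_iff_of_nonneg (MUrn_nonneg A i) |>.mp hri
          exact this.1)
      exact MUrn_eq_zero this m
    have hB0 : U * A = 0 := by rw [hA0, Matrix.mul_zero]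
    have hMU0 : ∀ k, MUrn (U * A : Matrix (Fin d) (Fin d) ℂ) k = 0 := by
      intro k
      rw [hB0]
      show Real.sqrt (∑ m, Complex.abs ((0 : Matrix (Fin d) (Fin d) ℂ) k m) ^ 2) = 0
      simp
    simp_rw [hMU0]
    rw [Real.zero_rpow (by positivity : (2:ℝ)/θ ≠ 0)]
    rw [Finset.sum_const, nsmul_eq_mul, mul_zero, Real.zero_rpow (by positivity)]
    positivity
  · set lam : ℝ := P ^ (-(1/s)) with hlam_def
    have hlampos : 0 < lam := Real.rpow_pos_of_pos hP0 _
    have key := MU_norm_ineq_normalized U hU hc0 hc hθ0 hθ1 (((lam:ℝ):ℂ) • A) ?side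
    case side =>
      have : ∀ i, MUrn (((lam:ℝ):ℂ) • A) i ^ s = lam ^ s * MUrn A i ^ s := by
        intro i
        rw [MUrn_smul lam hlampos.le, Real.mul_rpow hlampos.le (MUrn_nonneg A i)]
      show ∑ i, MUrn (((lam:ℝ):ℂ) • A) i ^ s ≤ 1
      simp_rw [this]
      rw [← Finset.mul_sum, ← hP_def]
      rw [show lam ^ s = P⁻¹ by
        rw [hlam_def, ← Real.rpow_mul hP0.le, show -(1/s) * s = -1 by field_simp,
          Real.rpow_neg_one]]
      rw [inv_mul_cancel₀ (ne_of_gt hP0)]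
    -- unfold the scaling on the left
    have hmulsmul : U * (((lam:ℝ):ℂ) • A) = ((lam:ℝ):ℂ) • (U * A) := Matrix.mul_smul U _ _
    have hL : ∀ k, MUrn (U * (((lam:ℝ):ℂ) • A)) k ^ (2/θ)
        = lam ^ (2/θ) * MUrn (U * A) k ^ (2/θ) := by
      intro k
      rw [hmulsmul, MUrn_smul lam hlampos.le,
        Real.mul_rpow hlampos.le (MUrn_nonneg (U * A) k)]
    rw [show (∑ k, MUrn (U * (((lam:ℝ):ℂ) • A)) k ^ (2/θ))
        = lam ^ (2/θ) * ∑ k, MUrn (U * A) k ^ (2/θ) by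
      rw [Finset.mul_sum]; exact Finset.sum_congr rfl fun k _ => hL k] at key
    have hNtnn : 0 ≤ ∑ k, MUrn (U * A) k ^ (2/θ) :=
      Finset.sum_nonneg fun k _ => Real.rpow_nonneg (MUrn_nonneg _ k) _
    rw [Real.mul_rpow (Real.rpow_nonneg hlampos.le _) hNtnn] at key
    rw [← Real.rpow_mul hlampos.le] at key
    rw [show 2/θ * (θ/2) = 1 by field_simp] at key
    rw [Real.rpow_one] at key
    -- divide by lam
    rw [← le_div_iff₀' hlampos] at key
    refine key.trans (le_of_eq ?_)
    rw [div_eq_mul_inv]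
    congr 1
    rw [hlam_def, ← Real.rpow_neg hP0.le, neg_neg, hinvs]

/-- diagonal of M * Mᴴ -/
lemma MU_diag {d : ℕ} (M : Matrix (Fin d) (Fin d) ℂ) (i : Fin d) :
    ((M * Mᴴ) i i).re = MUrn M i ^ 2 := by
  rw [MUrn_sq]
  rw [Matrix.mul_apply]
  have : ∀ m, M i m * Mᴴ m i = ((Complex.abs (M i m) ^ 2 : ℝ) : ℂ) := by
    intro m
    rw [Matrix.conjTranspose_apply,
      show star (M i m) = (starRingEnd ℂ) (M i m) from rfl, Complex.mul_conj]
    norm_cast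
    rw [Complex.sq_abs]
  simp_rw [this]
  rw [show ∑ m, ((Complex.abs (M i m) ^ 2 : ℝ) : ℂ) = ((∑ m, Complex.abs (M i m) ^ 2 : ℝ) : ℂ) by
    push_cast; rfl]
  exact Complex.ofReal_re _

/-- probability facts -/
lemma MU_prob {d : ℕ} (ρ : Matrix (Fin d) (Fin d) ℂ) (hρ : ρ.PosSemidef) (htr : ρ.trace = 1) :
    (∀ i, 0 ≤ (ρ i i).re) ∧ (∑ i, (ρ i i).re) = 1 := by
  constructor
  · intro i
    have h := hρ.re_dotProduct_nonneg (Pi.single i 1)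
    have he : (star (Pi.single i 1) : Fin d → ℂ) ⬝ᵥ ρ *ᵥ (Pi.single i 1) = ρ i i := by
      simp [dotProduct, Matrix.mulVec, Pi.single_apply]
    rwa [he] at h
  · have : ρ.trace = ∑ i, ρ i i := rfl
    rw [this] at htr
    have := congrArg Complex.re htr
    rw [Complex.re_sum] at this
    simpa using this

lemma MU_exists_pos {d : ℕ} {q : Fin d → ℝ} (hq1 : ∑ k, q k = 1) : ∃ k, 0 < q k := by
  by_contra h
  push_neg at h
  have : ∑ k, q k ≤ 0 := Finset.sum_nonpos fun k _ => h k
  linarith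

lemma MU_entropy_core {d : ℕ} {c : ℝ} (hc0 : 0 < c) {θ : ℝ} (hθ0 : 0 < θ) (hθ1 : θ < 1)
    (p q : Fin d → ℝ) (hp : ∀ i, 0 ≤ p i) (hq : ∀ k, 0 ≤ q k)
    (hp1 : ∑ i, p i = 1) (hq1 : ∑ k, q k = 1)
    (hkey : (∑ k, q k ^ (1/θ)) ^ (θ/2) ≤ c ^ (1-θ) * (∑ i, p i ^ (1/(2-θ))) ^ ((2-θ)/2)) :
    - Real.log (c^2) ≤ (1 - 1/(2-θ))⁻¹ * Real.log (∑ i, p i ^ (1/(2-θ)))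
      + (1 - 1/θ)⁻¹ * Real.log (∑ k, q k ^ (1/θ)) := by
  have h2θ : (0:ℝ) < 2 - θ := by linarith
  have h1θ : (0:ℝ) < 1 - θ := by linarith
  set a : ℝ := 1/(2-θ) with ha_def
  set b : ℝ := 1/θ with hb_def
  set P : ℝ := ∑ i, p i ^ a with hP_def
  set Q : ℝ := ∑ k, q k ^ b with hQ_def
  have ha1 : a ≤ 1 := by rw [ha_def, div_le_one h2θ]; linarith
  have hP1 : 1 ≤ P := by
    rw [← hp1, hP_def]
    refine Finset.sum_le_sum fun i _ => ?_
    rcases eq_or_lt_of_le (hp i) with h0 | h0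
    · rw [← h0, Real.zero_rpow (by positivity)]
    · have hple : p i ≤ 1 := by
        rw [← hp1]
        exact Finset.single_le_sum (fun j _ => hp j) (Finset.mem_univ i)
      have := Real.rpow_le_rpow_of_exponent_ge h0 hple ha1
      rwa [Real.rpow_one] at this
  have hPpos : 0 < P := lt_of_lt_of_le one_pos hP1
  have hQpos : 0 < Q := by
    obtain ⟨k0, hk0⟩ := MU_exists_pos hq1
    calc (0:ℝ) < q k0 ^ b := Real.rpow_pos_of_pos hk0 b
      _ ≤ Q := Finset.single_le_sum (fun k _ => Real.rpow_nonneg (hq k) b) (Finset.mem_univ k0)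
  have hlog := Real.log_le_log (Real.rpow_pos_of_pos hQpos (θ/2)) hkey
  rw [Real.log_rpow hQpos, Real.log_mul (by positivity) (by positivity),
    Real.log_rpow hc0, Real.log_rpow hPpos] at hlog
  set L : ℝ := Real.log P
  set M : ℝ := Real.log Q
  set K : ℝ := Real.log c
  have hconst : (1 - 1/(2-θ))⁻¹ * L + (1 - 1/θ)⁻¹ * M = ((2-θ)*L - θ*M)/(1-θ) := by
    have c1 : 1 - 1/(2-θ) = (1-θ)/(2-θ) := by field_simp; ring
    have c2 : 1 - 1/θ = -((1-θ)/θ) := by field_simp; ring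
    rw [c1, c2, inv_neg, inv_div, inv_div]
    field_simp
    ring
  rw [hconst]
  rw [Real.log_pow]
  rw [le_div_iff₀ h1θ]
  push_cast
  nlinarith [hlog]

open scoped MatrixOrder in
lemma MU_mid {d : ℕ} (U : Matrix (Fin d) (Fin d) ℂ)
    (hU : U ∈ Matrix.unitaryGroup (Fin d) ℂ)
    {c : ℝ} (hc0 : 0 < c) (hc : ∀ k i, Complex.abs (U k i) ≤ c)
    {θ : ℝ} (hθ0 : 0 < θ) (hθ1 : θ < 1)
    (ρ : Matrix (Fin d) (Fin d) ℂ) (hρ : ρ.PosSemidef)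
    (hp : ∀ i, 0 ≤ (ρ i i).re) (hq : ∀ k, 0 ≤ ((U * ρ * Uᴴ) k k).re)
    (hp1 : ∑ i, (ρ i i).re = 1) (hq1 : ∑ k, ((U * ρ * Uᴴ) k k).re = 1) :
    - Real.log (c^2) ≤ (1 - 1/(2-θ))⁻¹ * Real.log (∑ i, ((ρ i i).re) ^ (1/(2-θ)))
      + (1 - 1/θ)⁻¹ * Real.log (∑ k, (((U * ρ * Uᴴ) k k).re) ^ (1/θ)) := by
  obtain ⟨A, hAsa, -, hAρ⟩ :=
    CFC.exists_sqrt_of_isSelfAdjoint_of_quasispectrumRestricts hρ.isHermitian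
      (QuasispectrumRestricts.nnreal_of_nonneg hρ.nonneg)
  have hherm : Aᴴ = A := hAsa.star_eq
  have hAA : A * Aᴴ = ρ := by rw [hherm]; exact hAρ
  have hpA : ∀ i, (ρ i i).re = MUrn A i ^ 2 := by
    intro i; rw [← hAA]; exact MU_diag A i
  have hUA : U * ρ * Uᴴ = (U * A) * (U * A)ᴴ := by
    rw [Matrix.conjTranspose_mul, ← hAA]
    rw [Matrix.mul_assoc, Matrix.mul_assoc, Matrix.mul_assoc]
  have hqA : ∀ k, ((U * ρ * Uᴴ) k k).re = MUrn (U * A) k ^ 2 := by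
    intro k; rw [hUA]; exact MU_diag (U * A) k
  have hconv : ∀ (x : ℝ), 0 ≤ x → ∀ (e : ℝ), (x ^ (2:ℕ)) ^ e = x ^ (2 * e) := by
    intro x hx e
    rw [← Real.rpow_natCast x 2, ← Real.rpow_mul hx]
    norm_num
  have hkey := MU_norm_ineq U hU hc0 hc hθ0 hθ1 A
  apply MU_entropy_core hc0 hθ0 hθ1 _ _ hp hq hp1 hq1
  have e1 : ∀ i, ((ρ i i).re) ^ (1/(2-θ)) = MUrn A i ^ (2/(2-θ)) := by
    intro i
    rw [hpA i, hconv (MUrn A i) (MUrn_nonneg A i)]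
    congr 1
    ring
  have e2 : ∀ k, (((U * ρ * Uᴴ) k k).re) ^ (1/θ) = MUrn (U * A) k ^ (2/θ) := by
    intro k
    rw [hqA k, hconv (MUrn (U * A) k) (MUrn_nonneg (U * A) k)]
    congr 1
    ring
  simp_rw [e1, e2]
  exact hkey

lemma MU_tendsto_shannon {d : ℕ} (p : Fin d → ℝ) (hp : ∀ i, 0 ≤ p i) (hp1 : ∑ i, p i = 1) :
    Tendsto (fun a : ℝ => (1 - a)⁻¹ * Real.log (∑ i, p i ^ a)) (𝓝[≠] 1)
      (𝓝 (- ∑ i, p i * Real.log (p i))) := by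
  set f : ℝ → ℝ := fun a => ∑ i, p i ^ a with hf_def
  set D : ℝ := ∑ i, p i * Real.log (p i) with hD_def
  have hderiv : HasDerivAt f D 1 := by
    rw [hf_def, hD_def]
    apply HasDerivAt.fun_sum
    intro i _
    rcases eq_or_lt_of_le (hp i) with h0 | h0
    · rw [← h0]
      simp only [Real.log_zero, mul_zero, zero_mul]
      have hev : (fun a : ℝ => (0:ℝ) ^ a) =ᶠ[𝓝 (1:ℝ)] fun _ => (0:ℝ) := by
        filter_upwards [isOpen_Ioi.mem_nhds (by norm_num : (1:ℝ) ∈ Set.Ioi (0:ℝ))] with a ha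
        exact Real.zero_rpow (ne_of_gt ha)
      exact (hasDerivAt_const (1:ℝ) (0:ℝ)).congr_of_eventuallyEq hev
    · have h := (Real.hasStrictDerivAt_const_rpow h0 1).hasDerivAt
      rwa [Real.rpow_one] at h
  have hf1 : f 1 = 1 := by
    rw [hf_def]
    simp only [Real.rpow_one]
    exact hp1
  have hlog : HasDerivAt (fun a => Real.log (f a)) D 1 := by
    have h := hderiv.log (by rw [hf1]; norm_num)
    rwa [hf1, div_one] at h
  have hslope := hasDerivAt_iff_tendsto_slope.mp hlog
  have heq : (fun a : ℝ => (1 - a)⁻¹ * Real.log (f a))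
      = fun a => -(slope (fun x => Real.log (f x)) 1 a) := by
    funext a
    rw [slope_def_field, hf1, Real.log_one, sub_zero, div_eq_mul_inv,
      show (1 - a)⁻¹ = -(a - 1)⁻¹ by rw [neg_inv, neg_sub]]
    ring
  have := hslope.neg
  rw [← heq] at this
  exact this

lemma MU_shannon {d : ℕ} (U : Matrix (Fin d) (Fin d) ℂ)
    (hU : U ∈ Matrix.unitaryGroup (Fin d) ℂ)
    {c : ℝ} (hc0 : 0 < c) (hc : ∀ k i, Complex.abs (U k i) ≤ c)
    (ρ : Matrix (Fin d) (Fin d) ℂ) (hρ : ρ.PosSemidef)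
    (hp : ∀ i, 0 ≤ (ρ i i).re) (hq : ∀ k, 0 ≤ ((U * ρ * Uᴴ) k k).re)
    (hp1 : ∑ i, (ρ i i).re = 1) (hq1 : ∑ k, ((U * ρ * Uᴴ) k k).re = 1) :
    - Real.log (c^2) ≤ (- ∑ i, (ρ i i).re * Real.log ((ρ i i).re))
      + (- ∑ k, ((U * ρ * Uᴴ) k k).re * Real.log (((U * ρ * Uᴴ) k k).re)) := by
  set p : Fin d → ℝ := fun i => (ρ i i).re with hp_def
  set q : Fin d → ℝ := fun k => ((U * ρ * Uᴴ) k k).re with hq_def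
  have hIoo : Set.Ioo (0:ℝ) 1 ∈ 𝓝[<] (1:ℝ) :=
    Ioo_mem_nhdsLT_of_mem (by constructor <;> norm_num)
  have ht1 : Tendsto (fun θ : ℝ => 1/(2-θ)) (𝓝[<] 1) (𝓝[≠] 1) := by
    rw [tendsto_nhdsWithin_iff]
    constructor
    · have hcont : ContinuousAt (fun θ : ℝ => 1/(2-θ)) 1 := by
        apply ContinuousAt.div continuousAt_const
        · exact (continuous_const.sub continuous_id).continuousAt
        · norm_num
      have h2 : Tendsto (fun θ : ℝ => 1/(2-θ)) (𝓝[<] 1) (𝓝 (1/(2-1))) :=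
        hcont.tendsto.mono_left (nhdsWithin_le_nhds (s := Set.Iio 1))
      norm_num at h2
      simpa [one_div] using h2
    · filter_upwards [hIoo] with θ hθ
      have : (2:ℝ) - θ > 1 := by cases hθ; linarith
      have h1 : 1/(2-θ) < 1 := by rw [div_lt_one (by linarith)]; linarith
      exact ne_of_lt h1
  have ht2 : Tendsto (fun θ : ℝ => 1/θ) (𝓝[<] 1) (𝓝[≠] 1) := by
    rw [tendsto_nhdsWithin_iff]
    constructor
    · have hcont : ContinuousAt (fun θ : ℝ => 1/θ) 1 := by
        apply ContinuousAt.div continuousAt_const continuousAt_id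
        norm_num
      have h2 : Tendsto (fun θ : ℝ => 1/θ) (𝓝[<] 1) (𝓝 (1/1)) :=
        hcont.tendsto.mono_left (nhdsWithin_le_nhds (s := Set.Iio 1))
      norm_num at h2
      simpa [one_div] using h2
    · filter_upwards [hIoo] with θ hθ
      obtain ⟨h0, h1⟩ := hθ
      have : (1:ℝ) < 1/θ := by rw [lt_div_iff₀ h0]; linarith
      exact (ne_of_gt this)
  have hΦ := ((MU_tendsto_shannon p hp hp1).comp ht1).add ((MU_tendsto_shannon q hq hq1).comp ht2)
  have hev : ∀ᶠ θ in 𝓝[<] (1:ℝ), - Real.log (c^2) ≤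
      ((fun a : ℝ => (1 - a)⁻¹ * Real.log (∑ i, p i ^ a)) ∘ fun θ : ℝ => 1/(2-θ)) θ
      + ((fun a : ℝ => (1 - a)⁻¹ * Real.log (∑ k, q k ^ a)) ∘ fun θ : ℝ => 1/θ) θ := by
    filter_upwards [hIoo] with θ hθ
    obtain ⟨h0, h1⟩ := hθ
    exact MU_mid U hU hc0 hc h0 h1 ρ hρ hp hq hp1 hq1
  exact ge_of_tendsto hΦ hev

open scoped MatrixOrder in
lemma MU_endpoint {d : ℕ} (hd : 1 ≤ d) (U : Matrix (Fin d) (Fin d) ℂ)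
    (hU : U ∈ Matrix.unitaryGroup (Fin d) ℂ)
    {c : ℝ} (hc0 : 0 < c) (hc : ∀ k i, Complex.abs (U k i) ≤ c)
    (ρ : Matrix (Fin d) (Fin d) ℂ) (hρ : ρ.PosSemidef)
    (hp : ∀ i, 0 ≤ (ρ i i).re) (hq : ∀ k, 0 ≤ ((U * ρ * Uᴴ) k k).re)
    (hp1 : ∑ i, (ρ i i).re = 1) (hq1 : ∑ k, ((U * ρ * Uᴴ) k k).re = 1) :
    - Real.log (c^2) ≤ 2 * Real.log (∑ i, ((ρ i i).re) ^ ((2:ℝ)⁻¹))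
      + (- Real.log (sSup (Set.range fun k => ((U * ρ * Uᴴ) k k).re))) := by
  haveI : Nonempty (Fin d) := ⟨⟨0, hd⟩⟩
  obtain ⟨A, hAsa, -, hAρ⟩ :=
    CFC.exists_sqrt_of_isSelfAdjoint_of_quasispectrumRestricts hρ.isHermitian
      (QuasispectrumRestricts.nnreal_of_nonneg hρ.nonneg)
  have hherm : Aᴴ = A := hAsa.star_eq
  have hAA : A * Aᴴ = ρ := by rw [hherm]; exact hAρ
  have hpA : ∀ i, (ρ i i).re = MUrn A i ^ 2 := by
    intro i; rw [← hAA]; exact MU_diag A i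
  have hUA : U * ρ * Uᴴ = (U * A) * (U * A)ᴴ := by
    rw [Matrix.conjTranspose_mul, ← hAA]
    rw [Matrix.mul_assoc, Matrix.mul_assoc, Matrix.mul_assoc]
  have hqA : ∀ k, ((U * ρ * Uᴴ) k k).re = MUrn (U * A) k ^ 2 := by
    intro k; rw [hUA]; exact MU_diag (U * A) k
  set q : Fin d → ℝ := fun k => ((U * ρ * Uᴴ) k k).re with hq_def
  set S : ℝ := ∑ i, MUrn A i with hS_def
  have hSsum : ∑ i, ((ρ i i).re) ^ ((2:ℝ)⁻¹) = S := by
    refine Finset.sum_congr rfl fun i _ => ?_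
    rw [hpA i, ← Real.rpow_natCast (MUrn A i) 2, ← Real.rpow_mul (MUrn_nonneg A i)]
    norm_num
  have hrow : ∀ k, MUrn (U * A) k ≤ c * S := by
    intro k
    have h1 : MUrn (U * A) k ≤ ∑ i, Real.sqrt (∑ m, Complex.abs (U k i * A i m) ^ 2) := by
      have heq : ∀ m, (U * A) k m = ∑ i, U k i * A i m := fun m => Matrix.mul_apply
      show Real.sqrt (∑ m, Complex.abs ((U * A) k m) ^ 2) ≤ _
      simp_rw [heq]
      exact MU_l2_sum_le (fun i m => U k i * A i m)
    refine h1.trans ?_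
    rw [hS_def, Finset.mul_sum]
    refine Finset.sum_le_sum fun i _ => ?_
    rw [MU_scalar_row]
    exact mul_le_mul_of_nonneg_right (hc k i) (MUrn_nonneg A i)
  have hq_le : ∀ k, q k ≤ (c * S) ^ 2 := by
    intro k
    rw [hq_def]
    show ((U * ρ * Uᴴ) k k).re ≤ _
    rw [hqA k]
    exact pow_le_pow_left₀ (MUrn_nonneg _ k) (hrow k) 2
  obtain ⟨k0, hk0⟩ := Finite.exists_max q
  have hsup : sSup (Set.range q) = q k0 := by
    apply IsGreatest.csSup_eq
    exact ⟨⟨k0, rfl⟩, by rintro x ⟨k, rfl⟩; exact hk0 k⟩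
  obtain ⟨k1, hk1⟩ := MU_exists_pos hq1
  have hq0pos : 0 < q k0 := lt_of_lt_of_le hk1 (hk0 k1)
  obtain ⟨i1, hi1⟩ := MU_exists_pos hp1
  have hSpos : 0 < S := by
    have h1 : 0 < MUrn A i1 := by
      rcases eq_or_lt_of_le (MUrn_nonneg A i1) with h | h
      · exfalso; rw [hpA i1, ← h] at hi1; norm_num at hi1
      · exact h
    calc (0:ℝ) < MUrn A i1 := h1
      _ ≤ S := Finset.single_le_sum (fun i _ => MUrn_nonneg A i) (Finset.mem_univ i1)
  have hlog := Real.log_le_log hq0pos (hq_le k0)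
  rw [hsup, hSsum]
  have hexp : Real.log ((c*S)^2) = 2 * Real.log c + 2 * Real.log S := by
    rw [Real.log_pow, Real.log_mul (ne_of_gt hc0) (ne_of_gt hSpos)]
    push_cast
    ring
  have hc2 : Real.log (c^2) = 2 * Real.log c := by
    rw [Real.log_pow]; push_cast; ring
  rw [hexp] at hlog
  rw [hc2]
  linarith

theorem MU_aux (d : ℕ) (hd : 1 ≤ d)
    (U : Matrix (Fin d) (Fin d) ℂ) (hU : U ∈ Matrix.unitaryGroup (Fin d) ℂ)
    (c : ℝ)
    (hc : IsGreatest (Set.range fun ki : Fin d × Fin d => Complex.abs (U ki.1 ki.2)) c)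
    (α β : ℝ≥0∞) (hα : (2 : ℝ≥0∞)⁻¹ ≤ α) (hβ : (2 : ℝ≥0∞)⁻¹ ≤ β)
    (hdual : 1 / α + 1 / β = 2)
    (ρ : Matrix (Fin d) (Fin d) ℂ) (hρ : ρ.PosSemidef) (htr : ρ.trace = 1)
    (hα1 : α ≤ 1) :
    renyiEntropy α (fun i => (ρ i i).re) +
      renyiEntropy β (fun k => ((U * ρ * Uᴴ) k k).re) ≥ - Real.log (c ^ 2) := by
  -- basic facts about c
  have hcb : ∀ k i, Complex.abs (U k i) ≤ c := fun k i => hc.2 ⟨(k, i), rfl⟩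
  have hcnn : 0 ≤ c := by
    obtain ⟨ki, hki⟩ := hc.1
    rw [← hki]; positivity
  have hc0 : 0 < c := by
    rcases eq_or_lt_of_le hcnn with h0 | h0
    · exfalso
      have hUzero : U = 0 := by
        ext k i
        have h1 : Complex.abs (U k i) ≤ 0 := by rw [h0]; exact hcb k i
        have h2 : Complex.abs (U k i) = 0 := le_antisymm h1 (Complex.abs.nonneg _)
        rw [Matrix.zero_apply]
        simpa using h2
      have h1 : Uᴴ * U = 1 := Matrix.mem_unitaryGroup_iff'.mp hU
      rw [hUzero, Matrix.conjTranspose_zero, Matrix.zero_mul] at h1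
      have h2 := congrFun (congrFun h1 ⟨0, hd⟩) ⟨0, hd⟩
      rw [Matrix.zero_apply, Matrix.one_apply_eq] at h2
      exact zero_ne_one h2
    · exact h0
  -- probability facts
  obtain ⟨hp, hp1⟩ := MU_prob ρ hρ htr
  have hρ' : (U * ρ * Uᴴ).PosSemidef := hρ.mul_mul_conjTranspose_same U
  have htr' : (U * ρ * Uᴴ).trace = 1 := by
    rw [Matrix.trace_mul_cycle,
      show Uᴴ * U = 1 from Matrix.mem_unitaryGroup_iff'.mp hU, Matrix.one_mul, htr]
  obtain ⟨hq, hq1⟩ := MU_prob _ hρ' htr'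
  -- case analysis on α
  by_cases hαone : α = 1
  · -- Shannon case
    have hβone : β = 1 := by
      rw [hαone] at hdual
      norm_num at hdual
      have h2 : (1:ℝ≥0∞) + β⁻¹ = 1 + 1 := by
        rw [hdual]; exact one_add_one_eq_two.symm
      have h3 := (ENNReal.add_right_inj (by norm_num)).mp h2
      rwa [ENNReal.inv_eq_one] at h3
    rw [hαone, hβone]
    rw [renyiEntropy, renyiEntropy]
    rw [if_neg (by norm_num), if_pos rfl, if_neg (by norm_num), if_pos rfl]
    rw [ge_iff_le]
    exact MU_shannon U hU hc0 hcb ρ hρ hp hq hp1 hq1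
  by_cases hαhalf : α = 2⁻¹
  · -- endpoint case
    have hβtop : β = ⊤ := by
      rw [hαhalf] at hdual
      rw [one_div, inv_inv] at hdual
      have h2 : (2:ℝ≥0∞) + 1/β = 2 + 0 := by rw [add_zero, hdual]
      have := (ENNReal.add_right_inj (by norm_num)).mp h2
      rwa [one_div, ENNReal.inv_eq_zero] at this
    rw [hαhalf, hβtop]
    rw [renyiEntropy, renyiEntropy]
    rw [if_neg (by norm_num), if_neg (by norm_num), if_pos rfl]
    rw [ge_iff_le]
    have htoR : ((2:ℝ≥0∞)⁻¹).toReal = (2:ℝ)⁻¹ := by simp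
    rw [htoR]
    rw [show (1 - (2:ℝ)⁻¹)⁻¹ = 2 by norm_num]
    exact MU_endpoint hd U hU hc0 hcb ρ hρ hp hq hp1 hq1
  · -- mid case
    have hαne0 : α ≠ 0 := by
      intro h; rw [h] at hα; simp at hα
    have hαnetop : α ≠ ⊤ := fun h => by rw [h] at hα1; exact absurd hα1 (by simp)
    have hαlt : (2:ℝ≥0∞)⁻¹ < α := lt_of_le_of_ne hα (Ne.symm hαhalf)
    have hαlt1 : α < 1 := lt_of_le_of_ne hα1 hαone
    set a : ℝ := α.toReal with ha_def
    have ha_lb : (2:ℝ)⁻¹ < a := by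
      rw [ha_def, show (2:ℝ)⁻¹ = ((2:ℝ≥0∞)⁻¹).toReal by simp]
      exact (ENNReal.toReal_lt_toReal (by norm_num) hαnetop).mpr hαlt
    have ha_ub : a < 1 := by
      rw [ha_def, show (1:ℝ) = (1:ℝ≥0∞).toReal by simp]
      exact (ENNReal.toReal_lt_toReal hαnetop (by norm_num)).mpr hαlt1
    have ha_pos : 0 < a := by linarith [ha_lb]
    set θ : ℝ := 2 - 1/a with hθ_def
    have hθ0 : 0 < θ := by
      rw [hθ_def]
      have : 1/a < 2 := by rw [div_lt_iff₀ ha_pos]; nlinarith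
      linarith
    have hθ1 : θ < 1 := by
      rw [hθ_def]
      have : 1 < 1/a := by rw [lt_div_iff₀ ha_pos]; linarith
      linarith
    have hinv2θ : 1/(2-θ) = a := by
      rw [hθ_def]
      rw [show (2:ℝ) - (2 - 1/a) = 1/a by ring]
      rw [one_div_one_div]
    -- β computations
    have hβinv : 1/β = 2 - 1/α := by
      apply ENNReal.eq_sub_of_add_eq
      · rw [one_div]; exact ENNReal.inv_ne_top.mpr hαne0
      · rw [add_comm] at hdual; exact hdual
    have hαinvlt : 1/α < 2 := by
      rw [one_div]
      calc α⁻¹ < (2⁻¹)⁻¹ := ENNReal.inv_lt_inv.mpr hαlt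
        _ = 2 := by simp
    have hβinv_ne0 : 1/β ≠ 0 := by
      rw [hβinv]
      exact ne_of_gt (tsub_pos_iff_lt.mpr hαinvlt)
    have hβnetop : β ≠ ⊤ := by
      intro h; rw [h] at hβinv_ne0; simp at hβinv_ne0
    have hβtoReal : β.toReal = 1/θ := by
      have h1 : (1/β).toReal = θ := by
        rw [hβinv, ENNReal.toReal_sub_of_le (le_of_lt hαinvlt) (by norm_num)]
        rw [one_div, ENNReal.toReal_inv]
        rw [hθ_def]
        norm_num
        exact ha_def.symm
      have h2 : β.toReal = ((1/β)⁻¹).toReal := by rw [one_div, inv_inv]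
      rw [h2, ENNReal.toReal_inv, h1, one_div]
    have hβne1 : β ≠ 1 := by
      intro h
      rw [h, ENNReal.toReal_one] at hβtoReal
      rw [eq_div_iff (ne_of_gt hθ0), one_mul] at hβtoReal
      linarith
    -- assemble
    rw [renyiEntropy, renyiEntropy]
    rw [if_neg hαnetop, if_neg hαone, if_neg hβnetop, if_neg hβne1]
    rw [ge_iff_le, ← ha_def, hβtoReal]
    rw [show a = 1/(2-θ) from hinv2θ.symm]
    exact MU_mid U hU hc0 hcb hθ0 hθ1 ρ hρ hp hq hp1 hq1

/-- Maassen–Uffink uncertainty relation: for any unitary `U` with maximal entry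
modulus `c`, any dual pair `(α, β)` (i.e. `α, β ∈ [1/2, ∞]` with `1/α + 1/β = 2`)
and any density matrix `ρ`, one has `H_α(p^ρ) + H_β(q^ρ) ≥ -log c²`. -/
theorem maassen_uffink (d : ℕ) (hd : 1 ≤ d)
    (U : Matrix (Fin d) (Fin d) ℂ) (hU : U ∈ Matrix.unitaryGroup (Fin d) ℂ)
    (c : ℝ)
    (hc : IsGreatest (Set.range fun ki : Fin d × Fin d => ‖U ki.1 ki.2‖) c)
    (α β : ℝ≥0∞) (hα : (2 : ℝ≥0∞)⁻¹ ≤ α) (hβ : (2 : ℝ≥0∞)⁻¹ ≤ β)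
    (hdual : 1 / α + 1 / β = 2)
    (ρ : Matrix (Fin d) (Fin d) ℂ) (hρ : ρ.PosSemidef) (htr : ρ.trace = 1) :
    renyiEntropy α (fun i => (ρ i i).re) +
      renyiEntropy β (fun k => ((U * ρ * Uᴴ) k k).re) ≥ - Real.log (c ^ 2) := by
  by_cases hα1 : α ≤ 1
  · exact MU_aux d hd U hU c hc α β hα hβ hdual ρ hρ htr hα1
  · push_neg at hα1
    have hαne0 : α ≠ 0 := by
      intro h; rw [h] at hα1; exact absurd hα1 (by simp)
    have hβ1 : β ≤ 1 := by
      have h1 : 1/α < 1 := by rw [one_div]; exact ENNReal.inv_lt_one.mpr hα1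
      have hβinv : 1/β = 2 - 1/α := by
        apply ENNReal.eq_sub_of_add_eq
        · rw [one_div]; exact ENNReal.inv_ne_top.mpr hαne0
        · rw [add_comm] at hdual; exact hdual
      have h2 : 1 < 1/β := by
        rw [hβinv, lt_tsub_iff_right]
        calc 1 + 1/α < 1 + 1 := ENNReal.add_lt_add_left (by norm_num) h1
          _ = 2 := one_add_one_eq_two
      rw [one_div] at h2
      exact (ENNReal.one_lt_inv.mp h2).le
    have hU' : Uᴴ ∈ Matrix.unitaryGroup (Fin d) ℂ := by
      rw [← Matrix.star_eq_conjTranspose]; exact Unitary.star_mem hU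
    have hseteq : (Set.range fun ki : Fin d × Fin d => Complex.abs (Uᴴ ki.1 ki.2))
        = (Set.range fun ki : Fin d × Fin d => Complex.abs (U ki.1 ki.2)) := by
      ext x
      constructor
      · rintro ⟨⟨k, i⟩, rfl⟩
        refine ⟨(i, k), ?_⟩
        simp [Matrix.conjTranspose_apply, Complex.abs_conj]
      · rintro ⟨⟨k, i⟩, rfl⟩
        refine ⟨(i, k), ?_⟩
        simp [Matrix.conjTranspose_apply, Complex.abs_conj]
    have hc' : IsGreatest (Set.range fun ki : Fin d × Fin d => Complex.abs (Uᴴ ki.1 ki.2)) c := by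
      rw [hseteq]; exact hc
    have hUU : Uᴴ * U = 1 := Matrix.mem_unitaryGroup_iff'.mp hU
    have hρ' : (U * ρ * Uᴴ).PosSemidef := hρ.mul_mul_conjTranspose_same U
    have htr' : (U * ρ * Uᴴ).trace = 1 := by
      rw [Matrix.trace_mul_cycle, hUU, Matrix.one_mul, htr]
    have hdual' : 1/β + 1/α = 2 := by rw [add_comm]; exact hdual
    have key := MU_aux d hd Uᴴ hU' c hc' β α hβ hα hdual' (U * ρ * Uᴴ) hρ' htr' hβ1
    have hmat : Uᴴ * (U * ρ * Uᴴ) * Uᴴᴴ = ρ := by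
      rw [Matrix.conjTranspose_conjTranspose]
      calc Uᴴ * (U * ρ * Uᴴ) * U = Uᴴ * U * (ρ * (Uᴴ * U)) := by
            simp only [Matrix.mul_assoc]
        _ = ρ := by rw [hUU, Matrix.mul_one, Matrix.one_mul]
    rw [hmat] at key
    rw [ge_iff_le, add_comm]
    exact key
end

section
/- Let U be a unitary d×d complex matrix with c = max_{k,i} |U_{ki}|, and let ψ ∈ ℂ^d be a unit vector with supports s_X = {i : ψ_i ≠ 0} and s_Y = {k : (Uψ)_k ≠ 0} such that |ψ_i|² = 1/|s_X| for all i ∈ s_X, |(Uψ)_k|² = 1/|s_Y| for all k ∈ s_Y, and |s_X| · |s_Y| = 1/c². Then for every dual pair (α, β) (α, β ∈ [1/2, ∞], 1/α + 1/β = 2) one has H_α(p^ψ) + H_β(q^ψ) = -log(c²); in fact H_α(p^ψ) = log|s_X| and H_β(q^ψ) = log|s_Y|. -/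
open Matrix
open scoped ENNReal

lemma renyi_flat {ι : Type} [Fintype ι] (p : ι → ℝ) (hp : ∀ j, 0 ≤ p j)
    (hsum : ∑ j, p j = 1)
    (hflat : ∀ j, p j ≠ 0 → p j = 1 / ({j' | p j' ≠ 0}.ncard : ℝ))
    (α : ℝ≥0∞) (hα : (2:ℝ≥0∞)⁻¹ ≤ α) :
    renyiEntropy α p = Real.log ({j' | p j' ≠ 0}.ncard : ℝ) := by
  classical
  set n := ({j' | p j' ≠ 0}.ncard : ℝ) with hn
  have hne : ∃ j, p j ≠ 0 := by
    by_contra h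
    push_neg at h
    simp [h] at hsum
  obtain ⟨j0, hj0⟩ := hne
  have hnpos : 0 < {j' | p j' ≠ 0}.ncard := (Set.ncard_pos (Set.toFinite _)).mpr ⟨j0, hj0⟩
  have hnR : (0:ℝ) < n := by rw [hn]; exact_mod_cast hnpos
  have hfiltercard : (Finset.univ.filter fun j => p j ≠ 0).card = {j' | p j' ≠ 0}.ncard := by
    rw [Set.ncard_eq_toFinset_card']
    simp [Set.toFinset_setOf]
  rcases eq_or_ne α ⊤ with htop | htop
  · rw [renyiEntropy, if_pos htop]
    have hub : ∀ x ∈ Set.range p, x ≤ 1/n := by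
      rintro _ ⟨j, rfl⟩
      by_cases h : p j = 0
      · rw [h]; positivity
      · rw [hflat j h]
    have hmem : (1/n:ℝ) ∈ Set.range p := ⟨j0, hflat j0 hj0⟩
    have hs : sSup (Set.range p) = 1/n :=
      le_antisymm (csSup_le ⟨p j0, ⟨j0, rfl⟩⟩ hub)
        (le_csSup (Set.Finite.bddAbove (Set.finite_range p)) hmem)
    rw [hs, one_div, Real.log_inv, neg_neg]
  rcases eq_or_ne α 1 with hone | hone
  · rw [renyiEntropy, if_neg htop, if_pos hone]
    have hsplit : ∑ j, p j * Real.log (p j)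
        = ∑ j ∈ Finset.univ.filter (fun j => p j ≠ 0), p j * Real.log (p j)
          + ∑ j ∈ Finset.univ.filter (fun j => ¬ p j ≠ 0), p j * Real.log (p j) :=
      (Finset.sum_filter_add_sum_filter_not _ _ _).symm
    rw [hsplit]
    have h2 : ∑ j ∈ Finset.univ.filter (fun j => ¬ p j ≠ 0), p j * Real.log (p j) = 0 := by
      apply Finset.sum_eq_zero
      intro j hj
      simp only [Finset.mem_filter, not_not] at hj
      rw [hj.2]; ring
    have h1 : ∑ j ∈ Finset.univ.filter (fun j => p j ≠ 0), p j * Real.log (p j)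
        = n * ((1/n) * Real.log (1/n)) := by
      rw [Finset.sum_congr rfl (fun j hj => by
        simp only [Finset.mem_filter] at hj
        rw [hflat j hj.2]), Finset.sum_const, hfiltercard, nsmul_eq_mul, hn]
    rw [h1, h2, add_zero]
    field_simp
    rw [one_div, Real.log_inv, neg_neg]
  · rw [renyiEntropy, if_neg htop, if_neg hone]
    set a := α.toReal with ha
    have ha0 : 0 < a := by
      have h2 : ((2:ℝ≥0∞)⁻¹).toReal ≤ a := ENNReal.toReal_mono htop hα
      have : ((2:ℝ≥0∞)⁻¹).toReal = 1/2 := by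
        simp [ENNReal.toReal_inv]
      linarith [this ▸ h2]
    have ha1 : a ≠ 1 := fun h => hone ((ENNReal.toReal_eq_one_iff α).mp h)
    have hsum' : ∑ j, p j ^ a = n * (1/n) ^ a := by
      rw [← Finset.sum_filter_add_sum_filter_not Finset.univ (fun j => p j ≠ 0)]
      have h2 : ∑ j ∈ Finset.univ.filter (fun j => ¬ p j ≠ 0), p j ^ a = 0 := by
        apply Finset.sum_eq_zero
        intro j hj
        simp only [Finset.mem_filter, not_not] at hj
        rw [hj.2, Real.zero_rpow ha0.ne']
      have h1 : ∑ j ∈ Finset.univ.filter (fun j => p j ≠ 0), p j ^ a = n * (1/n) ^ a := by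
        rw [Finset.sum_congr rfl (fun j hj => by
          simp only [Finset.mem_filter] at hj
          rw [hflat j hj.2]), Finset.sum_const, hfiltercard, nsmul_eq_mul, hn]
      rw [h1, h2, add_zero]
    rw [hsum', Real.log_mul hnR.ne' (Real.rpow_pos_of_pos (by positivity) a).ne',
      Real.log_rpow (by positivity), one_div, Real.log_inv]
    have hcalc : Real.log n + a * -Real.log n = (1-a) * Real.log n := by ring
    rw [hcalc, inv_mul_cancel_left₀ (sub_ne_zero.mpr (fun h => ha1 h.symm))]

/-- A unit vector whose amplitudes are flat on the supports `s_X`, `s_Y` and whose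
support sizes satisfy `|s_X|·|s_Y| = 1/c²` saturates the Maassen–Uffink bound for
every dual pair `(α, β)`; in fact `H_α(p^ψ) = log |s_X|` and `H_β(q^ψ) = log |s_Y|`. -/
theorem flat_states_saturate (d : ℕ) (hd : 1 ≤ d)
    (U : Matrix (Fin d) (Fin d) ℂ) (hU : U ∈ Matrix.unitaryGroup (Fin d) ℂ)
    (c : ℝ)
    (hc : IsGreatest (Set.range fun ki : Fin d × Fin d => ‖U ki.1 ki.2‖) c)
    (ψ : Fin d → ℂ) (hψ : ∑ i, ‖ψ i‖ ^ 2 = 1)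
    (hflatX : ∀ i, ψ i ≠ 0 →
        ‖ψ i‖ ^ 2 = 1 / ({i' | ψ i' ≠ 0}.ncard : ℝ))
    (hflatY : ∀ k, U.mulVec ψ k ≠ 0 →
        ‖U.mulVec ψ k‖ ^ 2 = 1 / ({k' | U.mulVec ψ k' ≠ 0}.ncard : ℝ))
    (hcard : (({i' | ψ i' ≠ 0}.ncard : ℝ) * ({k' | U.mulVec ψ k' ≠ 0}.ncard : ℝ))
        = 1 / c ^ 2) :
    ∀ α β : ℝ≥0∞, (2 : ℝ≥0∞)⁻¹ ≤ α → (2 : ℝ≥0∞)⁻¹ ≤ β → 1 / α + 1 / β = 2 →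
      renyiEntropy α (fun i => ‖ψ i‖ ^ 2)
          = Real.log ({i' | ψ i' ≠ 0}.ncard : ℝ) ∧
      renyiEntropy β (fun k => ‖U.mulVec ψ k‖ ^ 2)
          = Real.log ({k' | U.mulVec ψ k' ≠ 0}.ncard : ℝ) ∧
      renyiEntropy α (fun i => ‖ψ i‖ ^ 2) +
          renyiEntropy β (fun k => ‖U.mulVec ψ k‖ ^ 2)
          = - Real.log (c ^ 2) := by
  intro α β hα hβ _
  -- unit vector sum for the output distribution
  have hcast : ∀ w : Fin d → ℂ, ((∑ k, ‖w k‖ ^ 2 : ℝ) : ℂ) = star w ⬝ᵥ w := by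
    intro w
    rw [dotProduct]
    push_cast
    refine Finset.sum_congr rfl fun k _ => ?_
    have : (star w) k = (starRingEnd ℂ) (w k) := rfl
    rw [this, mul_comm, Complex.mul_conj, Complex.normSq_eq_norm_sq]
    push_cast
    ring
  have hUU : Uᴴ * U = 1 := by
    rw [← Matrix.star_eq_conjTranspose]; exact hU.1
  have key : star (U.mulVec ψ) ⬝ᵥ U.mulVec ψ = star ψ ⬝ᵥ ψ := by
    rw [Matrix.star_mulVec, Matrix.dotProduct_mulVec, Matrix.vecMul_vecMul, hUU,
      Matrix.vecMul_one]
  have hq : ∑ k, ‖U.mulVec ψ k‖ ^ 2 = 1 := by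
    have h1 := hcast (U.mulVec ψ)
    rw [key, ← hcast ψ, hψ] at h1
    exact_mod_cast h1
  -- supports
  have hsetX : {i' | (fun i => ‖ψ i‖ ^ 2) i' ≠ 0} = {i' | ψ i' ≠ 0} := by
    ext i; simp
  have hsetY : {k' | (fun k => ‖U.mulVec ψ k‖ ^ 2) k' ≠ 0}
      = {k' | U.mulVec ψ k' ≠ 0} := by
    ext k; simp
  have hX : renyiEntropy α (fun i => ‖ψ i‖ ^ 2)
      = Real.log ({i' | ψ i' ≠ 0}.ncard : ℝ) := by
    have h := renyi_flat (fun i => ‖ψ i‖ ^ 2) (fun j => by positivity) hψ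
      (fun i hi => by rw [hsetX]; exact hflatX i (by simpa using hi)) α hα
    rwa [hsetX] at h
  have hY : renyiEntropy β (fun k => ‖U.mulVec ψ k‖ ^ 2)
      = Real.log ({k' | U.mulVec ψ k' ≠ 0}.ncard : ℝ) := by
    have h := renyi_flat (fun k => ‖U.mulVec ψ k‖ ^ 2) (fun j => by positivity) hq
      (fun k hk => by rw [hsetY]; exact hflatY k (by simpa using hk)) β hβ
    rwa [hsetY] at h
  refine ⟨hX, hY, ?_⟩
  have hneX : ∃ i, ψ i ≠ 0 := by
    by_contra h
    push_neg at h
    simp [h] at hψ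
  have hneY : ∃ k, U.mulVec ψ k ≠ 0 := by
    by_contra h
    push_neg at h
    simp [h] at hq
  obtain ⟨i0, hi0⟩ := hneX
  obtain ⟨k0, hk0⟩ := hneY
  have hnX : (0:ℝ) < ({i' | ψ i' ≠ 0}.ncard : ℝ) := by
    exact_mod_cast (Set.ncard_pos (Set.toFinite _)).mpr ⟨i0, hi0⟩
  have hnY : (0:ℝ) < ({k' | U.mulVec ψ k' ≠ 0}.ncard : ℝ) := by
    exact_mod_cast (Set.ncard_pos (Set.toFinite _)).mpr ⟨k0, hk0⟩
  rw [hX, hY, ← Real.log_mul hnX.ne' hnY.ne', hcard, one_div, Real.log_inv]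
end

section
/- Let 1/2 < α ≤ 1 and β = α/(2α-1) (so 1/α + 1/β = 2). Let U be a unitary d×d complex matrix with c = max_{k,i} |U_{ki}| and let φ ∈ ℝ^d be a unit vector with φ_i ≥ 0 for all i such that the vector φ̂ = Uφ also has nonnegative real entries. Set λ = (‖φ^α‖₂ · ‖φ̂^β‖₂)^{-1}, where φ^α denotes the componentwise power and ‖·‖₂ the Euclidean norm, and define for complex z the function F(z) = c^{1-z} · λ^z · ∑_{i: φ_i > 0} ∑_{k: φ̂_k > 0} φ_i^{αz} · U_{ki} · φ̂_k^{βz}. Then |F(z)| ≤ 1 for every z ∈ ℂ with 1 ≤ Re(z) ≤ 2. -/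
open Matrix

lemma unitary_normSq_sum {d : ℕ} (U : Matrix (Fin d) (Fin d) ℂ)
    (hU : U ∈ Matrix.unitaryGroup (Fin d) ℂ) (v : Fin d → ℂ) :
    ∑ k, Complex.normSq (U.mulVec v k) = ∑ i, Complex.normSq (v i) := by
  have h : star (U.mulVec v) ⬝ᵥ (U.mulVec v) = star v ⬝ᵥ v := by
    rw [Matrix.star_mulVec, Matrix.dotProduct_mulVec, Matrix.vecMul_vecMul,
      ← Matrix.star_eq_conjTranspose, hU.1, Matrix.vecMul_one]
  have h2 : ∀ w : Fin d → ℂ, star w ⬝ᵥ w = ((∑ i, Complex.normSq (w i) : ℝ) : ℂ) := by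
    intro w
    simp [dotProduct, Complex.normSq_eq_conj_mul_self]
  rw [h2, h2] at h
  exact_mod_cast h

set_option maxHeartbeats 1000000 in
/-- The "magic function" `F` built from a unit vector `φ` with nonnegative entries,
whose image `Uφ` also has nonnegative (real) entries, is bounded in modulus by `1`
on the strip `1 ≤ Re z ≤ 2`. Here `β = α/(2α-1)` is the dual parameter of
`α ∈ (1/2, 1]`, `c` is the maximal entry modulus of the unitary `U`, and
`λ = (‖φ^α‖₂ ‖φ̂^β‖₂)⁻¹`. -/
theorem magic_function_bounded (d : ℕ) (hd : 1 ≤ d)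
    (α β : ℝ) (hα1 : 1 / 2 < α) (hα2 : α ≤ 1) (hβ : β = α / (2 * α - 1))
    (U : Matrix (Fin d) (Fin d) ℂ) (hU : U ∈ Matrix.unitaryGroup (Fin d) ℂ)
    (c : ℝ)
    (hc : IsGreatest (Set.range fun ki : Fin d × Fin d => ‖U ki.1 ki.2‖) c)
    (φ : Fin d → ℝ) (hφnorm : ∑ i, φ i ^ 2 = 1) (hφnonneg : ∀ i, 0 ≤ φ i)
    (φhat : Fin d → ℝ) (hφhatnonneg : ∀ k, 0 ≤ φhat k)
    (hφhat : ∀ k, U.mulVec (fun i => (φ i : ℂ)) k = (φhat k : ℂ))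
    (lam : ℝ)
    (hlam : lam = (Real.sqrt (∑ i, (φ i ^ α) ^ 2) *
        Real.sqrt (∑ k, (φhat k ^ β) ^ 2))⁻¹)
    (F : ℂ → ℂ)
    (hF : ∀ z : ℂ, F z = (c : ℂ) ^ (1 - z) * (lam : ℂ) ^ z *
        ∑ i ∈ Finset.univ.filter (fun i => 0 < φ i),
          ∑ k ∈ Finset.univ.filter (fun k => 0 < φhat k),
            (φ i : ℂ) ^ ((α : ℂ) * z) * U k i * (φhat k : ℂ) ^ ((β : ℂ) * z)) :
    ∀ z : ℂ, 1 ≤ z.re → z.re ≤ 2 → ‖F z‖ ≤ 1 := by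
  -- basic positivity facts
  have hα0 : (0:ℝ) < α := lt_trans (by norm_num) hα1
  have h2α1 : (0:ℝ) < 2*α - 1 := by linarith
  have hβ0 : (0:ℝ) < β := hβ ▸ div_pos hα0 h2α1
  -- entries of φ and φhat are in [0,1]
  have hφ1 : ∀ i, φ i ≤ 1 := by
    intro i
    have h1 : φ i ^ 2 ≤ 1 := hφnorm ▸ Finset.single_le_sum
      (fun j _ => sq_nonneg (φ j)) (Finset.mem_univ i)
    nlinarith [hφnonneg i]
  have hφhatnorm : ∑ k, φhat k ^ 2 = 1 := by
    have h := unitary_normSq_sum U hU (fun i => (φ i : ℂ))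
    simp only [hφhat, Complex.normSq_ofReal, ← sq] at h
    rw [h, hφnorm]
  have hφhat1 : ∀ k, φhat k ≤ 1 := by
    intro k
    have h1 : φhat k ^ 2 ≤ 1 := hφhatnorm ▸ Finset.single_le_sum
      (fun j _ => sq_nonneg (φhat j)) (Finset.mem_univ k)
    nlinarith [hφhatnonneg k]
  obtain ⟨i0, hi0⟩ : ∃ i, 0 < φ i := by
    by_contra h
    push_neg at h
    have : ∀ i, φ i = 0 := fun i => le_antisymm (h i) (hφnonneg i)
    simp [this] at hφnorm
  obtain ⟨k0, hk0⟩ : ∃ k, 0 < φhat k := by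
    by_contra h
    push_neg at h
    have : ∀ k, φhat k = 0 := fun k => le_antisymm (h k) (hφhatnonneg k)
    simp [this] at hφhatnorm
  -- c is positive
  have hcle : ∀ k i, ‖U k i‖ ≤ c := fun k i => hc.2 ⟨(k,i), rfl⟩
  have hc0 : 0 < c := by
    obtain ⟨i1, hi1⟩ : ∃ i, U k0 i ≠ 0 := by
      by_contra h
      push_neg at h
      have h0 : U.mulVec (fun i => (φ i : ℂ)) k0 = 0 := by
        simp [Matrix.mulVec, dotProduct, h]
      rw [hφhat k0] at h0
      exact hk0.ne' (by exact_mod_cast h0)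
    exact lt_of_lt_of_le (norm_pos_iff.mpr hi1) (hcle k0 i1)
  -- the norms sA, sB
  set sA : ℝ := ∑ i, (φ i ^ α) ^ 2 with hsA
  set sB : ℝ := ∑ k, (φhat k ^ β) ^ 2 with hsB
  have hsA0 : 0 < sA := Finset.sum_pos' (fun i _ => sq_nonneg _)
    ⟨i0, Finset.mem_univ i0, by positivity⟩
  have hsB0 : 0 < sB := Finset.sum_pos' (fun k _ => sq_nonneg _)
    ⟨k0, Finset.mem_univ k0, by positivity⟩
  have hA0 : 0 < Real.sqrt sA := Real.sqrt_pos.mpr hsA0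
  have hB0 : 0 < Real.sqrt sB := Real.sqrt_pos.mpr hsB0
  have hlam0 : 0 < lam := by rw [hlam]; positivity
  -- notation for the index sets and the double sum
  set I : Finset (Fin d) := Finset.univ.filter (fun i => 0 < φ i) with hI
  set K : Finset (Fin d) := Finset.univ.filter (fun k => 0 < φhat k) with hK
  set S : ℂ → ℂ := fun w => ∑ i ∈ I, ∑ k ∈ K,
      (φ i : ℂ) ^ ((α : ℂ) * w) * U k i * (φhat k : ℂ) ^ ((β : ℂ) * w) with hS
  -- |F w| decomposition
  have hFabs : ∀ w : ℂ, ‖F w‖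
      = c ^ (1 - w.re) * lam ^ w.re * ‖S w‖ := by
    intro w
    rw [hF w, norm_mul, norm_mul,
      Complex.norm_cpow_eq_rpow_re_of_pos hc0, Complex.norm_cpow_eq_rpow_re_of_pos hlam0,
      Complex.sub_re, Complex.one_re]
  -- modulus of a term
  have habs : ∀ (w : ℂ), ∀ i ∈ I, ∀ k ∈ K,
      ‖(φ i : ℂ) ^ ((α : ℂ) * w) * U k i * (φhat k : ℂ) ^ ((β : ℂ) * w)‖
        = φ i ^ (α * w.re) * ‖U k i‖ * φhat k ^ (β * w.re) := by
    intro w i hi k hk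
    have hφi : 0 < φ i := (Finset.mem_filter.mp hi).2
    have hφk : 0 < φhat k := (Finset.mem_filter.mp hk).2
    rw [norm_mul, norm_mul, Complex.norm_cpow_eq_rpow_re_of_pos hφi,
      Complex.norm_cpow_eq_rpow_re_of_pos hφk]
    simp [Complex.mul_re]
  -- generic bound on |S w|
  have hSabs : ∀ w : ℂ, ‖S w‖ ≤ ∑ i ∈ I, ∑ k ∈ K,
      φ i ^ (α * w.re) * ‖U k i‖ * φhat k ^ (β * w.re) := by
    intro w
    refine (norm_sum_le _ _).trans (Finset.sum_le_sum fun i hi => ?_)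
    refine (norm_sum_le _ _).trans (le_of_eq ?_)
    exact Finset.sum_congr rfl fun k hk => habs w i hi k hk
  -- sums over filters coincide with full sums
  have hfiltA : ∑ i ∈ I, (φ i ^ α) ^ 2 = sA := by
    rw [hsA, hI]
    refine Finset.sum_filter_of_ne fun i _ h => ?_
    by_contra hpos
    push_neg at hpos
    have : φ i = 0 := le_antisymm hpos (hφnonneg i)
    rw [this, Real.zero_rpow (ne_of_gt hα0)] at h
    simp at h
  have hfiltB : ∑ k ∈ K, (φhat k ^ β) ^ 2 = sB := by
    rw [hsB, hK]
    refine Finset.sum_filter_of_ne fun k _ h => ?_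
    by_contra hpos
    push_neg at hpos
    have : φhat k = 0 := le_antisymm hpos (hφhatnonneg k)
    rw [this, Real.zero_rpow (ne_of_gt hβ0)] at h
    simp at h
  -- the square of sqrt product
  have hABsq : (Real.sqrt sA * Real.sqrt sB) ^ 2 = sA * sB := by
    rw [mul_pow, Real.sq_sqrt hsA0.le, Real.sq_sqrt hsB0.le]
  -- edge bound at Re = 2
  have hedge2 : ∀ w : ℂ, w.re = 2 → ‖F w‖ ≤ 1 := by
    intro w hw
    rw [hFabs w, hw]
    have h1 : ‖S w‖ ≤ c * (sA * sB) := by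
      refine (hSabs w).trans ?_
      rw [hw]
      calc ∑ i ∈ I, ∑ k ∈ K, φ i ^ (α * 2) * ‖U k i‖ * φhat k ^ (β * 2)
          ≤ ∑ i ∈ I, ∑ k ∈ K, c * ((φ i ^ α) ^ 2 * (φhat k ^ β) ^ 2) := by
            refine Finset.sum_le_sum fun i hi => Finset.sum_le_sum fun k hk => ?_
            have hφi : 0 < φ i := (Finset.mem_filter.mp hi).2
            have hφk : 0 < φhat k := (Finset.mem_filter.mp hk).2
            have e1 : φ i ^ (α * 2) = (φ i ^ α) ^ 2 := by
              rw [Real.rpow_mul (hφnonneg i), Real.rpow_two]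
            have e2 : φhat k ^ (β * 2) = (φhat k ^ β) ^ 2 := by
              rw [Real.rpow_mul (hφhatnonneg k), Real.rpow_two]
            rw [e1, e2]
            have h2 : (φ i ^ α) ^ 2 * ‖U k i‖ ≤ (φ i ^ α) ^ 2 * c :=
              mul_le_mul_of_nonneg_left (hcle k i) (by positivity)
            nlinarith [sq_nonneg (φhat k ^ β), sq_nonneg (φ i ^ α)]
        _ = c * ((∑ i ∈ I, (φ i ^ α) ^ 2) * (∑ k ∈ K, (φhat k ^ β) ^ 2)) := by
            rw [Finset.sum_mul_sum, Finset.mul_sum]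
            exact Finset.sum_congr rfl fun i _ => by rw [Finset.mul_sum]
        _ = c * (sA * sB) := by rw [hfiltA, hfiltB]
    have e3 : c ^ (1 - (2:ℝ)) = c⁻¹ := by
      norm_num
      exact Real.rpow_neg_one c
    have e4 : lam ^ (2:ℝ) = (sA * sB)⁻¹ := by
      rw [Real.rpow_two, hlam, inv_pow, hABsq]
    rw [e3, e4]
    calc c⁻¹ * (sA * sB)⁻¹ * ‖S w‖
        ≤ c⁻¹ * (sA * sB)⁻¹ * (c * (sA * sB)) :=
          mul_le_mul_of_nonneg_left h1 (by positivity)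
      _ = 1 := by field_simp
  -- edge bound at Re = 1
  have hedge1 : ∀ w : ℂ, w.re = 1 → ‖F w‖ ≤ 1 := by
    intro w hw
    rw [hFabs w, hw]
    rw [show (1:ℝ) - 1 = 0 by norm_num, Real.rpow_zero, Real.rpow_one, one_mul]
    set x : Fin d → ℂ := fun i => if 0 < φ i then (φ i : ℂ) ^ ((α : ℂ) * w) else 0 with hx
    have hSw : S w = ∑ k ∈ K, (U.mulVec x) k * (φhat k : ℂ) ^ ((β : ℂ) * w) := by
      rw [hS]
      simp only
      rw [Finset.sum_comm]
      refine Finset.sum_congr rfl fun k hk => ?_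
      rw [← Finset.sum_mul]
      congr 1
      rw [show U.mulVec x k = ∑ i, U k i * x i from rfl]
      simp only [hx, mul_ite, mul_zero]
      rw [← Finset.sum_filter]
      exact Finset.sum_congr rfl fun i _ => mul_comm _ _
    have hxnormSq : ∀ i, Complex.normSq (x i) = if 0 < φ i then (φ i ^ α) ^ 2 else 0 := by
      intro i
      by_cases hi : 0 < φ i
      · simp only [hx, if_pos hi]
        rw [← Complex.sq_norm, Complex.norm_cpow_eq_rpow_re_of_pos hi]
        have e : ((α : ℂ) * w).re = α := by simp [Complex.mul_re, hw]
        rw [e]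
      · simp [hx, if_neg hi]
    have hxsum : ∑ i, Complex.normSq (x i) = sA := by
      simp_rw [hxnormSq]
      rw [← Finset.sum_filter]
      exact hfiltA
    have hUx : ∑ k, (‖U.mulVec x k‖) ^ 2 = sA := by
      simp_rw [Complex.sq_norm]
      rw [unitary_normSq_sum U hU x, hxsum]
    have hSle : ‖S w‖ ≤ Real.sqrt sA * Real.sqrt sB := by
      calc ‖S w‖
          ≤ ∑ k ∈ K, ‖U.mulVec x k‖ * φhat k ^ β := by
            rw [hSw]
            refine (norm_sum_le _ _).trans (Finset.sum_le_sum fun k hk => ?_)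
            have hφk : 0 < φhat k := (Finset.mem_filter.mp hk).2
            rw [norm_mul, Complex.norm_cpow_eq_rpow_re_of_pos hφk]
            have e : ((β : ℂ) * w).re = β := by simp [Complex.mul_re, hw]
            rw [e]
        _ ≤ ∑ k, ‖U.mulVec x k‖ * φhat k ^ β :=
            Finset.sum_le_sum_of_subset_of_nonneg (Finset.filter_subset _ _)
              (fun k _ _ => mul_nonneg (norm_nonneg _) (Real.rpow_nonneg (hφhatnonneg k) _))
        _ ≤ Real.sqrt (∑ k, (‖U.mulVec x k‖) ^ 2) *
              Real.sqrt (∑ k, (φhat k ^ β) ^ 2) :=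
            Real.sum_mul_le_sqrt_mul_sqrt _ _ _
        _ = Real.sqrt sA * Real.sqrt sB := by rw [hUx]
    rw [hlam]
    have h := (div_le_one (by positivity : (0:ℝ) < Real.sqrt sA * Real.sqrt sB)).mpr hSle
    rwa [div_eq_inv_mul] at h
  -- uniform bound on the strip
  set M : ℝ := max 1 c⁻¹ * max lam (lam ^ 2) * ((d:ℝ) * (d:ℝ) * c) with hM
  have hbound : ∀ w : ℂ, 1 ≤ w.re → w.re ≤ 2 → ‖F w‖ ≤ M := by
    intro w h1 h2
    rw [hFabs w]
    have hc1 : c ^ (1 - w.re) ≤ max 1 c⁻¹ := by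
      rcases le_or_gt 1 c with h | h
      · refine le_max_of_le_left ?_
        calc c ^ (1 - w.re) ≤ c ^ (0:ℝ) :=
              Real.rpow_le_rpow_of_exponent_le h (by linarith)
          _ = 1 := Real.rpow_zero c
      · refine le_max_of_le_right ?_
        calc c ^ (1 - w.re) ≤ c ^ (-1:ℝ) :=
              Real.rpow_le_rpow_of_exponent_ge hc0 h.le (by linarith)
          _ = c⁻¹ := Real.rpow_neg_one c
    have hlam1 : lam ^ w.re ≤ max lam (lam ^ 2) := by
      rcases le_or_gt lam 1 with h | h
      · refine le_max_of_le_left ?_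
        calc lam ^ w.re ≤ lam ^ (1:ℝ) :=
              Real.rpow_le_rpow_of_exponent_ge hlam0 h h1
          _ = lam := Real.rpow_one lam
      · refine le_max_of_le_right ?_
        calc lam ^ w.re ≤ lam ^ (2:ℝ) :=
              Real.rpow_le_rpow_of_exponent_le h.le h2
          _ = lam ^ 2 := Real.rpow_two lam
    have hSb : ‖S w‖ ≤ (d:ℝ) * (d:ℝ) * c := by
      refine (hSabs w).trans ?_
      have hterm : ∀ i ∈ I, ∀ k ∈ K,
          φ i ^ (α * w.re) * ‖U k i‖ * φhat k ^ (β * w.re) ≤ c := by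
        intro i hi k hk
        have hφi : 0 < φ i := (Finset.mem_filter.mp hi).2
        have hφk : 0 < φhat k := (Finset.mem_filter.mp hk).2
        have e1 : φ i ^ (α * w.re) ≤ 1 :=
          Real.rpow_le_one (hφnonneg i) (hφ1 i) (by nlinarith)
        have e2 : φhat k ^ (β * w.re) ≤ 1 :=
          Real.rpow_le_one (hφhatnonneg k) (hφhat1 k) (by nlinarith)
        have h3 : φ i ^ (α * w.re) * ‖U k i‖ ≤ 1 * c :=
          mul_le_mul e1 (hcle k i) (norm_nonneg _) one_pos.le
        have h4 : φ i ^ (α * w.re) * ‖U k i‖ * φhat k ^ (β * w.re)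
            ≤ (1 * c) * 1 :=
          mul_le_mul h3 e2 (Real.rpow_nonneg (hφhatnonneg k) _) (by positivity)
        simpa using h4
      calc ∑ i ∈ I, ∑ k ∈ K, φ i ^ (α * w.re) * ‖U k i‖ * φhat k ^ (β * w.re)
          ≤ ∑ i ∈ I, ∑ _k ∈ K, c :=
            Finset.sum_le_sum fun i hi => Finset.sum_le_sum fun k hk => hterm i hi k hk
        _ = (I.card : ℝ) * ((K.card : ℝ) * c) := by
            simp [Finset.sum_const, nsmul_eq_mul, mul_assoc]
        _ ≤ (d:ℝ) * ((d:ℝ) * c) := by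
            have h5 : (I.card : ℝ) ≤ (d:ℝ) := by
              exact_mod_cast (Finset.card_filter_le _ _).trans (by simp)
            have h6 : (K.card : ℝ) ≤ (d:ℝ) := by
              exact_mod_cast (Finset.card_filter_le _ _).trans (by simp)
            have h7 : (0:ℝ) ≤ (K.card : ℝ) * c := by positivity
            have h8 : (K.card : ℝ) * c ≤ (d:ℝ) * c :=
              mul_le_mul_of_nonneg_right h6 hc0.le
            exact mul_le_mul h5 h8 h7 (by positivity)
        _ = (d:ℝ) * (d:ℝ) * c := by ring
    have hc1' : 0 ≤ c ^ (1 - w.re) := Real.rpow_nonneg hc0.le _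
    have hlam1' : 0 ≤ lam ^ w.re := Real.rpow_nonneg hlam0.le _
    rw [hM]
    have h9 : c ^ (1 - w.re) * lam ^ w.re ≤ max 1 c⁻¹ * max lam (lam ^ 2) :=
      mul_le_mul hc1 hlam1 hlam1' (le_trans hc1' hc1)
    exact mul_le_mul h9 hSb (norm_nonneg _) (by positivity)
  -- F is entire
  have hdiff : Differentiable ℂ F := by
    have hFeq : F = fun z => (c : ℂ) ^ (1 - z) * (lam : ℂ) ^ z *
        ∑ i ∈ I, ∑ k ∈ K,
          (φ i : ℂ) ^ ((α : ℂ) * z) * U k i * (φhat k : ℂ) ^ ((β : ℂ) * z) :=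
      funext hF
    rw [hFeq]
    have hcne : (c : ℂ) ≠ 0 := Complex.ofReal_ne_zero.mpr hc0.ne'
    have hlamne : (lam : ℂ) ≠ 0 := Complex.ofReal_ne_zero.mpr hlam0.ne'
    refine Differentiable.mul (Differentiable.mul ?_ ?_) ?_
    · exact Differentiable.const_cpow ((differentiable_const 1).sub differentiable_id)
        (Or.inl hcne)
    · exact Differentiable.const_cpow differentiable_id (Or.inl hlamne)
    · refine Differentiable.fun_sum fun i hi => Differentiable.fun_sum fun k hk => ?_
      have hφi : (0:ℝ) < φ i := (Finset.mem_filter.mp hi).2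
      have hφk : (0:ℝ) < φhat k := (Finset.mem_filter.mp hk).2
      have hne1 : ((φ i : ℝ) : ℂ) ≠ 0 := Complex.ofReal_ne_zero.mpr hφi.ne'
      have hne2 : ((φhat k : ℝ) : ℂ) ≠ 0 := Complex.ofReal_ne_zero.mpr hφk.ne'
      refine Differentiable.mul (Differentiable.mul ?_ (differentiable_const _)) ?_
      · exact Differentiable.const_cpow (differentiable_id.const_mul _) (Or.inl hne1)
      · exact Differentiable.const_cpow (differentiable_id.const_mul _) (Or.inl hne2)
  -- apply Hadamard three lines to w ↦ F (w + 1)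
  intro z hz1 hz2
  have hmem : z - 1 ∈ Complex.HadamardThreeLines.verticalClosedStrip 0 1 := by
    constructor <;> simp [Complex.sub_re] <;> linarith
  have hd' : DiffContOnCl ℂ (fun w => F (w + 1))
      (Complex.HadamardThreeLines.verticalStrip 0 1) :=
    (hdiff.comp (differentiable_id.add_const 1)).diffContOnCl
  have hBdd : BddAbove ((norm ∘ fun w => F (w + 1)) ''
      Complex.HadamardThreeLines.verticalClosedStrip 0 1) := by
    refine ⟨M, ?_⟩
    rintro r ⟨w, hw, rfl⟩
    obtain ⟨hw1, hw2⟩ := hw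
    simp only [Function.comp_apply]
    exact hbound (w + 1) (by simp [Complex.add_re]; linarith) (by simp [Complex.add_re]; linarith)
  have ha : ∀ y ∈ Complex.re ⁻¹' {0}, ‖(fun w => F (w + 1)) y‖ ≤ 1 := by
    intro y hy
    simp only [Set.mem_preimage, Set.mem_singleton_iff] at hy
    exact hedge1 (y + 1) (by simp [Complex.add_re, hy])
  have hb : ∀ y ∈ Complex.re ⁻¹' {1}, ‖(fun w => F (w + 1)) y‖ ≤ 1 := by
    intro y hy
    simp only [Set.mem_preimage, Set.mem_singleton_iff] at hy
    exact hedge2 (y + 1) (by simp [Complex.add_re, hy]; linarith)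
  have key := Complex.HadamardThreeLines.norm_le_interp_of_mem_verticalClosedStrip'
    (zero_lt_one : (0:ℝ) < 1) hmem hd' hBdd ha hb
  rw [Real.one_rpow, Real.one_rpow, mul_one] at key
  simp only [sub_add_cancel] at key
  exact key
end

section
/- For any three unit vectors Φ₁, Φ₂, Φ₃ ∈ ℂ², there exists a unit vector α ∈ ℂ² such that |⟨α, Φ₁⟩| = |⟨α, Φ₂⟩| = |⟨α, Φ₃⟩|, where ⟨·,·⟩ is the standard Hermitian inner product on ℂ². -/
open scoped RealInnerProductSpace

lemma exists_unit_orthogonal (v u : Fin 3 → ℝ) :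
    ∃ n : Fin 3 → ℝ, (∑ i, n i ^ 2 = 1) ∧ (∑ i, n i * v i = 0) ∧ (∑ i, n i * u i = 0) := by
  classical
  let v' : EuclideanSpace ℝ (Fin 3) := WithLp.toLp 2 v
  let u' : EuclideanSpace ℝ (Fin 3) := WithLp.toLp 2 u
  set K : Submodule ℝ (EuclideanSpace ℝ (Fin 3)) := Submodule.span ℝ {v', u'} with hKdef
  have hdim : Module.finrank ℝ K ≤ 2 := by
    have h1 := finrank_span_le_card (R := ℝ) ({v', u'} : Set (EuclideanSpace ℝ (Fin 3)))
    refine h1.trans ?_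
    have hsub : ({v', u'} : Set (EuclideanSpace ℝ (Fin 3))).toFinset ⊆ {v', u'} := by simp
    calc ({v', u'} : Set (EuclideanSpace ℝ (Fin 3))).toFinset.card
        ≤ ({v', u'} : Finset (EuclideanSpace ℝ (Fin 3))).card := Finset.card_le_card hsub
      _ ≤ 2 := (Finset.card_insert_le _ _).trans (by simp)
  have hne : Kᗮ ≠ ⊥ := by
    intro h
    have htot := Submodule.finrank_add_finrank_orthogonal K
    rw [h] at htot
    simp [finrank_euclideanSpace_fin] at htot
    omega
  obtain ⟨x, hx, hx0⟩ := Submodule.exists_mem_ne_zero_of_ne_bot hne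
  have hxn : ‖x‖ ≠ 0 := norm_ne_zero_iff.mpr hx0
  have horto : ∀ w : EuclideanSpace ℝ (Fin 3), w ∈ K → (∑ i, (‖x‖⁻¹ • x : EuclideanSpace ℝ (Fin 3)) i * w i) = 0 := by
    intro w hw
    have h0 : ⟪w, x⟫ = 0 := (Submodule.mem_orthogonal K x).mp hx w hw
    have h1 : ⟪(‖x‖⁻¹ • x : EuclideanSpace ℝ (Fin 3)), w⟫ = 0 := by
      rw [real_inner_smul_left, real_inner_comm, h0, mul_zero]
    rw [PiLp.inner_apply] at h1
    simp [RCLike.inner_apply] at h1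
    refine Eq.trans (Finset.sum_congr rfl (fun i _ => ?_)) h1
    rw [PiLp.smul_apply, smul_eq_mul]
    ring
  refine ⟨(‖x‖⁻¹ • x : EuclideanSpace ℝ (Fin 3)), ?_, ?_, ?_⟩
  · have h1 : ‖(‖x‖⁻¹ • x : EuclideanSpace ℝ (Fin 3))‖ = 1 := by
      simpa using norm_smul_inv_norm (𝕜 := ℝ) hx0
    have h2 := real_inner_self_eq_norm_sq (‖x‖⁻¹ • x : EuclideanSpace ℝ (Fin 3))
    rw [PiLp.inner_apply, h1] at h2
    simp [RCLike.inner_apply, sq] at h2 ⊢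
    refine Eq.trans (Finset.sum_congr rfl (fun i _ => ?_)) h2
    linear_combination (-(‖x‖⁻¹) ^ 2) * abs_mul_abs_self (x.ofLp i)
  · exact horto v' (Submodule.subset_span (Set.mem_insert _ _))
  · exact horto u' (Submodule.subset_span (Set.mem_insert_of_mem _ rfl))

lemma exists_pair (n : Fin 3 → ℝ) (hn : n 0 ^ 2 + n 1 ^ 2 + n 2 ^ 2 = 1) :
    ∃ a b : ℂ, ‖a‖ ^ 2 + ‖b‖ ^ 2 = 1 ∧
      ‖a‖ ^ 2 - ‖b‖ ^ 2 = n 0 ∧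
      (starRingEnd ℂ a * b).re = n 1 / 2 ∧ (starRingEnd ℂ a * b).im = n 2 / 2 := by
  by_cases h : n 0 = -1
  · have h1 : n 1 = 0 := by nlinarith [sq_nonneg (n 1), sq_nonneg (n 2)]
    have h2 : n 2 = 0 := by nlinarith [sq_nonneg (n 1), sq_nonneg (n 2)]
    exact ⟨0, 1, by simp, by simp [h], by simp [h1], by simp [h2]⟩
  · have hle : n 0 ^ 2 ≤ 1 := by nlinarith [sq_nonneg (n 1), sq_nonneg (n 2)]
    have hgt : -1 < n 0 := by
      have : -1 ≤ n 0 := by nlinarith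
      cases lt_or_eq_of_le this with
      | inl h' => exact h'
      | inr h' => exact absurd h'.symm h
    have hpos : (0:ℝ) < (1 + n 0) / 2 := by linarith
    set r := Real.sqrt ((1 + n 0) / 2) with hrdef
    have hr2 : r ^ 2 = (1 + n 0) / 2 := Real.sq_sqrt hpos.le
    have hrpos : 0 < r := Real.sqrt_pos.mpr hpos
    refine ⟨(r : ℂ), ⟨n 1 / (2 * r), n 2 / (2 * r)⟩, ?_, ?_, ?_, ?_⟩ <;>
      simp only [Complex.sq_norm, Complex.normSq_apply, Complex.ofReal_re, Complex.ofReal_im,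
        Complex.mul_re, Complex.mul_im, Complex.conj_re, Complex.conj_im]
    · field_simp
      nlinarith [hr2]
    · field_simp
      nlinarith [hr2]
    · field_simp
      ring
    · field_simp
      ring

lemma two_mul_sq_abs (a₀ a₁ φ₀ φ₁ : ℂ) :
    2 * ‖starRingEnd ℂ a₀ * φ₀ + starRingEnd ℂ a₁ * φ₁‖ ^ 2
    = (‖a₀‖ ^ 2 + ‖a₁‖ ^ 2) * (‖φ₀‖ ^ 2 + ‖φ₁‖ ^ 2)
      + (‖a₀‖ ^ 2 - ‖a₁‖ ^ 2) * (‖φ₀‖ ^ 2 - ‖φ₁‖ ^ 2)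
      + 4 * ((starRingEnd ℂ a₀ * a₁).re * (starRingEnd ℂ φ₀ * φ₁).re
           + (starRingEnd ℂ a₀ * a₁).im * (starRingEnd ℂ φ₀ * φ₁).im) := by
  simp only [Complex.sq_norm, Complex.normSq_apply, Complex.add_re, Complex.add_im,
    Complex.mul_re, Complex.mul_im, Complex.conj_re, Complex.conj_im]
  ring

/-- For any three unit vectors `Φ₁, Φ₂, Φ₃` in `ℂ²` there is a unit vector `α`
whose Hermitian inner products with the three vectors all have the same modulus. -/
theorem equidistant_vector_exists (Φ₁ Φ₂ Φ₃ : Fin 2 → ℂ)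
    (h₁ : ∑ i, ‖Φ₁ i‖ ^ 2 = 1)
    (h₂ : ∑ i, ‖Φ₂ i‖ ^ 2 = 1)
    (h₃ : ∑ i, ‖Φ₃ i‖ ^ 2 = 1) :
    ∃ a : Fin 2 → ℂ, (∑ i, ‖a i‖ ^ 2 = 1) ∧
      ‖∑ i, starRingEnd ℂ (a i) * Φ₁ i‖
        = ‖∑ i, starRingEnd ℂ (a i) * Φ₂ i‖ ∧
      ‖∑ i, starRingEnd ℂ (a i) * Φ₂ i‖
        = ‖∑ i, starRingEnd ℂ (a i) * Φ₃ i‖ := by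
  rw [Fin.sum_univ_two] at h₁ h₂ h₃
  set m₁ : Fin 3 → ℝ := ![‖Φ₁ 0‖ ^ 2 - ‖Φ₁ 1‖ ^ 2,
    2 * (starRingEnd ℂ (Φ₁ 0) * Φ₁ 1).re, 2 * (starRingEnd ℂ (Φ₁ 0) * Φ₁ 1).im] with hm₁
  set m₂ : Fin 3 → ℝ := ![‖Φ₂ 0‖ ^ 2 - ‖Φ₂ 1‖ ^ 2,
    2 * (starRingEnd ℂ (Φ₂ 0) * Φ₂ 1).re, 2 * (starRingEnd ℂ (Φ₂ 0) * Φ₂ 1).im] with hm₂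
  set m₃ : Fin 3 → ℝ := ![‖Φ₃ 0‖ ^ 2 - ‖Φ₃ 1‖ ^ 2,
    2 * (starRingEnd ℂ (Φ₃ 0) * Φ₃ 1).re, 2 * (starRingEnd ℂ (Φ₃ 0) * Φ₃ 1).im] with hm₃
  obtain ⟨n, hn1, hnv, hnu⟩ := exists_unit_orthogonal (fun i => m₁ i - m₂ i) (fun i => m₂ i - m₃ i)
  rw [Fin.sum_univ_three] at hn1 hnv hnu
  simp only [hm₁, hm₂, hm₃, Matrix.cons_val_zero, Matrix.cons_val_one, Matrix.head_cons,
    Matrix.cons_val_two, Matrix.tail_cons] at hnv hnu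
  obtain ⟨a, b, hab1, hab2, hab3, hab4⟩ := exists_pair n hn1
  refine ⟨![a, b], ?_, ?_, ?_⟩
  · rw [Fin.sum_univ_two]; simpa using hab1
  · simp only [Fin.sum_univ_two, Matrix.cons_val_zero, Matrix.cons_val_one, Matrix.head_cons]
    have k1 := two_mul_sq_abs a b (Φ₁ 0) (Φ₁ 1)
    have k2 := two_mul_sq_abs a b (Φ₂ 0) (Φ₂ 1)
    rw [hab1, h₁, hab2, hab3, hab4] at k1
    rw [hab1, h₂, hab2, hab3, hab4] at k2
    have hsq : ‖starRingEnd ℂ a * Φ₁ 0 + starRingEnd ℂ b * Φ₁ 1‖ ^ 2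
        = ‖starRingEnd ℂ a * Φ₂ 0 + starRingEnd ℂ b * Φ₂ 1‖ ^ 2 := by
      linarith
    have n1 := norm_nonneg (starRingEnd ℂ a * Φ₁ 0 + starRingEnd ℂ b * Φ₁ 1)
    have n2 := norm_nonneg (starRingEnd ℂ a * Φ₂ 0 + starRingEnd ℂ b * Φ₂ 1)
    rw [← Real.sqrt_sq n1, ← Real.sqrt_sq n2, hsq]
  · simp only [Fin.sum_univ_two, Matrix.cons_val_zero, Matrix.cons_val_one, Matrix.head_cons]
    have k1 := two_mul_sq_abs a b (Φ₂ 0) (Φ₂ 1)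
    have k2 := two_mul_sq_abs a b (Φ₃ 0) (Φ₃ 1)
    rw [hab1, h₂, hab2, hab3, hab4] at k1
    rw [hab1, h₃, hab2, hab3, hab4] at k2
    have hsq : ‖starRingEnd ℂ a * Φ₂ 0 + starRingEnd ℂ b * Φ₂ 1‖ ^ 2
        = ‖starRingEnd ℂ a * Φ₃ 0 + starRingEnd ℂ b * Φ₃ 1‖ ^ 2 := by
      linarith
    have n1 := norm_nonneg (starRingEnd ℂ a * Φ₂ 0 + starRingEnd ℂ b * Φ₂ 1)
    have n2 := norm_nonneg (starRingEnd ℂ a * Φ₃ 0 + starRingEnd ℂ b * Φ₃ 1)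
    rw [← Real.sqrt_sq n1, ← Real.sqrt_sq n2, hsq]
end

section
/- Let U₁ be a unitary d₁×d₁ matrix and U₂ a unitary d₂×d₂ matrix, with c₁ = max_{k,i} |(U₁)_{ki}| and c₂ = max_{k,i} |(U₂)_{ki}|. Let (α, β) be a dual pair (α, β ∈ [1/2, ∞], 1/α + 1/β = 2), and suppose unit vectors ψ₁ ∈ ℂ^{d₁} and ψ₂ ∈ ℂ^{d₂} satisfy H_α(p^{ψ₁}) + H_β(q^{ψ₁}) = -log(c₁²) (with respect to U₁) and H_α(p^{ψ₂}) + H_β(q^{ψ₂}) = -log(c₂²) (with respect to U₂). Then the unit vector ψ ∈ ℂ^{d₁·d₂} with ψ(i,j) = ψ₁(i)·ψ₂(j) satisfies H_α(p^ψ) + H_β(q^ψ) = -log((c₁·c₂)²) with respect to the Kronecker product U₁ ⊗ U₂, whose maximal entry modulus is c₁·c₂. -/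
open Matrix
open scoped ENNReal Kronecker

lemma exists_pos_of_sum_one {ι : Type} [Fintype ι] (p : ι → ℝ) (hs : ∑ i, p i = 1) :
    ∃ i, 0 < p i := by
  by_contra h
  push_neg at h
  have : ∑ i, p i ≤ 0 := Finset.sum_nonpos (fun i _ => h i)
  linarith

lemma renyi_add {ι κ : Type} [Fintype ι] [Fintype κ] (α : ℝ≥0∞)
    (p : ι → ℝ) (q : κ → ℝ) (hp : ∀ i, 0 ≤ p i) (hq : ∀ j, 0 ≤ q j)
    (hps : ∑ i, p i = 1) (hqs : ∑ j, q j = 1) :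
    renyiEntropy α (fun x : ι × κ => p x.1 * q x.2) = renyiEntropy α p + renyiEntropy α q := by
  obtain ⟨ip, hip⟩ := exists_pos_of_sum_one p hps
  obtain ⟨jq, hjq⟩ := exists_pos_of_sum_one q hqs
  have : Nonempty ι := ⟨ip⟩
  have : Nonempty κ := ⟨jq⟩
  by_cases hT : α = ⊤
  · subst hT
    obtain ⟨i₀, hi₀⟩ := Finite.exists_max p
    obtain ⟨j₀, hj₀⟩ := Finite.exists_max q
    have hpmax : sSup (Set.range p) = p i₀ :=
      IsGreatest.csSup_eq ⟨Set.mem_range_self _, by rintro _ ⟨i, rfl⟩; exact hi₀ i⟩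
    have hqmax : sSup (Set.range q) = q j₀ :=
      IsGreatest.csSup_eq ⟨Set.mem_range_self _, by rintro _ ⟨j, rfl⟩; exact hj₀ j⟩
    have hpqmax : sSup (Set.range fun x : ι × κ => p x.1 * q x.2) = p i₀ * q j₀ := by
      refine IsGreatest.csSup_eq ⟨⟨(i₀, j₀), rfl⟩, ?_⟩
      rintro _ ⟨⟨i, j⟩, rfl⟩
      exact mul_le_mul (hi₀ i) (hj₀ j) (hq j) (hp i₀)
    have hpi : 0 < p i₀ := lt_of_lt_of_le hip (hi₀ ip)
    have hqj : 0 < q j₀ := lt_of_lt_of_le hjq (hj₀ jq)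
    simp only [renyiEntropy, if_pos, if_true, hpmax, hqmax, hpqmax]
    rw [Real.log_mul hpi.ne' hqj.ne']
    ring
  · by_cases h1 : α = 1
    · subst h1
      simp only [renyiEntropy, if_neg (by simp : (1:ℝ≥0∞) ≠ ⊤), if_pos, if_true]
      have key : ∀ (i : ι) (j : κ), p i * q j * Real.log (p i * q j)
          = q j * (p i * Real.log (p i)) + p i * (q j * Real.log (q j)) := by
        intro i j
        rcases eq_or_lt_of_le (hp i) with h | h
        · simp [← h]
        rcases eq_or_lt_of_le (hq j) with h' | h'
        · simp [← h']
        rw [Real.log_mul h.ne' h'.ne']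
        ring
      rw [Fintype.sum_prod_type]
      simp_rw [key, Finset.sum_add_distrib, ← Finset.mul_sum, ← Finset.sum_mul, hps, hqs]
      ring_nf
    · have ht := α.toReal
      simp only [renyiEntropy, if_neg hT, if_neg h1]
      have hA : 0 < ∑ i, p i ^ α.toReal := by
        refine Finset.sum_pos' (fun i _ => Real.rpow_nonneg (hp i) _) ⟨ip, Finset.mem_univ _, ?_⟩
        exact Real.rpow_pos_of_pos hip _
      have hB : 0 < ∑ j, q j ^ α.toReal := by
        refine Finset.sum_pos' (fun j _ => Real.rpow_nonneg (hq j) _) ⟨jq, Finset.mem_univ _, ?_⟩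
        exact Real.rpow_pos_of_pos hjq _
      have : ∑ x : ι × κ, (p x.1 * q x.2) ^ α.toReal
          = (∑ i, p i ^ α.toReal) * (∑ j, q j ^ α.toReal) := by
        rw [Finset.sum_mul_sum, Fintype.sum_prod_type]
        exact Finset.sum_congr rfl fun i _ => Finset.sum_congr rfl fun j _ =>
          Real.mul_rpow (hp i) (hq j)
      rw [this, Real.log_mul hA.ne' hB.ne']
      ring

lemma sum_sq_mulVec {d : ℕ} (U : Matrix (Fin d) (Fin d) ℂ)
    (hU : U ∈ Matrix.unitaryGroup (Fin d) ℂ) (ψ : Fin d → ℂ)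
    (hψ : ∑ i, ‖ψ i‖ ^ 2 = 1) :
    ∑ k, ‖U.mulVec ψ k‖ ^ 2 = 1 := by
  have h1 : Uᴴ * U = 1 := hU.1
  have key : star (U.mulVec ψ) ⬝ᵥ U.mulVec ψ = star ψ ⬝ᵥ ψ := by
    rw [star_mulVec, Matrix.dotProduct_mulVec, vecMul_vecMul, h1, vecMul_one]
  have expand : ∀ (w : Fin d → ℂ), star w ⬝ᵥ w = ((∑ k, ‖w k‖ ^ 2 : ℝ) : ℂ) := by
    intro w
    simp only [dotProduct, Pi.star_apply, Complex.star_def]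
    push_cast
    refine Finset.sum_congr rfl fun k _ => ?_
    rw [mul_comm, Complex.mul_conj']
  rw [expand, expand] at key
  exact (Complex.ofReal_inj.mp key).trans hψ

lemma sq_abs_pos_of_unitary {d : ℕ} (hd : 1 ≤ d) (U : Matrix (Fin d) (Fin d) ℂ)
    (hU : U ∈ Matrix.unitaryGroup (Fin d) ℂ) (c : ℝ)
    (hc : IsGreatest (Set.range fun ki : Fin d × Fin d => ‖U ki.1 ki.2‖) c) :
    0 < c := by
  have hne : Nonempty (Fin d) := Fin.pos_iff_nonempty.mp hd
  by_contra h
  push_neg at h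
  have hz : ∀ k i, U k i = 0 := by
    intro k i
    have h2 : ‖U k i‖ ≤ c := hc.2 ⟨(k, i), rfl⟩
    have : ‖U k i‖ = 0 := le_antisymm (h2.trans h) (norm_nonneg _)
    exact norm_eq_zero.mp this
  have h1 : Uᴴ * U = 1 := hU.1
  obtain ⟨k⟩ := hne
  have := congrArg (fun M => M k k) h1
  simp [Matrix.mul_apply, hz, Matrix.one_apply] at this

/-- Tensor products of Maassen–Uffink equality states are equality states for the
Kronecker product of the unitaries, whose maximal entry modulus is `c₁·c₂`. -/
theorem tensor_of_equality_states (d₁ d₂ : ℕ) (h₁ : 1 ≤ d₁) (h₂ : 1 ≤ d₂)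
    (U₁ : Matrix (Fin d₁) (Fin d₁) ℂ) (hU₁ : U₁ ∈ Matrix.unitaryGroup (Fin d₁) ℂ)
    (U₂ : Matrix (Fin d₂) (Fin d₂) ℂ) (hU₂ : U₂ ∈ Matrix.unitaryGroup (Fin d₂) ℂ)
    (c₁ c₂ : ℝ)
    (hc₁ : IsGreatest (Set.range fun ki : Fin d₁ × Fin d₁ => ‖U₁ ki.1 ki.2‖) c₁)
    (hc₂ : IsGreatest (Set.range fun ki : Fin d₂ × Fin d₂ => ‖U₂ ki.1 ki.2‖) c₂)
    (α β : ℝ≥0∞) (hα : (2 : ℝ≥0∞)⁻¹ ≤ α) (hβ : (2 : ℝ≥0∞)⁻¹ ≤ β)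
    (hdual : 1 / α + 1 / β = 2)
    (ψ₁ : Fin d₁ → ℂ) (hψ₁ : ∑ i, ‖ψ₁ i‖ ^ 2 = 1)
    (ψ₂ : Fin d₂ → ℂ) (hψ₂ : ∑ j, ‖ψ₂ j‖ ^ 2 = 1)
    (heq₁ : renyiEntropy α (fun i => ‖ψ₁ i‖ ^ 2) +
        renyiEntropy β (fun k => ‖U₁.mulVec ψ₁ k‖ ^ 2) = - Real.log (c₁ ^ 2))
    (heq₂ : renyiEntropy α (fun j => ‖ψ₂ j‖ ^ 2) +
        renyiEntropy β (fun l => ‖U₂.mulVec ψ₂ l‖ ^ 2) = - Real.log (c₂ ^ 2)) :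
    (∑ x : Fin d₁ × Fin d₂, ‖ψ₁ x.1 * ψ₂ x.2‖ ^ 2 = 1) ∧
    IsGreatest (Set.range fun x : (Fin d₁ × Fin d₂) × (Fin d₁ × Fin d₂) =>
        ‖(U₁ ⊗ₖ U₂) x.1 x.2‖) (c₁ * c₂) ∧
    renyiEntropy α (fun x : Fin d₁ × Fin d₂ => ‖ψ₁ x.1 * ψ₂ x.2‖ ^ 2) +
      renyiEntropy β (fun y : Fin d₁ × Fin d₂ =>
        ‖(U₁ ⊗ₖ U₂).mulVec (fun x => ψ₁ x.1 * ψ₂ x.2) y‖ ^ 2)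
      = - Real.log ((c₁ * c₂) ^ 2) := by
  have hc₁pos : 0 < c₁ := sq_abs_pos_of_unitary h₁ U₁ hU₁ c₁ hc₁
  have hc₂pos : 0 < c₂ := sq_abs_pos_of_unitary h₂ U₂ hU₂ c₂ hc₂
  -- part 1
  have part1 : ∑ x : Fin d₁ × Fin d₂, ‖ψ₁ x.1 * ψ₂ x.2‖ ^ 2 = 1 := by
    rw [Fintype.sum_prod_type]
    have h : ∀ x : Fin d₁, (∑ y : Fin d₂, ‖ψ₁ x * ψ₂ y‖ ^ 2)
        = ‖ψ₁ x‖ ^ 2 := by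
      intro x
      simp only [norm_mul, mul_pow, ← Finset.mul_sum, hψ₂, mul_one]
    simp only [h, hψ₁]
  -- part 2
  have part2 : IsGreatest (Set.range fun x : (Fin d₁ × Fin d₂) × (Fin d₁ × Fin d₂) =>
      ‖(U₁ ⊗ₖ U₂) x.1 x.2‖) (c₁ * c₂) := by
    obtain ⟨⟨k₁, i₁⟩, hk₁⟩ := hc₁.1
    obtain ⟨⟨k₂, i₂⟩, hk₂⟩ := hc₂.1
    constructor
    · refine ⟨((k₁, k₂), (i₁, i₂)), ?_⟩
      simp only [Matrix.kroneckerMap_apply, norm_mul]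
      rw [show ‖U₁ k₁ i₁‖ = c₁ from hk₁, show ‖U₂ k₂ i₂‖ = c₂ from hk₂]
    · rintro _ ⟨⟨⟨k, l⟩, ⟨i, j⟩⟩, rfl⟩
      simp only [Matrix.kroneckerMap_apply, norm_mul]
      exact mul_le_mul (hc₁.2 ⟨(k, i), rfl⟩) (hc₂.2 ⟨(l, j), rfl⟩)
        (norm_nonneg _) hc₁pos.le
  -- mulVec factorization
  have hmv : ∀ y : Fin d₁ × Fin d₂,
      (U₁ ⊗ₖ U₂).mulVec (fun x => ψ₁ x.1 * ψ₂ x.2) y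
        = U₁.mulVec ψ₁ y.1 * U₂.mulVec ψ₂ y.2 := by
    intro y
    simp only [Matrix.mulVec, dotProduct, Matrix.kroneckerMap_apply]
    rw [Finset.sum_mul_sum, Fintype.sum_prod_type]
    exact Finset.sum_congr rfl fun i _ => Finset.sum_congr rfl fun j _ => by ring
  have hq₁ : ∑ k, ‖U₁.mulVec ψ₁ k‖ ^ 2 = 1 := sum_sq_mulVec U₁ hU₁ ψ₁ hψ₁
  have hq₂ : ∑ l, ‖U₂.mulVec ψ₂ l‖ ^ 2 = 1 := sum_sq_mulVec U₂ hU₂ ψ₂ hψ₂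
  refine ⟨part1, part2, ?_⟩
  have e1 : renyiEntropy α (fun x : Fin d₁ × Fin d₂ => ‖ψ₁ x.1 * ψ₂ x.2‖ ^ 2)
      = renyiEntropy α (fun i => ‖ψ₁ i‖ ^ 2)
        + renyiEntropy α (fun j => ‖ψ₂ j‖ ^ 2) := by
    have := renyi_add α (fun i => ‖ψ₁ i‖ ^ 2) (fun j => ‖ψ₂ j‖ ^ 2)
      (fun i => by positivity) (fun j => by positivity) hψ₁ hψ₂
    rw [← this]
    congr 1
    funext x
    simp [_root_.map_mul, mul_pow]
  have e2 : renyiEntropy β (fun y : Fin d₁ × Fin d₂ =>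
      ‖(U₁ ⊗ₖ U₂).mulVec (fun x => ψ₁ x.1 * ψ₂ x.2) y‖ ^ 2)
      = renyiEntropy β (fun k => ‖U₁.mulVec ψ₁ k‖ ^ 2)
        + renyiEntropy β (fun l => ‖U₂.mulVec ψ₂ l‖ ^ 2) := by
    have := renyi_add β (fun k => ‖U₁.mulVec ψ₁ k‖ ^ 2)
      (fun l => ‖U₂.mulVec ψ₂ l‖ ^ 2)
      (fun k => by positivity) (fun l => by positivity) hq₁ hq₂
    rw [← this]
    congr 1
    funext y
    simp [hmv y, _root_.map_mul, mul_pow]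
  rw [e1, e2]
  have hlog : Real.log ((c₁ * c₂) ^ 2) = Real.log (c₁ ^ 2) + Real.log (c₂ ^ 2) := by
    rw [mul_pow, Real.log_mul (by positivity) (by positivity)]
  rw [hlog]
  linarith
end

section
/- Let U be a unitary 2×2 complex matrix and let ρ be a density matrix on ℂ². Then there exists a unit vector ψ ∈ ℂ² such that |ψ_i|² = ρ_{ii} for i = 1, 2 and |(Uψ)_k|² = (UρU†)_{kk} for k = 1, 2; i.e., every state on ℂ² has a pure state with the same pair of outcome distributions in both bases. -/
open Matrix
open scoped ComplexOrder

/-- In dimension `d = 2`, every density matrix admits a pure state with the same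
pair of outcome distributions in both bases. -/
theorem qubit_pure_state_same_distributions
    (U : Matrix (Fin 2) (Fin 2) ℂ) (hU : U ∈ Matrix.unitaryGroup (Fin 2) ℂ)
    (ρ : Matrix (Fin 2) (Fin 2) ℂ) (hρ : ρ.PosSemidef) (htr : ρ.trace = 1) :
    ∃ ψ : Fin 2 → ℂ, (∑ i, ‖ψ i‖ ^ 2 = 1) ∧
      (∀ i, ‖ψ i‖ ^ 2 = (ρ i i).re) ∧
      (∀ k, ‖U.mulVec ψ k‖ ^ 2 = ((U * ρ * Uᴴ) k k).re) := by
  classical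
  have hherm := hρ.1
  set p : ℝ := (ρ 0 0).re with hp_def
  set q : ℝ := (ρ 1 1).re with hq_def
  set r : ℂ := ρ 0 1 with hr_def
  have h10 : ρ 1 0 = (starRingEnd ℂ) r := (hherm.apply 1 0).symm
  -- quadratic form evaluation
  have quad : ∀ a b : ℂ, 0 ≤ (starRingEnd ℂ) a * (ρ 0 0 * a + r * b)
      + (starRingEnd ℂ) b * ((starRingEnd ℂ) r * a + ρ 1 1 * b) := by
    intro a b
    have h := hρ.dotProduct_mulVec_nonneg ![a, b]
    have e : star ![a, b] ⬝ᵥ ρ.mulVec ![a, b]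
        = (starRingEnd ℂ) a * (ρ 0 0 * a + r * b)
          + (starRingEnd ℂ) b * ((starRingEnd ℂ) r * a + ρ 1 1 * b) := by
      simp [dotProduct, Matrix.mulVec, Fin.sum_univ_two, h10, hr_def]
    rwa [e] at h
  have h00nn : (0:ℂ) ≤ ρ 0 0 := by
    have := quad 1 0
    simpa using this
  have h11nn : (0:ℂ) ≤ ρ 1 1 := by
    have := quad 0 1
    simpa using this
  obtain ⟨hp0, hpim⟩ := Complex.nonneg_iff.mp h00nn
  obtain ⟨hq0, hqim⟩ := Complex.nonneg_iff.mp h11nn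
  have h00 : ρ 0 0 = (p : ℂ) := by
    apply Complex.ext <;> simp [hp_def, ← hpim]
  have h11 : ρ 1 1 = (q : ℂ) := by
    apply Complex.ext <;> simp [hq_def, ← hqim]
  have hpq : p + q = 1 := by
    have ht := htr
    rw [Matrix.trace_fin_two, h00, h11] at ht
    exact_mod_cast ht
  -- normSq r ≤ p * q
  have hrle : Complex.normSq r ≤ p * q := by
    by_cases hp' : p = 0
    · have hq1 : q = 1 := by linarith
      have h := quad 1 (-(starRingEnd ℂ) r)
      have e : (starRingEnd ℂ) 1 * (ρ 0 0 * 1 + r * (-(starRingEnd ℂ) r))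
          + (starRingEnd ℂ) (-(starRingEnd ℂ) r)
            * ((starRingEnd ℂ) r * 1 + ρ 1 1 * (-(starRingEnd ℂ) r))
          = ((-(Complex.normSq r) : ℝ) : ℂ) := by
        rw [h00, h11, hp', hq1]
        push_cast [Complex.normSq_eq_conj_mul_self]
        simp only [_root_.map_one, _root_.map_neg, Complex.conj_ofReal, one_mul]
        ring
      rw [e] at h
      have : (0:ℝ) ≤ -(Complex.normSq r) := Complex.zero_le_real.mp h
      have hr0 : Complex.normSq r = 0 := le_antisymm (by linarith) (Complex.normSq_nonneg r)
      rw [hr0, hp', zero_mul]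
    · have hpgt : 0 < p := lt_of_le_of_ne hp0 (Ne.symm hp')
      have h := quad r (-(p:ℂ))
      have e : (starRingEnd ℂ) r * (ρ 0 0 * r + r * (-(p:ℂ)))
          + (starRingEnd ℂ) (-(p:ℂ)) * ((starRingEnd ℂ) r * r + ρ 1 1 * (-(p:ℂ)))
          = ((p * (p * q - Complex.normSq r) : ℝ) : ℂ) := by
        rw [h00, h11]
        push_cast [Complex.normSq_eq_conj_mul_self]
        simp only [_root_.map_one, _root_.map_neg, Complex.conj_ofReal, one_mul]
        ring
      rw [e] at h
      have h' : (0:ℝ) ≤ p * (p * q - Complex.normSq r) := Complex.zero_le_real.mp h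
      nlinarith
  -- unitarity facts
  set c : ℂ := U 0 0 * (starRingEnd ℂ) (U 0 1) with hc_def
  have hc1 : U 1 0 * (starRingEnd ℂ) (U 1 1) = -c := by
    have h := Matrix.mem_unitaryGroup_iff'.mp hU
    have h' := congrFun (congrFun h 1) 0
    simp [Matrix.mul_apply, Fin.sum_univ_two, Matrix.one_apply] at h'
    rw [hc_def]
    linear_combination h'
  set t : ℝ := (c * r).re with ht_def
  set nc : ℝ := Complex.normSq c with hnc_def
  set D : ℝ := nc * (p * q) - t ^ 2 with hD_def
  have hD : 0 ≤ D := by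
    have h1 : Complex.normSq (c * r) = nc * Complex.normSq r := Complex.normSq_mul c r
    have h2 : Complex.normSq (c * r) = (c*r).re * (c*r).re + (c*r).im * (c*r).im :=
      Complex.normSq_apply _
    have h3 : 0 ≤ nc := Complex.normSq_nonneg c
    nlinarith [sq_nonneg ((c*r).im)]
  set z : ℂ := if c = 0 then ((Real.sqrt (p * q) : ℝ) : ℂ)
      else (((t:ℝ) : ℂ) + ((Real.sqrt D : ℝ) : ℂ) * Complex.I) * (starRingEnd ℂ) c / ((nc : ℝ) : ℂ)
      with hz_def
  have hz1 : Complex.normSq z = p * q := by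
    rw [hz_def]
    by_cases hc : c = 0
    · rw [if_pos hc, Complex.normSq_ofReal,
        Real.mul_self_sqrt (mul_nonneg hp0 hq0)]
    · rw [if_neg hc]
      have hnc0 : nc ≠ 0 := fun h => hc (Complex.normSq_eq_zero.mp h)
      have hw : Complex.normSq (((t:ℝ) : ℂ) + ((Real.sqrt D : ℝ) : ℂ) * Complex.I)
          = nc * (p * q) := by
        rw [Complex.normSq_apply]
        simp [Real.mul_self_sqrt hD]
        rw [hD_def]; ring
      rw [Complex.normSq_div, Complex.normSq_mul, hw, Complex.normSq_conj,
        Complex.normSq_ofReal]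
      field_simp
      rw [← hnc_def]
      ring
  have hz2 : (c * z).re = t := by
    rw [hz_def]
    by_cases hc : c = 0
    · rw [if_pos hc]
      simp [ht_def, hc]
    · rw [if_neg hc]
      have hnc0 : ((nc : ℝ) : ℂ) ≠ 0 := by
        simp only [ne_eq, Complex.ofReal_eq_zero]
        exact fun h => hc (Complex.normSq_eq_zero.mp h)
      have : c * ((((t:ℝ):ℂ) + ((Real.sqrt D : ℝ) : ℂ) * Complex.I) * (starRingEnd ℂ) c / ((nc : ℝ) : ℂ))
          = (((t:ℝ):ℂ) + ((Real.sqrt D : ℝ) : ℂ) * Complex.I) := by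
        rw [mul_div_assoc']
        rw [show c * ((((t:ℝ):ℂ) + ((Real.sqrt D : ℝ) : ℂ) * Complex.I) * (starRingEnd ℂ) c)
          = (((t:ℝ):ℂ) + ((Real.sqrt D : ℝ) : ℂ) * Complex.I) * (c * (starRingEnd ℂ) c) by ring]
        rw [Complex.mul_conj, ← hnc_def, mul_div_cancel_right₀ _ hnc0]
      rw [this]
      simp
  -- construct ψ amplitudes
  obtain ⟨ψ, hψ0, hψ1, hcross⟩ : ∃ ψ : Fin 2 → ℂ, Complex.normSq (ψ 0) = p
      ∧ Complex.normSq (ψ 1) = q ∧ ψ 0 * (starRingEnd ℂ) (ψ 1) = z := by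
    by_cases hp' : p = 0
    · have hz0 : z = 0 := by
        apply Complex.normSq_eq_zero.mp
        rw [hz1, hp', zero_mul]
      refine ⟨![0, ((Real.sqrt q : ℝ) : ℂ)], by simp [hp'], ?_, by simp [hz0]⟩
      simp [Complex.normSq_ofReal, Real.mul_self_sqrt (show 0 ≤ q from hq0)]
    · have hsp : ((Real.sqrt p : ℝ) : ℂ) ≠ 0 := by
        simp only [ne_eq, Complex.ofReal_eq_zero]
        exact Real.sqrt_ne_zero'.mpr (lt_of_le_of_ne hp0 (Ne.symm hp'))
      refine ⟨![((Real.sqrt p : ℝ) : ℂ), (starRingEnd ℂ) z / ((Real.sqrt p : ℝ) : ℂ)], ?_, ?_, ?_⟩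
      · simp [Complex.normSq_ofReal, Real.mul_self_sqrt (show 0 ≤ p from hp0)]
      · simp only [Matrix.cons_val_one, Matrix.head_cons, Matrix.cons_val_zero, Complex.normSq_div,
          Complex.normSq_conj, hz1, Complex.normSq_ofReal, Real.mul_self_sqrt (show 0 ≤ p from hp0)]
        field_simp
      · simp only [Matrix.cons_val_zero, Matrix.cons_val_one, Matrix.head_cons, map_div₀,
          Complex.conj_conj, Complex.conj_ofReal]
        rw [mul_div_assoc', mul_comm, mul_div_assoc, div_self hsp, mul_one]
  -- expansions
  have hlhs : ∀ k : Fin 2, ‖U.mulVec ψ k‖ ^ 2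
      = Complex.normSq (U k 0) * p + Complex.normSq (U k 1) * q
        + 2 * ((U k 0 * (starRingEnd ℂ) (U k 1)) * z).re := by
    intro k
    have hmv : U.mulVec ψ k = U k 0 * ψ 0 + U k 1 * ψ 1 := by
      simp [Matrix.mulVec, dotProduct, Fin.sum_univ_two]
    rw [Complex.sq_norm, hmv, Complex.normSq_add, Complex.normSq_mul, Complex.normSq_mul,
      hψ0, hψ1]
    congr 2
    rw [← hcross, _root_.map_mul]
    ring
  have hrhs : ∀ k : Fin 2, ((U * ρ * Uᴴ) k k).re
      = Complex.normSq (U k 0) * p + Complex.normSq (U k 1) * q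
        + 2 * ((U k 0 * (starRingEnd ℂ) (U k 1)) * r).re := by
    intro k
    have e : (U * ρ * Uᴴ) k k
        = ((Complex.normSq (U k 0) * p + Complex.normSq (U k 1) * q : ℝ) : ℂ)
          + ((U k 0 * (starRingEnd ℂ) (U k 1)) * r
            + (starRingEnd ℂ) ((U k 0 * (starRingEnd ℂ) (U k 1)) * r)) := by
      simp only [Matrix.mul_apply, Fin.sum_univ_two, Matrix.conjTranspose_apply, Complex.star_def]
      rw [h00, h11, h10, ← hr_def]
      push_cast [Complex.normSq_eq_conj_mul_self]
      simp only [_root_.map_mul, Complex.conj_conj, Complex.conj_ofReal]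
      ring
    rw [e]
    simp [Complex.add_re, Complex.conj_re]
    ring
  refine ⟨ψ, ?_, ?_, ?_⟩
  · rw [Fin.sum_univ_two, Complex.sq_norm, Complex.sq_norm, hψ0, hψ1, hpq]
  · refine Fin.forall_fin_two.mpr ⟨?_, ?_⟩
    · rw [Complex.sq_norm]; exact hψ0
    · rw [Complex.sq_norm]; exact hψ1
  · refine Fin.forall_fin_two.mpr ⟨?_, ?_⟩
    · rw [hlhs 0, hrhs 0, ← hc_def, hz2, ht_def]
    · rw [hlhs 1, hrhs 1, hc1]
      have h : ((-c) * z).re = ((-c) * r).re := by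
        simp only [neg_mul, Complex.neg_re, hz2, ht_def]
      rw [h]
end

section
/- Let U be the 3×3 Fourier matrix, U_{kj} = 3^{-1/2}·exp(2πi·jk/3) for j, k ∈ {0,1,2}, and let ρ be the density matrix on ℂ³ with diagonal (1/2, 1/2, 0) and all off-diagonal entries zero. Then there is no unit vector ψ ∈ ℂ³ with |ψ_j|² = ρ_{jj} for all j and |(Uψ)_k|² = (UρU†)_{kk} for all k (note (UρU†)_{kk} = 1/3 for all k); i.e., ρ cannot be replaced by a pure state having the same pair of outcome distributions. -/
open Matrix

/-- For the `3×3` Fourier matrix and the mixed state with diagonal `(1/2, 1/2, 0)`,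
no pure state has the same pair of outcome distributions. -/
theorem no_pure_state_d3
    (U : Matrix (Fin 3) (Fin 3) ℂ)
    (hU : ∀ k j : Fin 3, U k j = (Real.sqrt 3 : ℂ)⁻¹ *
        Complex.exp (2 * Real.pi * Complex.I * ((j.val : ℂ) * (k.val : ℂ)) / 3))
    (ρ : Matrix (Fin 3) (Fin 3) ℂ)
    (hρ : ρ = Matrix.diagonal ![(1 / 2 : ℂ), 1 / 2, 0]) :
    ¬ ∃ ψ : Fin 3 → ℂ, (∑ j, ‖ψ j‖ ^ 2 = 1) ∧
      (∀ j, ‖ψ j‖ ^ 2 = (ρ j j).re) ∧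
      (∀ k, ‖U.mulVec ψ k‖ ^ 2 = ((U * ρ * Uᴴ) k k).re) := by
  rintro ⟨ψ, -, hp, hq⟩
  set a := ψ 0 with ha_def
  set b := ψ 1 with hb_def
  have hs3 : ((Real.sqrt 3 : ℂ))⁻¹ * ((Real.sqrt 3 : ℂ))⁻¹ = 1/3 := by
    rw [← mul_inv]
    norm_cast
    rw [Real.mul_self_sqrt (by norm_num)]
    norm_num
  -- the normalized entries squared
  have ha : Complex.normSq a = 1/2 := by
    have := hp 0
    rw [hρ] at this
    simp [Complex.sq_norm] at this
    simpa using this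
  have hb : Complex.normSq b = 1/2 := by
    have := hp 1
    rw [hρ] at this
    simp [Complex.sq_norm] at this
    simpa using this
  have hc : ψ 2 = 0 := by
    have := hp 2
    rw [hρ] at this
    simp [Complex.sq_norm] at this
    exact this
  -- conj of U entries times U entries is 1/3
  have hUU : ∀ k j : Fin 3, U k j * (starRingEnd ℂ) (U k j) = 1/3 := by
    intro k j
    rw [hU]
    rw [_root_.map_mul, ← Complex.exp_conj]
    have h1 : (starRingEnd ℂ) ((Real.sqrt 3 : ℂ))⁻¹ = ((Real.sqrt 3 : ℂ))⁻¹ := by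
      rw [map_inv₀, Complex.conj_ofReal]
    have h2 : (starRingEnd ℂ) (2 * Real.pi * Complex.I * ((j.val : ℂ) * (k.val : ℂ)) / 3)
        = -(2 * Real.pi * Complex.I * ((j.val : ℂ) * (k.val : ℂ)) / 3) := by
      simp [map_div₀, _root_.map_mul, Complex.conj_I, Complex.conj_ofReal, map_ofNat]
      ring
    rw [h1, h2, mul_mul_mul_comm, ← Complex.exp_add, add_neg_cancel, Complex.exp_zero,
      mul_one, hs3]
  -- RHS is 1/3
  have hRHS : ∀ k, ((U * ρ * Uᴴ) k k).re = 1/3 := by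
    intro k
    have : (U * ρ * Uᴴ) k k = (1/2 : ℂ) * (U k 0 * (starRingEnd ℂ) (U k 0))
        + (1/2 : ℂ) * (U k 1 * (starRingEnd ℂ) (U k 1)) := by
      simp [Matrix.mul_apply, Fin.sum_univ_three, hρ, Matrix.conjTranspose_apply]
      ring
    rw [this, hUU, hUU]
    norm_num
  -- the exp values
  set e : ℂ := Complex.exp (2 * Real.pi * Complex.I / 3) with he_def
  have he1 : Complex.normSq e = 1 := by
    rw [← Complex.sq_norm, Complex.norm_exp]
    have : (2 * (Real.pi : ℂ) * Complex.I / 3).re = 0 := by simp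
    rw [this]
    norm_num
  have heim : e.im = Real.sin (2 * Real.pi / 3) := by
    have : (2 * (Real.pi : ℂ) * Complex.I / 3) = ((2 * Real.pi / 3 : ℝ) : ℂ) * Complex.I := by
      push_cast; ring
    rw [he_def, this, Complex.exp_ofReal_mul_I_im]
  have heim_pos : 0 < e.im := by
    rw [heim]
    apply Real.sin_pos_of_pos_of_lt_pi
    · positivity
    · nlinarith [Real.pi_pos]
  -- mulVec values
  have hv0 : U.mulVec ψ 0 = ((Real.sqrt 3 : ℂ))⁻¹ * (a + b) := by
    simp only [Matrix.mulVec, dotProduct, Fin.sum_univ_three, hU]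
    rw [hc]
    norm_num
    ring
  have hv1 : U.mulVec ψ 1 = ((Real.sqrt 3 : ℂ))⁻¹ * (a + e * b) := by
    simp only [Matrix.mulVec, dotProduct, Fin.sum_univ_three, hU]
    rw [hc]
    norm_num
    rw [he_def]
    ring_nf
    rw [← ha_def, ← hb_def]
    ring
  -- turn hq into normSq equations
  have key : ∀ w : ℂ, U.mulVec ψ 0 = ((Real.sqrt 3 : ℂ))⁻¹ * w → Complex.normSq w = 1 := by
    intro w hw
    have := hq 0
    rw [hRHS, hw, Complex.sq_norm, Complex.normSq_mul] at this
    have hns : Complex.normSq ((Real.sqrt 3 : ℂ))⁻¹ = 1/3 := by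
      have : ((Real.sqrt 3 : ℂ))⁻¹ = ((Real.sqrt 3)⁻¹ : ℝ) := by push_cast; ring
      rw [this, Complex.normSq_ofReal]
      rw [← Real.sqrt_inv]
      rw [Real.mul_self_sqrt (by norm_num)]
      norm_num
    rw [hns] at this
    linarith
  have key1 : ∀ w : ℂ, U.mulVec ψ 1 = ((Real.sqrt 3 : ℂ))⁻¹ * w → Complex.normSq w = 1 := by
    intro w hw
    have := hq 1
    rw [hRHS, hw, Complex.sq_norm, Complex.normSq_mul] at this
    have hns : Complex.normSq ((Real.sqrt 3 : ℂ))⁻¹ = 1/3 := by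
      have : ((Real.sqrt 3 : ℂ))⁻¹ = ((Real.sqrt 3)⁻¹ : ℝ) := by push_cast; ring
      rw [this, Complex.normSq_ofReal]
      rw [← Real.sqrt_inv]
      rw [Real.mul_self_sqrt (by norm_num)]
      norm_num
    rw [hns] at this
    linarith
  have h0 : Complex.normSq (a + b) = 1 := key _ hv0
  have h1 : Complex.normSq (a + e * b) = 1 := key1 _ hv1
  -- extract real part equations
  set z : ℂ := a * (starRingEnd ℂ) b with hz_def
  have hzre : z.re = 0 := by
    rw [Complex.normSq_add, ha, hb, Complex.mul_re] at h0
    simp only [Complex.conj_re, Complex.conj_im] at h0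
    rw [hz_def, Complex.mul_re]
    simp only [Complex.conj_re, Complex.conj_im]
    linarith
  have hzim : z.im = 0 := by
    rw [Complex.normSq_add, ha, Complex.normSq_mul, he1, hb] at h1
    have : (a * (starRingEnd ℂ) (e * b)).re = 0 := by linarith
    rw [_root_.map_mul, ← mul_assoc, mul_comm a, mul_assoc, ← hz_def] at this
    -- ((conj e) * z).re = e.re * z.re + e.im * z.im
    rw [Complex.mul_re] at this
    simp only [Complex.conj_re, Complex.conj_im] at this
    rw [hzre] at this
    simp at this
    rcases this with h | h
    · exact absurd h (ne_of_gt heim_pos)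
    · exact h
  have hz0 : z = 0 := Complex.ext hzre hzim
  have : Complex.normSq z = 0 := by rw [hz0]; simp
  rw [hz_def, Complex.normSq_mul, Complex.normSq_conj, ha, hb] at this
  norm_num at this
end

section
/- Let U be a real orthogonal d×d matrix and let g₁, g₂ be continuous, concave real-valued functions on the probability simplex Δ_d = {p ∈ ℝ^d : p_i ≥ 0, ∑_i p_i = 1}. Define f₁(ρ) = g₁(p^ρ) and f₂(ρ) = g₂(q^ρ) for density matrices ρ on ℂ^d, where p^ρ(i) = ρ_{ii} and q^ρ(k) = (UρU†)_{kk}. Then for every density matrix ρ on ℂ^d there exists a unit vector v ∈ ℝ^d with real entries such that f₁(vv†) ≤ f₁(ρ) and f₂(vv†) ≤ f₂(ρ). -/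
open Matrix
open scoped ComplexOrder

namespace RPSD

variable {d : ℕ}

/-- the probability simplex -/
def Sx (d : ℕ) : Set (Fin d → ℝ) := {p : Fin d → ℝ | (∀ i, 0 ≤ p i) ∧ ∑ i, p i = 1}

lemma mem_Sx_mix {r : ℕ} (μ : Fin r → ℝ) (P : Fin r → (Fin d → ℝ))
    (hμ0 : ∀ m, 0 ≤ μ m) (hμ1 : ∑ m, μ m = 1) (hP : ∀ m, P m ∈ Sx d) :
    (∑ m, μ m • P m) ∈ Sx d := by
  constructor
  · intro i
    have : (∑ m, μ m • P m) i = ∑ m, μ m * P m i := by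
      simp [Finset.sum_apply]
    rw [this]
    exact Finset.sum_nonneg fun m _ => mul_nonneg (hμ0 m) ((hP m).1 i)
  · have : ∀ i, (∑ m, μ m • P m) i = ∑ m, μ m * P m i := by
      intro i; simp [Finset.sum_apply]
    simp only [this]
    rw [Finset.sum_comm]
    calc ∑ m, ∑ i, μ m * P m i = ∑ m, μ m * ∑ i, P m i := by
            simp [Finset.mul_sum]
      _ = 1 := by
            simp only [fun m => (hP m).2]
            simpa using hμ1

/-- finite Jensen inequality for a concave function on the simplex -/
lemma jensen (g : (Fin d → ℝ) → ℝ)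
    (hconc : ∀ p q : Fin d → ℝ, p ∈ Sx d → q ∈ Sx d → ∀ t : ℝ, 0 ≤ t → t ≤ 1 →
      g (t • p + (1 - t) • q) ≥ t * g p + (1 - t) * g q) :
    ∀ (r : ℕ) (μ : Fin r → ℝ) (P : Fin r → (Fin d → ℝ)),
      (∀ m, 0 ≤ μ m) → ∑ m, μ m = 1 → (∀ m, P m ∈ Sx d) →
      ∑ m, μ m * g (P m) ≤ g (∑ m, μ m • P m) := by
  intro r
  induction r with
  | zero => intro μ P h0 h1 hP; simp at h1
  | succ r ih =>
    intro μ P h0 h1 hP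
    rcases eq_or_lt_of_le (h0 0) with ht0 | ht0
    · -- μ 0 = 0 : drop first
      have h1' : ∑ m : Fin r, μ m.succ = 1 := by
        rw [Fin.sum_univ_succ] at h1; linarith [h1]
      have := ih (fun m => μ m.succ) (fun m => P m.succ) (fun m => h0 m.succ) h1'
        (fun m => hP m.succ)
      rw [Fin.sum_univ_succ, Fin.sum_univ_succ, ← ht0]
      simpa using this
    · -- μ 0 > 0
      rcases eq_or_lt_of_le (by
        have : ∑ m : Fin r, μ m.succ = 1 - μ 0 := by
          rw [Fin.sum_univ_succ] at h1; linarith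
        have h2 : (0:ℝ) ≤ ∑ m : Fin r, μ m.succ :=
          Finset.sum_nonneg fun m _ => h0 m.succ
        linarith : μ 0 ≤ 1) with ht1 | ht1
      · -- μ 0 = 1 : rest is zero
        have hrest : ∑ m : Fin r, μ m.succ = 0 := by
          rw [Fin.sum_univ_succ] at h1; linarith
        have hz : ∀ m : Fin r, μ m.succ = 0 := by
          intro m
          have := Finset.sum_eq_zero_iff_of_nonneg (fun m _ => h0 (Fin.succ m)) |>.mp hrest
          exact this m (Finset.mem_univ m)
        rw [Fin.sum_univ_succ, Fin.sum_univ_succ]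
        simp only [hz, zero_mul, zero_smul, Finset.sum_const_zero, add_zero, ht1, one_mul,
          one_smul]
        exact le_refl _
      · -- 0 < μ 0 < 1
        set t := μ 0 with htdef
        have hts : (0:ℝ) < 1 - t := by linarith
        set ν : Fin r → ℝ := fun m => μ m.succ / (1 - t) with hν
        have hν0 : ∀ m, 0 ≤ ν m := fun m => div_nonneg (h0 m.succ) (le_of_lt hts)
        have hν1 : ∑ m, ν m = 1 := by
          rw [hν]
          rw [← Finset.sum_div]
          rw [div_eq_one_iff_eq (ne_of_gt hts)]
          rw [Fin.sum_univ_succ] at h1; linarith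
        have hmix := mem_Sx_mix ν (fun m => P m.succ) hν0 hν1 (fun m => hP m.succ)
        have hjr := ih ν (fun m => P m.succ) hν0 hν1 (fun m => hP m.succ)
        have hc := hconc (P 0) (∑ m, ν m • P m.succ) (hP 0) hmix t (le_of_lt ht0)
          (by linarith)
        have key : t • P 0 + (1 - t) • ∑ m, ν m • P m.succ = ∑ m, μ m • P m := by
          rw [Fin.sum_univ_succ, Finset.smul_sum]
          congr 1
          refine Finset.sum_congr rfl fun m _ => ?_
          rw [smul_smul, hν]
          congr 1
          field_simp
        rw [Fin.sum_univ_succ, ← key]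
        have : (1 - t) * (∑ m : Fin r, ν m * g (P m.succ)) = ∑ m : Fin r, μ m.succ * g (P m.succ) := by
          rw [Finset.mul_sum]
          refine Finset.sum_congr rfl fun m _ => ?_
          rw [hν]; field_simp
        nlinarith [hjr, hc, this]


/-- weight of the first atom in the rotating two-atom decomposition -/
noncomputable def cfun (t₀ θ : ℝ) : ℝ :=
  (1 - (2*t₀-1)^2) / (2*(1 - (2*t₀-1) * Real.cos (2*θ)))

lemma abs_a_lt_one {t₀ : ℝ} (h0 : 0 < t₀) (h1 : t₀ < 1) : |2*t₀-1| < 1 := by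
  rw [abs_lt]; constructor <;> linarith

lemma den_pos {t₀ : ℝ} (h0 : 0 < t₀) (h1 : t₀ < 1) (θ : ℝ) :
    0 < 2*(1 - (2*t₀-1) * Real.cos (2*θ)) := by
  have h := abs_a_lt_one h0 h1
  have : |(2*t₀-1) * Real.cos (2*θ)| < 1 := by
    rw [abs_mul]
    calc |2*t₀-1| * |Real.cos (2*θ)| ≤ |2*t₀-1| * 1 :=
          mul_le_mul_of_nonneg_left (Real.abs_cos_le_one _) (abs_nonneg _)
      _ = |2*t₀-1| := mul_one _
      _ < 1 := h
  have := (abs_lt.mp this).2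
  linarith

lemma cfun_pos {t₀ : ℝ} (h0 : 0 < t₀) (h1 : t₀ < 1) (θ : ℝ) : 0 < cfun t₀ θ := by
  have ha := abs_a_lt_one h0 h1
  have hnum : 0 < 1 - (2*t₀-1)^2 := by nlinarith [sq_abs (2*t₀-1), abs_nonneg (2*t₀-1)]
  exact div_pos hnum (den_pos h0 h1 θ)

lemma cfun_lt_one {t₀ : ℝ} (h0 : 0 < t₀) (h1 : t₀ < 1) (θ : ℝ) : cfun t₀ θ < 1 := by
  have hd := den_pos h0 h1 θ
  rw [cfun, div_lt_one hd]
  have ha := abs_a_lt_one h0 h1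
  have hc : |Real.cos (2*θ)| ≤ 1 := Real.abs_cos_le_one _
  have h2 : (2*t₀-1) * Real.cos (2*θ) ≤ |2*t₀-1| := by
    calc (2*t₀-1) * Real.cos (2*θ) ≤ |(2*t₀-1) * Real.cos (2*θ)| := le_abs_self _
      _ = |2*t₀-1| * |Real.cos (2*θ)| := abs_mul _ _
      _ ≤ |2*t₀-1| * 1 := mul_le_mul_of_nonneg_left hc (abs_nonneg _)
      _ = |2*t₀-1| := mul_one _
  have h3 : 0 < (1-|2*t₀-1|)^2 := pow_pos (by linarith) 2
  nlinarith [sq_abs (2*t₀-1), h2, h3]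

lemma continuous_cfun {t₀ : ℝ} (h0 : 0 < t₀) (h1 : t₀ < 1) :
    Continuous (fun θ => cfun t₀ θ) := by
  apply Continuous.div continuous_const
  · fun_prop
  · intro θ; exact ne_of_gt (den_pos h0 h1 θ)

lemma chord_aux {t₀ : ℝ} (h0 : 0 < t₀) (h1 : t₀ < 1) (θ : ℝ) :
    ∃ C S : ℝ, C^2 + S^2 = 1 ∧
      cfun t₀ θ * Real.cos θ^2 + (1 - cfun t₀ θ) * C^2 = t₀ ∧
      cfun t₀ θ * (Real.cos θ * Real.sin θ) + (1 - cfun t₀ θ) * (C*S) = 0 := by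
  set a := 2*t₀-1 with hadef
  set k := Real.cos (2*θ) with hkdef
  set s2 := Real.sin (2*θ) with hs2def
  have hks : k^2 + s2^2 = 1 := by
    rw [hkdef, hs2def]; rw [add_comm]; exact Real.sin_sq_add_cos_sq _
  set c := cfun t₀ θ with hcdef
  have hd := den_pos h0 h1 θ
  have hcden : c * (2*(1 - a*k)) = 1 - a^2 := by
    rw [hcdef, cfun, div_mul_cancel₀]
    exact ne_of_gt hd
  have hc0 := cfun_pos h0 h1 θ
  have hc1 := cfun_lt_one h0 h1 θ
  have h1c : (0:ℝ) < 1 - c := by linarith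
  set E₁ : ℝ := (a - c*k)/(1-c) with hE1def
  set E₂ : ℝ := (-(c*s2))/(1-c) with hE2def
  have hE : E₁^2 + E₂^2 = 1 := by
    rw [hE1def, hE2def, div_pow, div_pow, ← add_div, div_eq_one_iff_eq (by positivity)]
    linear_combination c^2 * hks + hcden
  have hE1le : (0:ℝ) ≤ (1+E₁)/2 := by nlinarith [sq_nonneg E₂, sq_nonneg (1+E₁)]
  -- first identity holds for any C with C^2 = (1+E₁)/2
  have hid1 : ∀ C : ℝ, C^2 = (1+E₁)/2 → c * Real.cos θ^2 + (1-c) * C^2 = t₀ := by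
    intro C hC
    rw [hC]
    have hcos : Real.cos θ^2 = (1+k)/2 := by
      rw [hkdef, Real.cos_two_mul]; ring
    have hE1' : (1-c)*E₁ = a - c*k := by rw [hE1def]; field_simp
    rw [hcos]
    linear_combination (1/2 : ℝ) * hE1' + (1/2 : ℝ) * hadef
  have hsin : Real.cos θ * Real.sin θ = s2/2 := by
    rw [hs2def, Real.sin_two_mul]; ring
  have hE2' : (1-c)*E₂ = -(c*s2) := by rw [hE2def]; field_simp
  by_cases hC0 : (1+E₁)/2 = 0
  · -- degenerate endpoint : E₁ = -1, E₂ = 0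
    have hE1m : E₁ = -1 := by linarith [hC0]
    have hE2z : E₂ = 0 := by nlinarith [hE, sq_nonneg E₂]
    refine ⟨0, 1, by ring, hid1 0 (by rw [hC0]; ring), ?_⟩
    have hcs : c * s2 = 0 := by
      have := hE2'
      rw [hE2z] at this
      linarith [this]
    rw [hsin]
    linarith [hcs]
  · -- generic case
    have hE1lt : 0 < (1+E₁)/2 := lt_of_le_of_ne hE1le (Ne.symm hC0)
    set C := Real.sqrt ((1+E₁)/2) with hCdef
    have hCpos : 0 < C := Real.sqrt_pos.mpr hE1lt
    have hC2 : C^2 = (1+E₁)/2 := Real.sq_sqrt hE1le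
    set S := E₂/(2*C) with hSdef
    have hCS : C*S = E₂/2 := by
      rw [hSdef]; field_simp
    have hE1ne : (1+E₁) ≠ 0 := by
      intro h; apply hC0; rw [h]; ring
    have hCS2 : C^2 + S^2 = 1 := by
      rw [hSdef, div_pow, hC2]
      have hE2sq : E₂^2 = (1-E₁)*(1+E₁) := by nlinarith [hE]
      rw [hE2sq]
      rw [mul_pow, hC2]
      field_simp
      ring
    refine ⟨C, S, hCS2, hid1 C hC2, ?_⟩
    rw [hsin, hCS]
    have : (1-c) * (E₂/2) = -(c*s2)/2 := by rw [← hE2']; ring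
    rw [this]
    ring

/-! ### The key induction -/

variable {d : ℕ}

/-- diagonal outcome distribution of a real pure state -/
def pd (v : Fin d → ℝ) (i : Fin d) : ℝ := v i ^ 2

lemma pd_mem_Sx {v : Fin d → ℝ} (h : ∑ i, v i ^ 2 = 1) : pd v ∈ Sx d :=
  ⟨fun i => sq_nonneg _, h⟩

lemma combine_scalar (c C S o s t₀ x y : ℝ)
    (id1 : c*o^2 + (1-c)*C^2 = t₀) (id2 : c*(o*s) + (1-c)*(C*S) = 0)
    (p1 : o^2+s^2 = 1) (p2 : C^2+S^2 = 1) :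
    c*(o*x+s*y)^2 + (1-c)*(C*x+S*y)^2 = t₀*x^2 + (1-t₀)*y^2 := by
  linear_combination (x^2-y^2)*id1 + (2*x*y)*id2 + (c*y^2)*p1 + ((1-c)*y^2)*p2

section Main

variable (U : Matrix (Fin d) (Fin d) ℝ) (g₁ g₂ : (Fin d → ℝ) → ℝ) (c₁ c₂ : ℝ)

/-- the goal: a dominating real pure state -/
def Gl : Prop :=
  ∃ v : Fin d → ℝ, (∑ i, v i ^ 2 = 1) ∧ g₁ (pd v) ≤ c₁ ∧ g₂ (pd (U *ᵥ v)) ≤ c₂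

/-- an orthonormal decomposition datum -/
def Dc (r : ℕ) (μ : Fin r → ℝ) (u : Fin r → Fin d → ℝ) : Prop :=
  (∀ m, 0 ≤ μ m) ∧ (∑ m, μ m = 1) ∧ (∀ m, ∑ i, u m i ^ 2 = 1) ∧
    (∀ m m', m ≠ m' → ∑ i, u m i * u m' i = 0)

/-- "type A" outcome of a pair rotation -/
abbrev TyA (x y : Fin d → ℝ) : Prop :=
  g₁ (pd x) ≤ c₁ ∧ g₁ (pd y) ≤ c₁ ∧ c₂ < g₂ (pd (U *ᵥ x)) ∧ c₂ < g₂ (pd (U *ᵥ y))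

/-- "type B" outcome of a pair rotation -/
abbrev TyB (x y : Fin d → ℝ) : Prop :=
  g₂ (pd (U *ᵥ x)) ≤ c₂ ∧ g₂ (pd (U *ᵥ y)) ≤ c₂ ∧ c₁ < g₁ (pd x) ∧ c₁ < g₁ (pd y)

variable {U g₁ g₂ c₁ c₂}

lemma norm_pres (hU : U ∈ Matrix.orthogonalGroup (Fin d) ℝ) (v : Fin d → ℝ) :
    ∑ k, (U *ᵥ v) k ^ 2 = ∑ i, v i ^ 2 := by
  have h1 : star U * U = 1 := mul_eq_one_comm.mp ((Matrix.mem_orthogonalGroup_iff _ _).mp hU)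
  have h2 : ∀ i j, ∑ k, U k i * U k j = (1 : Matrix (Fin d) (Fin d) ℝ) i j := by
    intro i j
    have := congrFun (congrFun h1 i) j
    simpa [Matrix.mul_apply, Matrix.star_apply, mul_comm] using this
  calc ∑ k, (U *ᵥ v) k ^ 2 = ∑ k, ∑ i, ∑ j, (U k i * U k j) * (v i * v j) := by
        refine Finset.sum_congr rfl fun k _ => ?_
        rw [Matrix.mulVec, dotProduct, sq, Finset.sum_mul_sum]
        exact Finset.sum_congr rfl fun i _ => Finset.sum_congr rfl fun j _ => by ring
    _ = ∑ i, ∑ j, (∑ k, U k i * U k j) * (v i * v j) := by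
        rw [Finset.sum_comm]
        refine Finset.sum_congr rfl fun i _ => ?_
        rw [Finset.sum_comm]
        refine Finset.sum_congr rfl fun j _ => ?_
        rw [Finset.sum_mul]
    _ = ∑ i, ∑ j, ((1 : Matrix (Fin d) (Fin d) ℝ) i j) * (v i * v j) := by
        simp only [h2]
    _ = ∑ i, v i ^ 2 := by
        refine Finset.sum_congr rfl fun i _ => ?_
        rw [Finset.sum_eq_single i]
        · simp [Matrix.one_apply, sq]
        · intro j _ hj; simp [Matrix.one_apply, Ne.symm hj]
        · intro h; simp at h

lemma pair_step
    (hU : U ∈ Matrix.orthogonalGroup (Fin d) ℝ)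
    (hcont₁ : ContinuousOn g₁ (Sx d)) (hcont₂ : ContinuousOn g₂ (Sx d))
    (hconc₁ : ∀ p q : Fin d → ℝ, p ∈ Sx d → q ∈ Sx d → ∀ t : ℝ, 0 ≤ t → t ≤ 1 →
      g₁ (t • p + (1 - t) • q) ≥ t * g₁ p + (1 - t) * g₁ q)
    (hconc₂ : ∀ p q : Fin d → ℝ, p ∈ Sx d → q ∈ Sx d → ∀ t : ℝ, 0 ≤ t → t ≤ 1 →
      g₂ (t • p + (1 - t) • q) ≥ t * g₂ p + (1 - t) * g₂ q)
    (r : ℕ) (μ : Fin (r+2) → ℝ) (u : Fin (r+2) → Fin d → ℝ)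
    (hD : Dc (r+2) μ u) (m₁' : Fin (r+1))
    (hpos0 : 0 < μ 0) (hpos1 : 0 < μ m₁'.succ)
    (hJ1 : g₁ (∑ m, μ m • pd (u m)) ≤ c₁)
    (hJ2 : g₂ (∑ m, μ m • pd (U *ᵥ u m)) ≤ c₂) :
    Gl U g₁ g₂ c₁ c₂ ∨
    (∃ (μ' : Fin (r+1) → ℝ) (u' : Fin (r+1) → Fin d → ℝ),
       Dc (r+1) μ' u' ∧ g₁ (∑ m, μ' m • pd (u' m)) ≤ c₁ ∧
       g₂ (∑ m, μ' m • pd (U *ᵥ u' m)) ≤ c₂) ∨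
    TyA U g₁ g₂ c₁ c₂ (u 0) (u m₁'.succ) ∨ TyB U g₁ g₂ c₁ c₂ (u 0) (u m₁'.succ) := by
  classical
  obtain ⟨h0, h1, hunit, horth⟩ := hD
  set m₁ : Fin (r+2) := m₁'.succ with hm₁def
  have hm₁0 : m₁ ≠ 0 := Fin.succ_ne_zero m₁'
  set e : Fin r → Fin (r+2) := fun j => (m₁'.succAbove j).succ with hedef
  have he_inj : Function.Injective e := fun a b h =>
    Fin.succAbove_right_injective (Fin.succ_injective _ h)
  have he0 : ∀ j, e j ≠ 0 := fun j => Fin.succ_ne_zero _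
  have hem₁ : ∀ j, e j ≠ m₁ := fun j h =>
    Fin.succAbove_ne m₁' j (Fin.succ_injective _ h)
  have hsplitV : ∀ (f : Fin (r+2) → (Fin d → ℝ)),
      ∑ m, f m = f 0 + f m₁ + ∑ j : Fin r, f (e j) := by
    intro f
    rw [Fin.sum_univ_succ f, Fin.sum_univ_succAbove (fun j => f j.succ) m₁', ← add_assoc]
  have hsplitR : ∀ (f : Fin (r+2) → ℝ),
      ∑ m, f m = f 0 + f m₁ + ∑ j : Fin r, f (e j) := by
    intro f
    rw [Fin.sum_univ_succ f, Fin.sum_univ_succAbove (fun j => f j.succ) m₁', ← add_assoc]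
  set π' : ℝ := μ 0 + μ m₁ with hπdef
  have hπpos : 0 < π' := by positivity
  have hrest0 : 0 ≤ ∑ j : Fin r, μ (e j) :=
    Finset.sum_nonneg fun j _ => h0 _
  have hπsum : π' + ∑ j : Fin r, μ (e j) = 1 := by
    rw [← h1, hsplitR μ]
  have hπle : π' ≤ 1 := by linarith
  set t₀ : ℝ := μ 0 / π' with ht₀def
  have ht₀pos : 0 < t₀ := div_pos hpos0 hπpos
  have ht₀lt1 : t₀ < 1 := by
    rw [ht₀def, div_lt_one hπpos, hπdef]
    linarith
  have hπt₀ : π' * t₀ = μ 0 := by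
    rw [ht₀def]; field_simp
  have hπt₀' : π' * (1 - t₀) = μ m₁ := by
    have h' : π' * (1 - t₀) = π' - π' * t₀ := by ring
    rw [h', hπt₀, hπdef]; ring
  -- the rotating first atom
  set w₁ : ℝ → (Fin d → ℝ) := fun θ => Real.cos θ • u 0 + Real.sin θ • u m₁ with hw₁def
  have hw₁a : ∀ θ i, w₁ θ i = Real.cos θ * u 0 i + Real.sin θ * u m₁ i := fun _ _ => rfl
  set ν : ℝ → ℝ := fun θ => π' * cfun t₀ θ with hνdef
  have hνa : ∀ θ, ν θ = π' * cfun t₀ θ := fun _ => rfl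
  have hc0 : ∀ θ, 0 < cfun t₀ θ := cfun_pos ht₀pos ht₀lt1
  have hc1 : ∀ θ, cfun t₀ θ < 1 := cfun_lt_one ht₀pos ht₀lt1
  have hν0 : ∀ θ, 0 < ν θ := fun θ => mul_pos hπpos (hc0 θ)
  have hν1 : ∀ θ, ν θ < 1 := by
    intro θ
    rw [hνa]
    nlinarith [hc0 θ, hc1 θ, hπpos, hπle]
  have hν1' : ∀ θ, 0 < 1 - ν θ := fun θ => by linarith [hν1 θ]
  -- squared-sum expansion helper
  have hsq_expand : ∀ (a b : ℝ) (x y : Fin d → ℝ),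
      ∑ i, (a • x + b • y) i ^ 2 =
        a^2 * (∑ i, x i ^ 2) + b^2 * (∑ i, y i ^ 2) + (2*a*b) * (∑ i, x i * y i) := by
    intro a b x y
    rw [Finset.mul_sum, Finset.mul_sum, Finset.mul_sum, ← Finset.sum_add_distrib,
      ← Finset.sum_add_distrib]
    refine Finset.sum_congr rfl fun i _ => ?_
    simp only [Pi.add_apply, Pi.smul_apply, smul_eq_mul]
    ring
  have h0m₁ : (0 : Fin (r+2)) ≠ m₁ := fun h => hm₁0 h.symm
  have hw₁unit : ∀ θ, ∑ i, (w₁ θ) i ^ 2 = 1 := by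
    intro θ
    rw [hw₁def]
    rw [hsq_expand, hunit 0, hunit m₁, horth 0 m₁ h0m₁]
    simp [Real.cos_sq_add_sin_sq θ]
  -- mulVec linearity
  have hUlin : ∀ (a b : ℝ) (x y : Fin d → ℝ),
      U *ᵥ (a • x + b • y) = a • (U *ᵥ x) + b • (U *ᵥ y) := by
    intro a b x y
    rw [Matrix.mulVec_add, Matrix.mulVec_smul, Matrix.mulVec_smul]
  have hUw₁ : ∀ θ, U *ᵥ w₁ θ = Real.cos θ • (U *ᵥ u 0) + Real.sin θ • (U *ᵥ u m₁) :=
    fun θ => hUlin _ _ _ _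
  have hUw₁unit : ∀ θ, ∑ k, (U *ᵥ w₁ θ) k ^ 2 = 1 := fun θ =>
    (norm_pres hU _).trans (hw₁unit θ)
  -- total distributions
  set PT : Fin d → ℝ := ∑ m, μ m • pd (u m) with hPTdef
  set QT : Fin d → ℝ := ∑ m, μ m • pd (U *ᵥ u m) with hQTdef
  set P₂ : ℝ → (Fin d → ℝ) := fun θ => (1 - ν θ)⁻¹ • (PT - ν θ • pd (w₁ θ)) with hP₂def
  set Q₂ : ℝ → (Fin d → ℝ) := fun θ => (1 - ν θ)⁻¹ • (QT - ν θ • pd (U *ᵥ w₁ θ)) with hQ₂def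
  have hP₂a : ∀ θ, P₂ θ = (1 - ν θ)⁻¹ • (PT - ν θ • pd (w₁ θ)) := fun _ => rfl
  have hQ₂a : ∀ θ, Q₂ θ = (1 - ν θ)⁻¹ • (QT - ν θ • pd (U *ᵥ w₁ θ)) := fun _ => rfl
  -- the second atom at each angle, and the induced residual decomposition
  have hsecond : ∀ θ : ℝ, ∃ w₂ : Fin d → ℝ,
      (∑ i, w₂ i ^ 2 = 1) ∧
      (∀ j, ∑ i, w₂ i * u (e j) i = 0) ∧
      P₂ θ = (π' * (1 - cfun t₀ θ) * (1 - ν θ)⁻¹) • pd w₂ +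
        ∑ j : Fin r, (μ (e j) * (1 - ν θ)⁻¹) • pd (u (e j)) ∧
      Q₂ θ = (π' * (1 - cfun t₀ θ) * (1 - ν θ)⁻¹) • pd (U *ᵥ w₂) +
        ∑ j : Fin r, (μ (e j) * (1 - ν θ)⁻¹) • pd (U *ᵥ u (e j)) := by
    intro θ
    obtain ⟨C, S, hCS2, id1, id2⟩ := chord_aux ht₀pos ht₀lt1 θ
    set w₂ : Fin d → ℝ := C • u 0 + S • u m₁ with hw₂def
    have hw₂a : ∀ i, w₂ i = C * u 0 i + S * u m₁ i := fun _ => rfl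
    have hUw₂ : U *ᵥ w₂ = C • (U *ᵥ u 0) + S • (U *ᵥ u m₁) := hUlin _ _ _ _
    have hpt : PT - ν θ • pd (w₁ θ) = (π' * (1 - cfun t₀ θ)) • pd w₂ +
        ∑ j : Fin r, μ (e j) • pd (u (e j)) := by
      have hPTsplit : PT = μ 0 • pd (u 0) + μ m₁ • pd (u m₁)
          + ∑ j : Fin r, μ (e j) • pd (u (e j)) :=
        hsplitV (fun m => μ m • pd (u m))
      have hcore : μ 0 • pd (u 0) + μ m₁ • pd (u m₁) =
          ν θ • pd (w₁ θ) + (π' * (1 - cfun t₀ θ)) • pd w₂ := by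
        funext i
        have hcs := combine_scalar (cfun t₀ θ) C S (Real.cos θ) (Real.sin θ) t₀
          (u 0 i) (u m₁ i) id1 id2 (Real.cos_sq_add_sin_sq θ) hCS2
        simp only [Pi.add_apply, Pi.smul_apply, smul_eq_mul, pd, hw₁a, hw₂a, hνa]
        linear_combination (-π') * hcs - (u 0 i)^2 * hπt₀ - (u m₁ i)^2 * hπt₀'
      rw [hPTsplit, hcore]
      abel
    have hqt : QT - ν θ • pd (U *ᵥ w₁ θ) = (π' * (1 - cfun t₀ θ)) • pd (U *ᵥ w₂) +
        ∑ j : Fin r, μ (e j) • pd (U *ᵥ u (e j)) := by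
      have hQTsplit : QT = μ 0 • pd (U *ᵥ u 0) + μ m₁ • pd (U *ᵥ u m₁)
          + ∑ j : Fin r, μ (e j) • pd (U *ᵥ u (e j)) :=
        hsplitV (fun m => μ m • pd (U *ᵥ u m))
      have hcore : μ 0 • pd (U *ᵥ u 0) + μ m₁ • pd (U *ᵥ u m₁) =
          ν θ • pd (U *ᵥ w₁ θ) + (π' * (1 - cfun t₀ θ)) • pd (U *ᵥ w₂) := by
        funext k
        have hcs := combine_scalar (cfun t₀ θ) C S (Real.cos θ) (Real.sin θ) t₀
          ((U *ᵥ u 0) k) ((U *ᵥ u m₁) k) id1 id2 (Real.cos_sq_add_sin_sq θ) hCS2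
        simp only [hUw₁ θ, hUw₂, Pi.add_apply, Pi.smul_apply, smul_eq_mul, pd, hνa]
        linear_combination (-π') * hcs - ((U *ᵥ u 0) k)^2 * hπt₀ - ((U *ᵥ u m₁) k)^2 * hπt₀'
      rw [hQTsplit, hcore]
      abel
    refine ⟨w₂, ?_, ?_, ?_, ?_⟩
    · rw [hw₂def, hsq_expand, hunit 0, hunit m₁, horth 0 m₁ h0m₁]
      linear_combination hCS2
    · intro j
      have expand : ∀ i, w₂ i * u (e j) i =
          C * (u 0 i * u (e j) i) + S * (u m₁ i * u (e j) i) := by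
        intro i; rw [hw₂a]; ring
      rw [Finset.sum_congr rfl fun i _ => expand i, Finset.sum_add_distrib,
        ← Finset.mul_sum, ← Finset.mul_sum, horth 0 (e j) (Ne.symm (he0 j)),
        horth m₁ (e j) (Ne.symm (hem₁ j))]
      ring
    · rw [hP₂a, hpt, smul_add, smul_smul, Finset.smul_sum]
      congr 1
      · congr 1
        ring
      · refine Finset.sum_congr rfl fun j _ => ?_
        rw [smul_smul]
        congr 1
        ring
    · rw [hQ₂a, hqt, smul_add, smul_smul, Finset.smul_sum]
      congr 1
      · congr 1
        ring
      · refine Finset.sum_congr rfl fun j _ => ?_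
        rw [smul_smul]
        congr 1
        ring
  -- total weight of the residual decomposition
  have hwt_sum : ∀ θ : ℝ, π' * (1 - cfun t₀ θ) * (1 - ν θ)⁻¹ +
      ∑ j : Fin r, μ (e j) * (1 - ν θ)⁻¹ = 1 := by
    intro θ
    rw [← Finset.sum_mul, ← add_mul, inv_eq_one_div, mul_one_div,
      div_eq_one_iff_eq (ne_of_gt (hν1' θ)), hνa]
    linarith [hπsum]
  have hsum_pd : ∀ (x : Fin d → ℝ), (∑ i, x i ^ 2 = 1) → ∑ i, pd x i = 1 := by
    intro x hx
    simp only [pd]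
    exact hx
  have hP₂Sx : ∀ θ, P₂ θ ∈ Sx d := by
    intro θ
    obtain ⟨w₂, hw₂u, _, hPf, _⟩ := hsecond θ
    rw [hPf]
    constructor
    · intro i
      simp only [Pi.add_apply, Pi.smul_apply, smul_eq_mul, Finset.sum_apply]
      have hc1θ := hc1 θ
      have hn := hν1' θ
      refine add_nonneg (mul_nonneg (mul_nonneg (mul_nonneg hπpos.le (by linarith))
        (inv_nonneg.mpr hn.le)) (sq_nonneg _)) ?_
      exact Finset.sum_nonneg fun j _ =>
        mul_nonneg (mul_nonneg (h0 _) (inv_nonneg.mpr hn.le)) (sq_nonneg _)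
    · simp only [Pi.add_apply, Pi.smul_apply, smul_eq_mul, Finset.sum_apply]
      rw [Finset.sum_add_distrib, ← Finset.mul_sum, hsum_pd w₂ hw₂u, mul_one,
        Finset.sum_comm]
      have hrow : ∀ j : Fin r, ∑ i, μ (e j) * (1 - ν θ)⁻¹ * pd (u (e j)) i
          = μ (e j) * (1 - ν θ)⁻¹ := by
        intro j
        rw [← Finset.mul_sum, hsum_pd _ (hunit (e j)), mul_one]
      rw [Finset.sum_congr rfl fun j _ => hrow j]
      exact hwt_sum θ
  have hQ₂Sx : ∀ θ, Q₂ θ ∈ Sx d := by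
    intro θ
    obtain ⟨w₂, hw₂u, _, _, hQf⟩ := hsecond θ
    rw [hQf]
    constructor
    · intro i
      simp only [Pi.add_apply, Pi.smul_apply, smul_eq_mul, Finset.sum_apply]
      have hc1θ := hc1 θ
      have hn := hν1' θ
      refine add_nonneg (mul_nonneg (mul_nonneg (mul_nonneg hπpos.le (by linarith))
        (inv_nonneg.mpr hn.le)) (sq_nonneg _)) ?_
      exact Finset.sum_nonneg fun j _ =>
        mul_nonneg (mul_nonneg (h0 _) (inv_nonneg.mpr hn.le)) (sq_nonneg _)
    · simp only [Pi.add_apply, Pi.smul_apply, smul_eq_mul, Finset.sum_apply]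
      rw [Finset.sum_add_distrib, ← Finset.mul_sum,
        hsum_pd _ ((norm_pres hU w₂).trans hw₂u), mul_one, Finset.sum_comm]
      have hrow : ∀ j : Fin r, ∑ k, μ (e j) * (1 - ν θ)⁻¹ * pd (U *ᵥ u (e j)) k
          = μ (e j) * (1 - ν θ)⁻¹ := by
        intro j
        rw [← Finset.mul_sum, hsum_pd _ ((norm_pres hU _).trans (hunit (e j))), mul_one]
      rw [Finset.sum_congr rfl fun j _ => hrow j]
      exact hwt_sum θ
  -- the mixing identities and the two concavity inequalities
  have hmixP : ∀ θ, ν θ • pd (w₁ θ) + (1 - ν θ) • P₂ θ = PT := by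
    intro θ
    rw [hP₂a, smul_smul, mul_inv_cancel₀ (ne_of_gt (hν1' θ)), one_smul]
    abel
  have hmixQ : ∀ θ, ν θ • pd (U *ᵥ w₁ θ) + (1 - ν θ) • Q₂ θ = QT := by
    intro θ
    rw [hQ₂a, smul_smul, mul_inv_cancel₀ (ne_of_gt (hν1' θ)), one_smul]
    abel
  have hkey₁ : ∀ θ, ν θ * g₁ (pd (w₁ θ)) + (1 - ν θ) * g₁ (P₂ θ) ≤ c₁ := by
    intro θ
    have h' := hconc₁ (pd (w₁ θ)) (P₂ θ) (pd_mem_Sx (hw₁unit θ)) (hP₂Sx θ) (ν θ)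
      (le_of_lt (hν0 θ)) (le_of_lt (hν1 θ))
    rw [hmixP θ] at h'
    exact le_trans h' hJ1
  have hkey₂ : ∀ θ, ν θ * g₂ (pd (U *ᵥ w₁ θ)) + (1 - ν θ) * g₂ (Q₂ θ) ≤ c₂ := by
    intro θ
    have h' := hconc₂ (pd (U *ᵥ w₁ θ)) (Q₂ θ) (pd_mem_Sx (hUw₁unit θ)) (hQ₂Sx θ) (ν θ)
      (le_of_lt (hν0 θ)) (le_of_lt (hν1 θ))
    rw [hmixQ θ] at h'
    exact le_trans h' hJ2
  -- case analysis
  by_cases hX : ∃ θ ∈ Set.Icc (0:ℝ) (Real.pi/2),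
      g₁ (pd (w₁ θ)) ≤ c₁ ∧ g₂ (pd (U *ᵥ w₁ θ)) ≤ c₂
  · obtain ⟨θ, _, hx1, hx2⟩ := hX
    exact Or.inl ⟨w₁ θ, hw₁unit θ, hx1, hx2⟩
  by_cases hY : ∃ θ ∈ Set.Icc (0:ℝ) (Real.pi/2), g₁ (P₂ θ) ≤ c₁ ∧ g₂ (Q₂ θ) ≤ c₂
  · -- build the smaller decomposition
    obtain ⟨θ, _, hy1, hy2⟩ := hY
    obtain ⟨w₂, hw₂u, hw₂orth, hPf, hQf⟩ := hsecond θ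
    refine Or.inr (Or.inl ⟨Fin.cons (π' * (1 - cfun t₀ θ) * (1 - ν θ)⁻¹)
      (fun j => μ (e j) * (1 - ν θ)⁻¹),
      Fin.cons w₂ (fun j => u (e j)), ⟨?_, ?_, ?_, ?_⟩, ?_, ?_⟩)
    · intro m
      rcases Fin.eq_zero_or_eq_succ m with hm | ⟨j, hj⟩
      · rw [hm, Fin.cons_zero]
        exact mul_nonneg (mul_nonneg hπpos.le (by linarith [hc1 θ]))
          (inv_nonneg.mpr (hν1' θ).le)
      · rw [hj, Fin.cons_succ]
        exact mul_nonneg (h0 _) (inv_nonneg.mpr (hν1' θ).le)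
    · rw [Fin.sum_univ_succ]
      simp only [Fin.cons_zero, Fin.cons_succ]
      exact hwt_sum θ
    · intro m
      rcases Fin.eq_zero_or_eq_succ m with hm | ⟨j, hj⟩
      · rw [hm, Fin.cons_zero]; exact hw₂u
      · rw [hj, Fin.cons_succ]; exact hunit _
    · intro m m' hne
      rcases Fin.eq_zero_or_eq_succ m with hm | ⟨j, hj⟩ <;>
        rcases Fin.eq_zero_or_eq_succ m' with hm' | ⟨j', hj'⟩
      · exact absurd (hm.trans hm'.symm) hne
      · rw [hm, hj', Fin.cons_zero, Fin.cons_succ]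
        exact hw₂orth j'
      · rw [hm', hj, Fin.cons_zero, Fin.cons_succ]
        rw [Finset.sum_congr rfl fun i _ => mul_comm (u (e j) i) (w₂ i)]
        exact hw₂orth j
      · rw [hj, hj', Fin.cons_succ, Fin.cons_succ]
        refine horth _ _ fun hc => ?_
        exact hne (by rw [hj, hj', he_inj hc])
    · rw [Fin.sum_univ_succ]
      simp only [Fin.cons_zero, Fin.cons_succ]
      rw [← hPf]
      exact hy1
    · rw [Fin.sum_univ_succ]
      simp only [Fin.cons_zero, Fin.cons_succ]
      rw [← hQf]
      exact hy2
  -- topological dichotomy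
  push_neg at hX hY
  have hcν : Continuous ν := continuous_const.mul (continuous_cfun ht₀pos ht₀lt1)
  have hcw : Continuous (fun θ => pd (w₁ θ)) := by
    apply continuous_pi
    intro i
    simp only [pd, hw₁a]
    fun_prop
  have hcUw : Continuous (fun θ => pd (U *ᵥ w₁ θ)) := by
    apply continuous_pi
    intro k
    have h' : ∀ θ, pd (U *ᵥ w₁ θ) k =
        (Real.cos θ * (U *ᵥ u 0) k + Real.sin θ * (U *ᵥ u m₁) k)^2 := by
      intro θ
      rw [pd, hUw₁ θ]
      simp
    simp only [h']
    fun_prop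
  have hinv : Continuous (fun θ => (1 - ν θ)⁻¹) :=
    Continuous.inv₀ (continuous_const.sub hcν) (fun θ => ne_of_gt (hν1' θ))
  have hcP₂ : Continuous P₂ := by
    apply continuous_pi
    intro i
    have h' : ∀ θ, P₂ θ i = (1 - ν θ)⁻¹ * (PT i - ν θ * pd (w₁ θ) i) := fun _ => rfl
    simp only [h']
    exact hinv.mul ((continuous_const).sub (hcν.mul ((continuous_apply i).comp hcw)))
  have hcQ₂ : Continuous Q₂ := by
    apply continuous_pi
    intro k
    have h' : ∀ θ, Q₂ θ k = (1 - ν θ)⁻¹ * (QT k - ν θ * pd (U *ᵥ w₁ θ) k) := fun _ => rfl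
    simp only [h']
    exact hinv.mul ((continuous_const).sub (hcν.mul ((continuous_apply k).comp hcUw)))
  set I : Set ℝ := Set.Icc (0:ℝ) (Real.pi/2) with hIdef
  have hIclosed : IsClosed I := isClosed_Icc
  have hfα : ContinuousOn (fun θ => g₁ (pd (w₁ θ))) I :=
    hcont₁.comp hcw.continuousOn (fun θ _ => pd_mem_Sx (hw₁unit θ))
  have hfβ : ContinuousOn (fun θ => g₂ (pd (U *ᵥ w₁ θ))) I :=
    hcont₂.comp hcUw.continuousOn (fun θ _ => pd_mem_Sx (hUw₁unit θ))
  set A : Set ℝ := I ∩ (fun θ => g₁ (pd (w₁ θ))) ⁻¹' Set.Iic c₁ with hAdef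
  set B : Set ℝ := I ∩ (fun θ => g₂ (pd (U *ᵥ w₁ θ))) ⁻¹' Set.Iic c₂ with hBdef
  have hAclosed : IsClosed A := hfα.preimage_isClosed_of_isClosed hIclosed isClosed_Iic
  have hBclosed : IsClosed B := hfβ.preimage_isClosed_of_isClosed hIclosed isClosed_Iic
  have hcover : I ⊆ A ∪ B := by
    intro θ hθ
    by_cases hα : g₁ (pd (w₁ θ)) ≤ c₁
    · exact Or.inl ⟨hθ, hα⟩
    · push_neg at hα
      have h2 : g₁ (P₂ θ) ≤ c₁ := by
        by_contra hcon
        push_neg at hcon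
        nlinarith [hkey₁ θ, mul_pos (hν0 θ) (sub_pos.mpr hα),
          mul_pos (hν1' θ) (sub_pos.mpr hcon)]
      have h3 : c₂ < g₂ (Q₂ θ) := hY θ hθ h2
      have h4 : g₂ (pd (U *ᵥ w₁ θ)) ≤ c₂ := by
        by_contra hcon
        push_neg at hcon
        nlinarith [hkey₂ θ, mul_pos (hν0 θ) (sub_pos.mpr hcon),
          mul_pos (hν1' θ) (sub_pos.mpr h3)]
      exact Or.inr ⟨hθ, h4⟩
  have hdisj : I ∩ (A ∩ B) = ∅ := by
    ext θ
    simp only [Set.mem_inter_iff, Set.mem_empty_iff_false, iff_false]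
    rintro ⟨hθI, ⟨_, hA'⟩, ⟨_, hB'⟩⟩
    exact absurd hB' (not_le.mpr (hX θ hθI hA'))
  have hIpc : IsPreconnected I := isPreconnected_Icc
  have hIAB : I ⊆ A ∨ I ⊆ B := by
    by_contra hcon
    push_neg at hcon
    obtain ⟨hnA, hnB⟩ := hcon
    have hAne : (I ∩ A).Nonempty := by
      obtain ⟨θ, hθI, hθnB⟩ := Set.not_subset.mp hnB
      rcases hcover hθI with h | h
      · exact ⟨θ, hθI, h⟩
      · exact absurd h hθnB
    have hBne : (I ∩ B).Nonempty := by
      obtain ⟨θ, hθI, hθnA⟩ := Set.not_subset.mp hnA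
      rcases hcover hθI with h | h
      · exact absurd h hθnA
      · exact ⟨θ, hθI, h⟩
    have h' := (isPreconnected_closed_iff.mp hIpc) A B hAclosed hBclosed hcover hAne hBne
    rw [hdisj] at h'
    exact Set.not_nonempty_empty h'
  -- endpoints
  have hpi2 : (0:ℝ) ≤ Real.pi/2 := by positivity
  have h0I : (0:ℝ) ∈ I := Set.mem_Icc.mpr ⟨le_refl 0, hpi2⟩
  have hpI : Real.pi/2 ∈ I := Set.mem_Icc.mpr ⟨hpi2, le_refl _⟩
  have hw₁0 : w₁ 0 = u 0 := by
    funext i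
    rw [hw₁a]
    simp
  have hw₁p : w₁ (Real.pi/2) = u m₁ := by
    funext i
    rw [hw₁a]
    simp
  rcases hIAB with hIA | hIB
  · -- all of I is type α : TyA
    have hα0 : g₁ (pd (w₁ 0)) ≤ c₁ := (hIA h0I).2
    have hαp : g₁ (pd (w₁ (Real.pi/2))) ≤ c₁ := (hIA hpI).2
    have hβ0 : c₂ < g₂ (pd (U *ᵥ w₁ 0)) := hX 0 h0I hα0
    have hβp : c₂ < g₂ (pd (U *ᵥ w₁ (Real.pi/2))) := hX _ hpI hαp
    refine Or.inr (Or.inr (Or.inl ⟨?_, ?_, ?_, ?_⟩))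
    · rwa [hw₁0] at hα0
    · rwa [hw₁p] at hαp
    · rwa [hw₁0] at hβ0
    · rwa [hw₁p] at hβp
  · -- all of I is type β : TyB
    have hβ0 : g₂ (pd (U *ᵥ w₁ 0)) ≤ c₂ := (hIB h0I).2
    have hβp : g₂ (pd (U *ᵥ w₁ (Real.pi/2))) ≤ c₂ := (hIB hpI).2
    have hα0 : c₁ < g₁ (pd (w₁ 0)) := by
      by_contra hcon
      push_neg at hcon
      exact absurd hβ0 (not_le.mpr (hX 0 h0I hcon))
    have hαp : c₁ < g₁ (pd (w₁ (Real.pi/2))) := by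
      by_contra hcon
      push_neg at hcon
      exact absurd hβp (not_le.mpr (hX _ hpI hcon))
    refine Or.inr (Or.inr (Or.inr ⟨?_, ?_, ?_, ?_⟩))
    · rwa [hw₁0] at hβ0
    · rwa [hw₁p] at hβp
    · rwa [hw₁0] at hα0
    · rwa [hw₁p] at hαp

lemma key
    (hU : U ∈ Matrix.orthogonalGroup (Fin d) ℝ)
    (hcont₁ : ContinuousOn g₁ (Sx d)) (hcont₂ : ContinuousOn g₂ (Sx d))
    (hconc₁ : ∀ p q : Fin d → ℝ, p ∈ Sx d → q ∈ Sx d → ∀ t : ℝ, 0 ≤ t → t ≤ 1 →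
      g₁ (t • p + (1 - t) • q) ≥ t * g₁ p + (1 - t) * g₁ q)
    (hconc₂ : ∀ p q : Fin d → ℝ, p ∈ Sx d → q ∈ Sx d → ∀ t : ℝ, 0 ≤ t → t ≤ 1 →
      g₂ (t • p + (1 - t) • q) ≥ t * g₂ p + (1 - t) * g₂ q) :
    ∀ (r : ℕ) (μ : Fin r → ℝ) (u : Fin r → Fin d → ℝ), Dc r μ u →
      g₁ (∑ m, μ m • pd (u m)) ≤ c₁ → g₂ (∑ m, μ m • pd (U *ᵥ u m)) ≤ c₂ →
      Gl U g₁ g₂ c₁ c₂ := by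
  intro r
  induction r with
  | zero =>
    intro μ u hD hJ1 hJ2
    exact absurd hD.2.1 (by simp)
  | succ r ih =>
    intro μ u hD hJ1 hJ2
    obtain ⟨h0, h1, hunit, horth⟩ := hD
    by_cases hz : ∃ m, μ m = 0
    · obtain ⟨m₀, hm₀⟩ := hz
      have hsz : ∀ (f : Fin (r+1) → (Fin d → ℝ)),
          ∑ m, μ m • f m = ∑ j : Fin r, μ (m₀.succAbove j) • f (m₀.succAbove j) := by
        intro f
        rw [Fin.sum_univ_succAbove (fun m => μ m • f m) m₀, hm₀, zero_smul, zero_add]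
      refine ih (μ ∘ m₀.succAbove) (u ∘ m₀.succAbove)
        ⟨fun m => h0 _, ?_, fun m => hunit _, ?_⟩ ?_ ?_
      · have := Fin.sum_univ_succAbove μ m₀
        rw [hm₀, zero_add] at this
        simp only [Function.comp]
        rw [← this, h1]
      · intro m m' hne
        exact horth _ _ ((Fin.succAbove_right_injective).ne hne)
      · simp only [Function.comp]
        rw [← hsz (fun m => pd (u m))]
        exact hJ1
      · simp only [Function.comp]
        rw [← hsz (fun m => pd (U *ᵥ u m))]
        exact hJ2
    · push_neg at hz
      have hpos : ∀ m, 0 < μ m := fun m => lt_of_le_of_ne (h0 m) (Ne.symm (hz m))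
      match r, μ, u, h0, h1, hunit, horth, hpos, ih, hJ1, hJ2 with
      | 0, μ, u, h0, h1, hunit, horth, hpos, ih, hJ1, hJ2 =>
        have hμ0 : μ 0 = 1 := by
          have := h1
          simpa [Fin.sum_univ_one] using this
        refine ⟨u 0, hunit 0, ?_, ?_⟩
        · have : (∑ m : Fin 1, μ m • pd (u m)) = pd (u 0) := by
            simp [Fin.sum_univ_one, hμ0]
          rwa [this] at hJ1
        · have : (∑ m : Fin 1, μ m • pd (U *ᵥ u m)) = pd (U *ᵥ u 0) := by
            simp [Fin.sum_univ_one, hμ0]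
          rwa [this] at hJ2
      | (s+1), μ, u, h0, h1, hunit, horth, hpos, ih, hJ1, hJ2 =>
        have H : ∀ m₁' : Fin (s+1),
            Gl U g₁ g₂ c₁ c₂ ∨
            (∃ (μ' : Fin (s+1) → ℝ) (u' : Fin (s+1) → Fin d → ℝ),
              Dc (s+1) μ' u' ∧ g₁ (∑ m : Fin (s+1), μ' m • pd (u' m)) ≤ c₁ ∧
              g₂ (∑ m : Fin (s+1), μ' m • pd (U *ᵥ u' m)) ≤ c₂) ∨
            TyA U g₁ g₂ c₁ c₂ (u 0) (u m₁'.succ) ∨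
            TyB U g₁ g₂ c₁ c₂ (u 0) (u m₁'.succ) :=
          fun m₁' => pair_step hU hcont₁ hcont₂ hconc₁ hconc₂ s μ u
            ⟨h0, h1, hunit, horth⟩ m₁' (hpos 0) (hpos m₁'.succ) hJ1 hJ2
        by_cases hall : ∀ m₁' : Fin (s+1),
            TyA U g₁ g₂ c₁ c₂ (u 0) (u m₁'.succ) ∨ TyB U g₁ g₂ c₁ c₂ (u 0) (u m₁'.succ)
        · exfalso
          rcases hall 0 with hA | hB
          · have hallA : ∀ m₁' : Fin (s+1), TyA U g₁ g₂ c₁ c₂ (u 0) (u m₁'.succ) := fun m₁' =>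
              (hall m₁').resolve_right (fun hB => absurd hB.1 (not_le.mpr hA.2.2.1))
            have hlt : ∀ m : Fin (s+2), c₂ < g₂ (pd (U *ᵥ u m)) := by
              intro m
              rcases Fin.eq_zero_or_eq_succ m with h | ⟨j, hj⟩
              · rw [h]; exact hA.2.2.1
              · rw [hj]; exact (hallA j).2.2.2
            have hjen := jensen g₂ hconc₂ (s+2) μ (fun m => pd (U *ᵥ u m)) h0 h1
              (fun m => pd_mem_Sx ((norm_pres hU (u m)).trans (hunit m)))
            have hstrict : ∑ m : Fin (s+2), μ m * c₂ < ∑ m : Fin (s+2), μ m * g₂ (pd (U *ᵥ u m)) :=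
              Finset.sum_lt_sum_of_nonempty Finset.univ_nonempty
                (fun m _ => mul_lt_mul_of_pos_left (hlt m) (hpos m))
            rw [← Finset.sum_mul, h1, one_mul] at hstrict
            linarith
          · have hallB : ∀ m₁' : Fin (s+1), TyB U g₁ g₂ c₁ c₂ (u 0) (u m₁'.succ) := fun m₁' =>
              (hall m₁').resolve_left (fun hA => absurd hA.2.2.1 (not_lt.mpr hB.1))
            have hlt : ∀ m : Fin (s+2), c₁ < g₁ (pd (u m)) := by
              intro m
              rcases Fin.eq_zero_or_eq_succ m with h | ⟨j, hj⟩
              · rw [h]; exact hB.2.2.1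
              · rw [hj]; exact (hallB j).2.2.2
            have hjen := jensen g₁ hconc₁ (s+2) μ (fun m => pd (u m)) h0 h1
              (fun m => pd_mem_Sx (hunit m))
            have hstrict : ∑ m : Fin (s+2), μ m * c₁ < ∑ m : Fin (s+2), μ m * g₁ (pd (u m)) :=
              Finset.sum_lt_sum_of_nonempty Finset.univ_nonempty
                (fun m _ => mul_lt_mul_of_pos_left (hlt m) (hpos m))
            rw [← Finset.sum_mul, h1, one_mul] at hstrict
            linarith
        · push_neg at hall
          obtain ⟨m₁', hnA, hnB⟩ := hall
          rcases H m₁' with h | h | h | h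
          · exact h
          · obtain ⟨μ', u', hD', hJ1', hJ2'⟩ := h
            exact ih μ' u' hD' hJ1' hJ2'
          · exact absurd h hnA
          · exact absurd h hnB

end Main

/-! ### Matrix-level helpers and the main theorem -/

lemma re_sandwich {d : ℕ} (W : Matrix (Fin d) (Fin d) ℝ) (M : Matrix (Fin d) (Fin d) ℂ)
    (σr : Matrix (Fin d) (Fin d) ℝ) (hM : ∀ i j, (M i j).re = σr i j) (k : Fin d) :
    ((W.map (fun x => (x:ℂ)) * M * (W.map (fun x => (x:ℂ)))ᴴ) k k).re =
      ∑ i, ∑ j, W k i * W k j * σr i j := by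
  have h1 : (W.map (fun x => (x:ℂ)) * M * (W.map (fun x => (x:ℂ)))ᴴ) k k =
      ∑ j, (∑ i, (W k i : ℂ) * M i j) * (W k j : ℂ) := by
    rw [Matrix.mul_apply]
    refine Finset.sum_congr rfl fun j _ => ?_
    rw [Matrix.conjTranspose_apply, Matrix.map_apply, Complex.star_def, Complex.conj_ofReal,
      Matrix.mul_apply]
    try rfl
    try (congr 1; refine Finset.sum_congr rfl fun i _ => ?_; rw [Matrix.map_apply])
  rw [h1, Complex.re_sum, Finset.sum_comm]
  refine Finset.sum_congr rfl fun j _ => ?_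
  rw [Complex.mul_re]
  simp only [Complex.ofReal_re, Complex.ofReal_im, mul_zero, sub_zero]
  rw [Complex.re_sum, Finset.sum_mul]
  refine Finset.sum_congr rfl fun i _ => ?_
  rw [Complex.mul_re]
  simp only [Complex.ofReal_re, Complex.ofReal_im, zero_mul, sub_zero]
  rw [hM]
  ring

lemma pd_mulVec_expand {d : ℕ} (W : Matrix (Fin d) (Fin d) ℝ) (v : Fin d → ℝ) (k : Fin d) :
    pd (W *ᵥ v) k = ∑ i, ∑ j, W k i * W k j * (v i * v j) := by
  simp only [pd, Matrix.mulVec, dotProduct]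
  rw [sq, Finset.sum_mul_sum]
  exact Finset.sum_congr rfl fun i _ => Finset.sum_congr rfl fun j _ => by ring

end RPSD

open RPSD in
/-- For a real orthogonal `U` and two continuous concave functions on the probability
simplex, composed with the two outcome distributions, every density matrix is
dominated (componentwise in the two values) by a pure state with real entries. -/
theorem real_pure_state_dominates (d : ℕ)
    (U : Matrix (Fin d) (Fin d) ℝ) (hU : U ∈ Matrix.orthogonalGroup (Fin d) ℝ)
    (g₁ g₂ : (Fin d → ℝ) → ℝ)
    (hcont₁ : ContinuousOn g₁ {p : Fin d → ℝ | (∀ i, 0 ≤ p i) ∧ ∑ i, p i = 1})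
    (hcont₂ : ContinuousOn g₂ {p : Fin d → ℝ | (∀ i, 0 ≤ p i) ∧ ∑ i, p i = 1})
    (hconc₁ : ∀ p q : Fin d → ℝ, ((∀ i, 0 ≤ p i) ∧ ∑ i, p i = 1) →
      ((∀ i, 0 ≤ q i) ∧ ∑ i, q i = 1) → ∀ t : ℝ, 0 ≤ t → t ≤ 1 →
      g₁ (t • p + (1 - t) • q) ≥ t * g₁ p + (1 - t) * g₁ q)
    (hconc₂ : ∀ p q : Fin d → ℝ, ((∀ i, 0 ≤ p i) ∧ ∑ i, p i = 1) →
      ((∀ i, 0 ≤ q i) ∧ ∑ i, q i = 1) → ∀ t : ℝ, 0 ≤ t → t ≤ 1 →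
      g₂ (t • p + (1 - t) • q) ≥ t * g₂ p + (1 - t) * g₂ q)
    (ρ : Matrix (Fin d) (Fin d) ℂ) (hρ : ρ.PosSemidef) (htr : ρ.trace = 1) :
    ∃ v : Fin d → ℝ, (∑ i, v i ^ 2 = 1) ∧
      g₁ (fun i => (Matrix.vecMulVec (fun j => (v j : ℂ)) (star fun j => (v j : ℂ)) i i).re)
        ≤ g₁ (fun i => (ρ i i).re) ∧
      g₂ (fun k => ((U.map (fun x => (x : ℂ)) *
            Matrix.vecMulVec (fun j => (v j : ℂ)) (star fun j => (v j : ℂ)) *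
            (U.map (fun x => (x : ℂ)))ᴴ) k k).re)
        ≤ g₂ (fun k => ((U.map (fun x => (x : ℂ)) * ρ * (U.map (fun x => (x : ℂ)))ᴴ) k k).re) := by
  classical
  -- the real part of ρ
  set σ : Matrix (Fin d) (Fin d) ℝ := fun i j => (ρ i j).re with hσdef
  have hherm : ρᴴ = ρ := hρ.1
  have hρsym : ∀ i j, ρ j i = starRingEnd ℂ (ρ i j) := by
    intro i j
    have := congrFun (congrFun hherm j) i
    rw [Matrix.conjTranspose_apply] at this
    rw [← this]
    simp
  have hσa : ∀ i j, σ i j = (ρ i j).re := fun _ _ => rfl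
  have hσsymm : σ.IsHermitian := by
    ext i j
    rw [Matrix.conjTranspose_apply]
    show σ j i = σ i j
    rw [hσa, hσa, hρsym i j, Complex.conj_re]
  have hσpsd : σ.PosSemidef := by
    refine Matrix.PosSemidef.of_dotProduct_mulVec_nonneg hσsymm fun x => ?_
    have hc := hρ.dotProduct_mulVec_nonneg (fun i => (x i : ℂ))
    rw [Complex.le_def] at hc
    have hre := hc.1
    simp only [Complex.zero_re] at hre
    have heq : (dotProduct (star fun i => (x i:ℂ)) (ρ *ᵥ (fun i => (x i:ℂ)))).re =
        dotProduct (star x) (σ *ᵥ x) := by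
      simp only [dotProduct, Matrix.mulVec, Pi.star_apply, Complex.star_def,
        Complex.conj_ofReal, star_trivial]
      rw [Complex.re_sum]
      refine Finset.sum_congr rfl fun i _ => ?_
      rw [Complex.mul_re]
      simp only [Complex.ofReal_re, Complex.ofReal_im, zero_mul, sub_zero]
      rw [Complex.re_sum, Finset.mul_sum, Finset.mul_sum]
      refine Finset.sum_congr rfl fun j _ => ?_
      rw [Complex.mul_re]
      simp only [Complex.ofReal_re, Complex.ofReal_im, mul_zero, sub_zero]
      try rw [hσa]
      try ring
    rw [← heq]
    exact hre
  -- spectral data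
  set lam : Fin d → ℝ := hσsymm.eigenvalues with hlamdef
  set b := hσsymm.eigenvectorBasis with hbdef
  have hentry : ∀ i j, σ i j = ∑ m, lam m * (b m i * b m j) := by
    intro i j
    conv_lhs => rw [hσsymm.spectral_theorem]
    simp [Matrix.mul_apply, Matrix.diagonal_apply, Matrix.star_apply]
    exact Finset.sum_congr rfl fun m _ => by ring
  have horthb : ∀ m m', m ≠ m' → ∑ i, b m i * b m' i = 0 := by
    intro m m' hne
    have h2 := b.orthonormal
    have := h2.2 hne
    rw [← this]
    simp [inner, dotProduct]
    exact Finset.sum_congr rfl fun i _ => mul_comm _ _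
  have hunitb : ∀ m, ∑ i, b m i ^ 2 = 1 := by
    intro m
    have h2 := b.orthonormal
    have h3 : (inner ℝ (b m) (b m) : ℝ) = 1 := by
      rw [real_inner_self_eq_norm_mul_norm, h2.1 m]; norm_num
    rw [← h3]
    simp [inner, dotProduct, sq]
  have hlam0 : ∀ m, 0 ≤ lam m := fun m => hσpsd.eigenvalues_nonneg m
  have hlam1 : ∑ m, lam m = 1 := by
    have htrre : (ρ.trace).re = 1 := by rw [htr]; simp
    have h4 : ∑ i, σ i i = 1 := by
      rw [← htrre, Matrix.trace, Complex.re_sum]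
      rfl
    calc ∑ m, lam m = ∑ m, lam m * ∑ i, b m i ^ 2 := by
          refine Finset.sum_congr rfl fun m _ => ?_
          rw [hunitb m, mul_one]
      _ = ∑ i, σ i i := by
          have hstep : (∑ m, lam m * ∑ i, b m i ^ 2)
              = ∑ m, ∑ i, lam m * (b m i * b m i) := by
            refine Finset.sum_congr rfl fun m _ => ?_
            rw [Finset.mul_sum]
            exact Finset.sum_congr rfl fun i _ => by ring
          rw [hstep, Finset.sum_comm]
          exact Finset.sum_congr rfl fun i _ => (hentry i i).symm
      _ = 1 := h4
  -- apply the key lemma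
  set c₁ : ℝ := g₁ (fun i => (ρ i i).re) with hc₁def
  set c₂ : ℝ := g₂ (fun k => ((U.map (fun x => (x : ℂ)) * ρ *
      (U.map (fun x => (x : ℂ)))ᴴ) k k).re) with hc₂def
  have hJ1eq : (∑ m, lam m • pd (fun i => b m i)) = fun i => (ρ i i).re := by
    funext i
    rw [Finset.sum_apply]
    simp only [Pi.smul_apply, smul_eq_mul, pd]
    rw [← hσa i i, hentry i i]
    exact Finset.sum_congr rfl fun m _ => by ring
  have hJ2eq : (∑ m, lam m • pd (U *ᵥ (fun i => b m i))) =
      fun k => ((U.map (fun x => (x : ℂ)) * ρ * (U.map (fun x => (x : ℂ)))ᴴ) k k).re := by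
    funext k
    rw [Finset.sum_apply]
    rw [re_sandwich U ρ σ (fun i j => (hσa i j).symm) k]
    simp only [Pi.smul_apply, smul_eq_mul]
    calc ∑ m, lam m * pd (U *ᵥ fun i => b m i) k
        = ∑ m, ∑ i, ∑ j, lam m * (U k i * U k j * (b m i * b m j)) := by
          refine Finset.sum_congr rfl fun m _ => ?_
          rw [pd_mulVec_expand, Finset.mul_sum]
          refine Finset.sum_congr rfl fun i _ => ?_
          rw [Finset.mul_sum]
      _ = ∑ i, ∑ j, ∑ m, lam m * (U k i * U k j * (b m i * b m j)) := by
          rw [Finset.sum_comm]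
          refine Finset.sum_congr rfl fun i _ => ?_
          rw [Finset.sum_comm]
      _ = ∑ i, ∑ j, U k i * U k j * σ i j := by
          refine Finset.sum_congr rfl fun i _ => Finset.sum_congr rfl fun j _ => ?_
          rw [hentry i j, Finset.mul_sum]
          refine Finset.sum_congr rfl fun m _ => by ring
  have hkey := key (c₁ := c₁) (c₂ := c₂) hU hcont₁ hcont₂ hconc₁ hconc₂ d lam
    (fun m => fun i => b m i) ⟨hlam0, hlam1, fun m => hunitb m, fun m m' h => horthb m m' h⟩
    (le_of_eq (congrArg g₁ hJ1eq)) (le_of_eq (congrArg g₂ hJ2eq))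
  obtain ⟨v, hvunit, hv1, hv2⟩ := hkey
  refine ⟨v, hvunit, ?_, ?_⟩
  · have hpure : (fun i => (Matrix.vecMulVec (fun j => (v j : ℂ))
        (star fun j => (v j : ℂ)) i i).re) = pd v := by
      funext i
      simp only [Matrix.vecMulVec_apply, Pi.star_apply, Complex.star_def,
        Complex.conj_ofReal, pd]
      rw [← Complex.ofReal_mul, Complex.ofReal_re, sq]
    rw [hpure]
    exact hv1
  · have hpureM : ∀ i j, ((Matrix.vecMulVec (fun j => (v j : ℂ))
        (star fun j => (v j : ℂ))) i j).re = v i * v j := by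
      intro i j
      simp only [Matrix.vecMulVec_apply, Pi.star_apply, Complex.star_def,
        Complex.conj_ofReal]
      rw [← Complex.ofReal_mul, Complex.ofReal_re]
    have hq : (fun k => ((U.map (fun x => (x : ℂ)) *
        Matrix.vecMulVec (fun j => (v j : ℂ)) (star fun j => (v j : ℂ)) *
        (U.map (fun x => (x : ℂ)))ᴴ) k k).re) = pd (U *ᵥ v) := by
      funext k
      rw [re_sandwich U _ (fun i j => v i * v j) hpureM k, pd_mulVec_expand]
    rw [hq]
    exact hv2
end

section
/- Let U be a d×d complex Hadamard matrix (unitary with |U_{kj}| = 1/√d for all k, j) that is dephased in its first row, i.e. U_{0j} = 1/√d for all j. Let ψ ∈ ℝ^d be a unit vector with ψ_j ≥ 0 for all j. Then H_{1/2}(p^ψ) + H_∞(q^ψ) = log d, where p^ψ(j) = ψ_j² and q^ψ(k) = |(Uψ)_k|²; i.e., every entrywise-nonnegative real unit vector saturates the Maassen–Uffink bound for the pair (α, β) = (1/2, ∞). -/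
open Matrix
open scoped ENNReal

/-- For a dephased complex Hadamard matrix `U` and any entrywise-nonnegative real
unit vector `ψ`, the pair `(H_{1/2}, H_∞)` saturates the Maassen–Uffink bound
`log d`. -/
theorem hadamard_nonneg_saturates (d : ℕ) (hd : 0 < d)
    (U : Matrix (Fin d) (Fin d) ℂ) (hU : U ∈ Matrix.unitaryGroup (Fin d) ℂ)
    (hmod : ∀ k j : Fin d, ‖U k j‖ = (Real.sqrt d)⁻¹)
    (hdephased : ∀ j : Fin d, U ⟨0, hd⟩ j = ((Real.sqrt d : ℝ)⁻¹ : ℂ))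
    (ψ : Fin d → ℝ) (hψnonneg : ∀ j, 0 ≤ ψ j) (hψnorm : ∑ j, ψ j ^ 2 = 1) :
    renyiEntropy (2 : ℝ≥0∞)⁻¹ (fun j => ψ j ^ 2) +
      renyiEntropy ⊤ (fun k => ‖U.mulVec (fun j => (ψ j : ℂ)) k‖ ^ 2)
      = Real.log d := by
  set S := ∑ j, ψ j with hS
  have hdpos : (0:ℝ) < d := by exact_mod_cast hd
  have hsqd : (0:ℝ) < Real.sqrt d := Real.sqrt_pos.2 hdpos
  have hSpos : 0 < S := by
    obtain ⟨j, hj⟩ : ∃ j, ψ j ≠ 0 := by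
      by_contra h
      push_neg at h
      simp [h] at hψnorm
    calc (0:ℝ) < ψ j := lt_of_le_of_ne (hψnonneg j) (Ne.symm hj)
      _ ≤ S := Finset.single_le_sum (fun i _ => hψnonneg i) (Finset.mem_univ j)
  -- first entropy
  have h1 : renyiEntropy (2 : ℝ≥0∞)⁻¹ (fun j => ψ j ^ 2) = 2 * Real.log S := by
    rw [renyiEntropy, if_neg (by simp), if_neg (by norm_num)]
    have htr : ((2 : ℝ≥0∞)⁻¹).toReal = (2:ℝ)⁻¹ := by simp
    rw [htr]
    have hsum : (∑ j, (ψ j ^ 2 : ℝ) ^ ((2:ℝ)⁻¹)) = S := by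
      rw [hS]
      refine Finset.sum_congr rfl fun j _ => ?_
      rw [← Real.rpow_natCast (ψ j) 2, ← Real.rpow_mul (hψnonneg j)]
      norm_num
    rw [hsum]
    norm_num
  -- the top row value
  set M := ((Real.sqrt d)⁻¹ * S) with hM
  have hMpos : 0 < M := by positivity
  have h0 : U.mulVec (fun j => (ψ j : ℂ)) ⟨0, hd⟩ = ((M : ℝ) : ℂ) := by
    simp only [Matrix.mulVec, dotProduct, hdephased, hM, hS]
    push_cast
    rw [Finset.mul_sum]
  have habs0 : ‖U.mulVec (fun j => (ψ j : ℂ)) ⟨0, hd⟩‖ = M := by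
    rw [h0, Complex.norm_real, Real.norm_eq_abs, abs_of_pos hMpos]
  have hbound : ∀ k, ‖U.mulVec (fun j => (ψ j : ℂ)) k‖ ≤ M := by
    intro k
    have hle : ‖∑ j, U k j * (ψ j : ℂ)‖ ≤ ∑ j, ‖U k j * (ψ j : ℂ)‖ :=
      norm_sum_le _ _
    have heq : (∑ j, ‖U k j * (ψ j : ℂ)‖) = M := by
      rw [hM, hS, Finset.mul_sum]
      refine Finset.sum_congr rfl fun j _ => ?_
      rw [norm_mul, hmod, Complex.norm_real, Real.norm_eq_abs, abs_of_nonneg (hψnonneg j)]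
    calc ‖U.mulVec (fun j => (ψ j : ℂ)) k‖
        = ‖∑ j, U k j * (ψ j : ℂ)‖ := by rw [Matrix.mulVec, dotProduct]
      _ ≤ _ := hle
      _ = M := heq
  -- sSup of the range
  have hsup : sSup (Set.range fun k => ‖U.mulVec (fun j => (ψ j : ℂ)) k‖ ^ 2)
      = M ^ 2 := by
    apply IsGreatest.csSup_eq
    constructor
    · exact ⟨⟨0, hd⟩, by simp only [habs0]⟩
    · rintro x ⟨k, rfl⟩
      exact pow_le_pow_left₀ (norm_nonneg _) (hbound k) 2
  have h2 : renyiEntropy ⊤ (fun k => ‖U.mulVec (fun j => (ψ j : ℂ)) k‖ ^ 2)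
      = Real.log d - 2 * Real.log S := by
    rw [renyiEntropy, if_pos rfl, hsup, hM]
    rw [Real.log_pow, Real.log_mul (by positivity) (ne_of_gt hSpos), Real.log_inv,
      Real.log_sqrt hdpos.le]
    ring
  rw [h1, h2]
  ring
end
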